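/- arXiv:2002.08686 — 6 statements merged into one kernel-verified Lean document; each statement's English description precedes it below -/
import Mathlib

section
/- For every n ≥ 2 and every 0 ≤ t ≤ n−1, the free-group homomorphism S_t : F_n → F_{n+1} maps the relator set R^V(n) into the normal closure of R^V(n+1) in F_{n+1}; consequently S_t induces a well-defined group homomorphism s_t : VP_n → VP_{n+1} which acts on the generators λ_{k,l}, λ_{l,k} of VP_n by the displayed case formulas (this is the algebraic description of the degeneracy homomorphism given by doubling the (t+1)-st strand). -/
/-- The ambient free group with generators `λ i j` indexed by ordered pairs of naturals;
the sub-free-group `F_m` is spanned by the generators `lam i j` with `1 ≤ i ≠ j ≤ m`,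
and the canonical inclusion `F_m → F_{m'}` is the identity on generators. -/
abbrev FG : Type := FreeGroup (ℕ × ℕ)

/-- The generator `λ_{i,j}`. -/
def lam (i j : ℕ) : FG := FreeGroup.of (i, j)

/-- The commutativity relators `λ_{i,j} λ_{k,l} λ_{i,j}⁻¹ λ_{k,l}⁻¹` of `VP_m`,
for pairwise distinct indices `1 ≤ i, j, k, l ≤ m`. -/
def CR (m : ℕ) : Set FG :=
  {w | ∃ i j k l : ℕ,
    1 ≤ i ∧ i ≤ m ∧ 1 ≤ j ∧ j ≤ m ∧ 1 ≤ k ∧ k ≤ m ∧ 1 ≤ l ∧ l ≤ m ∧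
    i ≠ j ∧ i ≠ k ∧ i ≠ l ∧ j ≠ k ∧ j ≠ l ∧ k ≠ l ∧
    w = lam i j * lam k l * (lam i j)⁻¹ * (lam k l)⁻¹}

/-- The long relators `λ_{k,i} λ_{k,j} λ_{i,j} λ_{k,i}⁻¹ λ_{k,j}⁻¹ λ_{i,j}⁻¹` of `VP_m`,
for pairwise distinct indices `1 ≤ i, j, k ≤ m`. -/
def LongR (m : ℕ) : Set FG :=
  {w | ∃ i j k : ℕ,
    1 ≤ i ∧ i ≤ m ∧ 1 ≤ j ∧ j ≤ m ∧ 1 ≤ k ∧ k ≤ m ∧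
    i ≠ j ∧ i ≠ k ∧ j ≠ k ∧
    w = lam k i * lam k j * lam i j * (lam k i)⁻¹ * (lam k j)⁻¹ * (lam i j)⁻¹}

/-- The full relator set `R^V(m)` of the virtual pure braid group `VP_m`. -/
def RV (m : ℕ) : Set FG := CR m ∪ LongR m

/-- Value of `S_{i-1}` on a generator, given by the displayed case formulas:
for `k < l`, `S_{i-1}(λ_{k,l})` and `S_{i-1}(λ_{l,k})` according to the position of `i`
relative to `k` and `l`. -/
def Sgen (i : ℕ) (p : ℕ × ℕ) : FG :=
  if p.1 < p.2 then
    -- the generator is `λ_{k,l}` with `k = p.1 < l = p.2`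
    if i < p.1 then lam (p.1 + 1) (p.2 + 1)
    else if i = p.1 then lam p.1 (p.2 + 1) * lam (p.1 + 1) (p.2 + 1)
    else if i < p.2 then lam p.1 (p.2 + 1)
    else if i = p.2 then lam p.1 (p.2 + 1) * lam p.1 p.2
    else lam p.1 p.2
  else if p.2 < p.1 then
    -- the generator is `λ_{l,k}` with `k = p.2 < l = p.1`
    if i < p.2 then lam (p.1 + 1) (p.2 + 1)
    else if i = p.2 then lam (p.1 + 1) (p.2 + 1) * lam (p.1 + 1) p.2
    else if i < p.1 then lam (p.1 + 1) p.2
    else if i = p.1 then lam p.1 p.2 * lam (p.1 + 1) p.2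
    else lam p.1 p.2
  else lam p.1 p.2

/-- The free-group homomorphism `S_t = S_{(t+1)-1} : F_m → F_{m+1}` (doubling the
`(t+1)`-st strand), determined on generators by the displayed case formulas. -/
def Smap (t : ℕ) : FG →* FG := FreeGroup.lift (Sgen (t + 1))

/-- The relator `u * v⁻¹` of a relation `u = v`. -/
def relOf (u v : FG) : FG := u * v⁻¹

/-- The set `R_{i,j,k}` of the six long relators with indices in `{i, j, k}`. -/
def Rtriple (i j k : ℕ) : Set FG :=
  {relOf (lam i j * lam i k * lam j k) (lam j k * lam i k * lam i j),
   relOf (lam j i * lam j k * lam i k) (lam i k * lam j k * lam j i),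
   relOf (lam i k * lam i j * lam k j) (lam k j * lam i j * lam i k),
   relOf (lam k i * lam k j * lam i j) (lam i j * lam k j * lam k i),
   relOf (lam j k * lam j i * lam k i) (lam k i * lam j i * lam j k),
   relOf (lam k j * lam k i * lam j i) (lam j i * lam k i * lam k j)}

/-- The commutator `[a,b] = a⁻¹ b⁻¹ a b`. -/
def commE (a b : FG) : FG := a⁻¹ * b⁻¹ * a * b

/-- The automorphism of the free group induced by a permutation of the indices:
`λ_{i,j} ↦ λ_{σ(i),σ(j)}`. -/
def permF (σ : Equiv.Perm ℕ) : FG →* FG :=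
  FreeGroup.lift (fun p => lam (σ p.1) (σ p.2))

namespace DegAux

/-- The index shift associated to `s`. -/
def fsh (s x : ℕ) : ℕ := if s < x then x + 1 else x

lemma fsh_cases (s x : ℕ) : (s < x ∧ fsh s x = x + 1) ∨ (x ≤ s ∧ fsh s x = x) := by
  unfold fsh; split_ifs with h
  · exact Or.inl ⟨h, rfl⟩
  · exact Or.inr ⟨by omega, rfl⟩

lemma Sgen_ne (s a b : ℕ) (ha : a ≠ s) (hb : b ≠ s) (hab : a ≠ b) :
    Sgen s (a, b) = lam (fsh s a) (fsh s b) := by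
  simp only [Sgen, fsh]
  split_ifs <;> first | rfl | (exfalso; omega)

lemma Sgen_fst (s b : ℕ) (hb : b ≠ s) :
    Sgen s (s, b) = lam s (fsh s b) * lam (s + 1) (fsh s b) := by
  simp only [Sgen, fsh]
  split_ifs <;> first | rfl | (exfalso; omega)

lemma Sgen_snd (s a : ℕ) (ha : a ≠ s) :
    Sgen s (a, s) = lam (fsh s a) (s + 1) * lam (fsh s a) s := by
  simp only [Sgen, fsh]
  split_ifs <;> first | rfl | (exfalso; omega)

lemma Smap_lam (t i j : ℕ) : Smap t (lam i j) = Sgen (t + 1) (i, j) :=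
  FreeGroup.lift_apply_of

/-- commutativity relation in the quotient by `RV (n+1)` -/
lemma commL {n : ℕ} {a b c d : ℕ} (h1 : 1 ≤ a) (h2 : a ≤ n + 1) (h3 : 1 ≤ b) (h4 : b ≤ n + 1)
    (h5 : 1 ≤ c) (h6 : c ≤ n + 1) (h7 : 1 ≤ d) (h8 : d ≤ n + 1)
    (hab : a ≠ b) (hac : a ≠ c) (had : a ≠ d) (hbc : b ≠ c) (hbd : b ≠ d) (hcd : c ≠ d) :
    Commute (QuotientGroup.mk' (Subgroup.normalClosure (RV (n + 1))) (lam a b))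
      (QuotientGroup.mk' (Subgroup.normalClosure (RV (n + 1))) (lam c d)) := by
  have h : QuotientGroup.mk' (Subgroup.normalClosure (RV (n + 1)))
      (lam a b * lam c d * (lam a b)⁻¹ * (lam c d)⁻¹) = 1 := by
    rw [QuotientGroup.mk'_apply, QuotientGroup.eq_one_iff]
    exact Subgroup.subset_normalClosure
      (Set.mem_union_left _ ⟨a, b, c, d, h1, h2, h3, h4, h5, h6, h7, h8,
        hab, hac, had, hbc, hbd, hcd, rfl⟩)
  simp only [map_mul, map_inv] at h
  rw [mul_inv_eq_one, mul_inv_eq_iff_eq_mul] at h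
  exact h

/-- long relation in the quotient by `RV (n+1)` -/
lemma longL {n : ℕ} {a b c : ℕ} (h1 : 1 ≤ a) (h2 : a ≤ n + 1) (h3 : 1 ≤ b) (h4 : b ≤ n + 1)
    (h5 : 1 ≤ c) (h6 : c ≤ n + 1) (hab : a ≠ b) (hac : a ≠ c) (hbc : b ≠ c) :
    QuotientGroup.mk' (Subgroup.normalClosure (RV (n + 1))) (lam c a) *
      QuotientGroup.mk' (Subgroup.normalClosure (RV (n + 1))) (lam c b) *
      QuotientGroup.mk' (Subgroup.normalClosure (RV (n + 1))) (lam a b) =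
    QuotientGroup.mk' (Subgroup.normalClosure (RV (n + 1))) (lam a b) *
      QuotientGroup.mk' (Subgroup.normalClosure (RV (n + 1))) (lam c b) *
      QuotientGroup.mk' (Subgroup.normalClosure (RV (n + 1))) (lam c a) := by
  have h : QuotientGroup.mk' (Subgroup.normalClosure (RV (n + 1)))
      (lam c a * lam c b * lam a b * (lam c a)⁻¹ * (lam c b)⁻¹ * (lam a b)⁻¹) = 1 := by
    rw [QuotientGroup.mk'_apply, QuotientGroup.eq_one_iff]
    exact Subgroup.subset_normalClosure
      (Set.mem_union_right _ ⟨a, b, c, h1, h2, h3, h4, h5, h6, hab, hac, hbc, rfl⟩)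
  simp only [map_mul, map_inv] at h
  rw [mul_inv_eq_one, mul_inv_eq_iff_eq_mul, mul_inv_eq_iff_eq_mul] at h
  exact h

section GroupCalc
variable {G : Type*} [Group G]

lemma doubling1 (X Y B A A' : G) (h1 : Commute X A) (h2 : Commute Y A')
    (hL1 : Y * B * A = A * B * Y) (hL2 : X * B * A' = A' * B * X) :
    X * Y * B * (A * A') = A * A' * B * (X * Y) :=
  calc X * Y * B * (A * A') = X * (Y * B * A) * A' := by group
  _ = X * (A * B * Y) * A' := by rw [hL1]
  _ = (X * A) * (B * (Y * A')) := by group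
  _ = (A * X) * (B * (A' * Y)) := by rw [h1.eq, h2.eq]
  _ = A * (X * B * A') * Y := by group
  _ = A * (A' * B * X) * Y := by rw [hL2]
  _ = A * A' * B * (X * Y) := by group

lemma doubling2 (Y P Q R S : G) (h1 : Commute Q R) (h2 : Commute P S)
    (hL1 : Y * P * R = R * P * Y) (hL2 : Y * Q * S = S * Q * Y) :
    Y * (P * Q) * (R * S) = R * S * (P * Q) * Y :=
  calc Y * (P * Q) * (R * S) = Y * P * (Q * R) * S := by group
  _ = Y * P * (R * Q) * S := by rw [h1.eq]
  _ = (Y * P * R) * (Q * S) := by group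
  _ = (R * P * Y) * (Q * S) := by rw [hL1]
  _ = R * P * (Y * Q * S) := by group
  _ = R * P * (S * Q * Y) := by rw [hL2]
  _ = R * (P * S) * (Q * Y) := by group
  _ = R * (S * P) * (Q * Y) := by rw [h2.eq]
  _ = R * S * (P * Q) * Y := by group

lemma doubling3 (P Q R S A : G) (h1 : Commute Q R) (h2 : Commute P S)
    (hL1 : Q * S * A = A * S * Q) (hL2 : P * R * A = A * R * P) :
    P * Q * (R * S) * A = A * (R * S) * (P * Q) :=
  calc P * Q * (R * S) * A = P * (Q * R) * (S * A) := by group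
  _ = P * (R * Q) * (S * A) := by rw [h1.eq]
  _ = (P * R) * (Q * S * A) := by group
  _ = (P * R) * (A * S * Q) := by rw [hL1]
  _ = (P * R * A) * (S * Q) := by group
  _ = (A * R * P) * (S * Q) := by rw [hL2]
  _ = A * R * (P * S) * Q := by group
  _ = A * R * (S * P) * Q := by rw [h2.eq]
  _ = A * (R * S) * (P * Q) := by group

end GroupCalc

lemma commS {n s : ℕ} (hs1 : 1 ≤ s) (hs2 : s ≤ n) {a b c d : ℕ}
    (ha1 : 1 ≤ a) (ha2 : a ≤ n) (hb1 : 1 ≤ b) (hb2 : b ≤ n)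
    (hc1 : 1 ≤ c) (hc2 : c ≤ n) (hd1 : 1 ≤ d) (hd2 : d ≤ n)
    (hab : a ≠ b) (hac : a ≠ c) (had : a ≠ d) (hbc : b ≠ c) (hbd : b ≠ d) (hcd : c ≠ d) :
    Commute (QuotientGroup.mk' (Subgroup.normalClosure (RV (n + 1))) (Sgen s (a, b)))
      (QuotientGroup.mk' (Subgroup.normalClosure (RV (n + 1))) (Sgen s (c, d))) := by
  have Ha := fsh_cases s a
  have Hb := fsh_cases s b
  have Hc := fsh_cases s c
  have Hd := fsh_cases s d
  by_cases hsa : s = a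
  · rw [← hsa, Sgen_fst s b (by omega), Sgen_ne s c d (by omega) (by omega) (by omega)]
    simp only [map_mul]
    apply Commute.mul_left <;> apply commL <;> omega
  by_cases hsb : s = b
  · rw [← hsb, Sgen_snd s a (by omega), Sgen_ne s c d (by omega) (by omega) (by omega)]
    simp only [map_mul]
    apply Commute.mul_left <;> apply commL <;> omega
  by_cases hsc : s = c
  · rw [← hsc, Sgen_fst s d (by omega), Sgen_ne s a b (by omega) (by omega) (by omega)]
    simp only [map_mul]
    apply Commute.mul_right <;> apply commL <;> omega
  by_cases hsd : s = d
  · rw [← hsd, Sgen_snd s c (by omega), Sgen_ne s a b (by omega) (by omega) (by omega)]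
    simp only [map_mul]
    apply Commute.mul_right <;> apply commL <;> omega
  rw [Sgen_ne s a b (by omega) (by omega) (by omega),
    Sgen_ne s c d (by omega) (by omega) (by omega)]
  apply commL <;> omega

/-- Main lemma: `S_t` sends every relator of `VP_n` into the normal closure of `RV (n+1)`. -/
lemma key {n t : ℕ} (hn : 2 ≤ n) (ht : t ≤ n - 1) {w : FG} (hw : w ∈ RV n) :
    QuotientGroup.mk' (Subgroup.normalClosure (RV (n + 1))) (Smap t w) = 1 := by
  have hs1 : 1 ≤ t + 1 := by omega
  have hs2 : t + 1 ≤ n := by omega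
  rcases hw with hw | hw
  · obtain ⟨i, j, k, l, hi1, hi2, hj1, hj2, hk1, hk2, hl1, hl2,
      hij, hik, hil, hjk, hjl, hkl, rfl⟩ := hw
    simp only [map_mul, map_inv, Smap_lam]
    rw [mul_inv_eq_one, mul_inv_eq_iff_eq_mul]
    exact (commS hs1 hs2 hi1 hi2 hj1 hj2 hk1 hk2 hl1 hl2 hij hik hil hjk hjl hkl).eq
  · obtain ⟨i, j, k, hi1, hi2, hj1, hj2, hk1, hk2, hij, hik, hjk, rfl⟩ := hw
    have Hi := fsh_cases (t + 1) i
    have Hj := fsh_cases (t + 1) j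
    have Hk := fsh_cases (t + 1) k
    simp only [map_mul, map_inv, Smap_lam]
    rw [mul_inv_eq_one, mul_inv_eq_iff_eq_mul, mul_inv_eq_iff_eq_mul]
    by_cases hsi : t + 1 = i
    · rw [← hsi, Sgen_snd (t + 1) k (by omega),
        Sgen_ne (t + 1) k j (by omega) (by omega) (by omega),
        Sgen_fst (t + 1) j (by omega)]
      simp only [map_mul]
      exact doubling1 _ _ _ _ _ (by apply commL <;> omega) (by apply commL <;> omega)
        (by apply longL <;> omega) (by apply longL <;> omega)
    by_cases hsj : t + 1 = j
    · rw [← hsj, Sgen_ne (t + 1) k i (by omega) (by omega) (by omega),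
        Sgen_snd (t + 1) k (by omega), Sgen_snd (t + 1) i (by omega)]
      simp only [map_mul]
      exact doubling2 _ _ _ _ _ (by apply commL <;> omega) (by apply commL <;> omega)
        (by apply longL <;> omega) (by apply longL <;> omega)
    by_cases hsk : t + 1 = k
    · rw [← hsk, Sgen_fst (t + 1) i (by omega), Sgen_fst (t + 1) j (by omega),
        Sgen_ne (t + 1) i j (by omega) (by omega) (by omega)]
      simp only [map_mul]
      exact doubling3 _ _ _ _ _ (by apply commL <;> omega) (by apply commL <;> omega)
        (by apply longL <;> omega) (by apply longL <;> omega)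
    rw [Sgen_ne (t + 1) k i (by omega) (by omega) (by omega),
      Sgen_ne (t + 1) k j (by omega) (by omega) (by omega),
      Sgen_ne (t + 1) i j (by omega) (by omega) (by omega)]
    apply longL <;> omega

end DegAux


/-- For every `n ≥ 2` and `0 ≤ t ≤ n-1`, the free-group homomorphism
`S_t : F_n → F_{n+1}` maps the relator set `R^V(n)` into the normal closure of
`R^V(n+1)`; consequently `S_t` induces a well-defined degeneracy homomorphism
`s_t : VP_n → VP_{n+1}`, acting on the generators `λ_{k,l}, λ_{l,k}` by the
displayed case formulas (built into `Sgen`/`Smap`). -/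
theorem degeneracy_well_defined (n t : ℕ) (hn : 2 ≤ n) (ht : t ≤ n - 1) :
    (Smap t) '' (RV n) ⊆ (Subgroup.normalClosure (RV (n + 1)) : Set FG) ∧
    ∃ φ : FG ⧸ Subgroup.normalClosure (RV n) →* FG ⧸ Subgroup.normalClosure (RV (n + 1)),
      ∀ w : FG,
        φ (QuotientGroup.mk' (Subgroup.normalClosure (RV n)) w)
          = QuotientGroup.mk' (Subgroup.normalClosure (RV (n + 1))) (Smap t w) := by
  constructor
  · rintro x ⟨w, hw, rfl⟩
    have h := DegAux.key hn ht hw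
    rw [QuotientGroup.mk'_apply, QuotientGroup.eq_one_iff] at h
    exact h
  · have hker : ∀ x ∈ Subgroup.normalClosure (RV n),
        ((QuotientGroup.mk' (Subgroup.normalClosure (RV (n + 1)))).comp (Smap t)) x = 1 := by
      intro x hx
      have hle : Subgroup.normalClosure (RV n) ≤
          ((QuotientGroup.mk' (Subgroup.normalClosure (RV (n + 1)))).comp (Smap t)).ker := by
        apply Subgroup.normalClosure_le_normal
        intro w hw
        rw [SetLike.mem_coe, MonoidHom.mem_ker, MonoidHom.comp_apply]
        exact DegAux.key hn ht hw
      exact hle hx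
    refine ⟨QuotientGroup.lift _ _ hker, fun w => ?_⟩
    exact QuotientGroup.lift_mk' _ hker w
end

section
/- Lifting theorem: for every n ≥ 4, the following two subsets of F_{n+1} have the same normal closure: (a) R^V(n) ∪ ⋃_{i=0}^{n−1} S_i(R^V(n)), where R^V(n) is viewed inside F_{n+1} via the canonical inclusion F_n → F_{n+1}; and (b) R^V(n+1). Hence, regarding VP_n as a subgroup of VP_{n+1} by adding a trivial strand at the end, R^V(n) ∪ ⋃_{i=0}^{n−1} s_i(R^V(n)) is a full set of defining relations for VP_{n+1}. -/
namespace Lifting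

/-- index shift: strands strictly above the doubled strand `m` move up by one -/
def sh (m x : ℕ) : ℕ := if x < m then x else x + 1

lemma sh_lt {m x : ℕ} (h : x < m) : sh m x = x := if_pos h
lemma sh_ge {m x : ℕ} (h : m ≤ x) : sh m x = x + 1 := if_neg (by omega)

section GroupStuff

variable {G : Type*} [Group G]

/-- the image pattern of the generator `(x, y)` under the splitting of strand `m`. -/
def zP (z : ℕ → ℕ → G) (m x y : ℕ) : G :=
  if x = m then z m (sh m y) * z (m+1) (sh m y)
  else if y = m then z (sh m x) (m+1) * z (sh m x) m
  else z (sh m x) (sh m y)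

lemma zP_fst (z : ℕ → ℕ → G) (m y : ℕ) :
    zP z m m y = z m (sh m y) * z (m+1) (sh m y) := if_pos rfl

lemma zP_snd (z : ℕ → ℕ → G) {m x : ℕ} (h : x ≠ m) :
    zP z m x m = z (sh m x) (m+1) * z (sh m x) m := by
  unfold zP; rw [if_neg h, if_pos rfl]

lemma zP_ne (z : ℕ → ℕ → G) {m x y : ℕ} (hx : x ≠ m) (hy : y ≠ m) :
    zP z m x y = z (sh m x) (sh m y) := by
  unfold zP; rw [if_neg hx, if_neg hy]

lemma comm_cont {x u : G} (h : x * u * x⁻¹ * u⁻¹ = 1) :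
    ∀ t, x * (u * t) = u * (x * t) := by
  have h1 : x * u * x⁻¹ = u := mul_inv_eq_one.mp h
  have h2 : x * u = u * x := mul_inv_eq_iff_eq_mul.mp h1
  intro t; rw [← mul_assoc, h2, mul_assoc]

lemma long_cont {a b c : G} (h : a * b * c * a⁻¹ * b⁻¹ * c⁻¹ = 1) :
    ∀ t, a * (b * (c * t)) = c * (b * (a * t)) := by
  have h1 : a * b * c * a⁻¹ * b⁻¹ = c := mul_inv_eq_one.mp h
  have h2 : a * b * c * a⁻¹ = c * b := mul_inv_eq_iff_eq_mul.mp h1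
  have h3 : a * b * c = c * b * a := mul_inv_eq_iff_eq_mul.mp h2
  intro t
  calc a * (b * (c * t)) = (a * b * c) * t := by simp [mul_assoc]
    _ = (c * b * a) * t := by rw [h3]
    _ = c * (b * (a * t)) := by simp [mul_assoc]

lemma eq_one_of_comm {x u : G} (h : ∀ t, x * (u * t) = u * (x * t)) :
    x * u * x⁻¹ * u⁻¹ = 1 := by
  have h1 := h (x⁻¹ * u⁻¹)
  simpa [mul_assoc] using h1

lemma eq_one_of_long {a b c : G} (h : ∀ t, a * (b * (c * t)) = c * (b * (a * t))) :
    a * b * c * a⁻¹ * b⁻¹ * c⁻¹ = 1 := by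
  have h1 := h (a⁻¹ * (b⁻¹ * c⁻¹))
  simpa [mul_assoc] using h1

/-- From `x` commuting with `u*v` and with `u`, deduce `x` commutes with `v`. -/
lemma peel_left {x u v : G} (h : ∀ t, x * (u * (v * t)) = u * (v * (x * t)))
    (h2 : ∀ t, x * (u * t) = u * (x * t)) : ∀ t, x * (v * t) = v * (x * t) := by
  intro t
  have h3 := h t
  rw [h2 (v * t)] at h3
  exact mul_left_cancel h3

/-- From `x` commuting with `u*v` and with `v`, deduce `x` commutes with `u`. -/
lemma peel_right {x u v : G} (h : ∀ t, x * (u * (v * t)) = u * (v * (x * t)))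
    (h2 : ∀ t, x * (v * t) = v * (x * t)) : ∀ t, x * (u * t) = u * (x * t) := by
  intro t
  have h3 := h (v⁻¹ * t)
  rw [mul_inv_cancel_left] at h3
  rwa [← h2 (v⁻¹ * t), mul_inv_cancel_left] at h3

end GroupStuff

lemma Sgen_eq (m x y : ℕ) (hxy : x ≠ y) : Sgen m (x, y) = zP lam m x y := by
  rcases Nat.lt_trichotomy x y with h | h | h
  · have e1 : Sgen m (x, y)
        = if m < x then lam (x+1) (y+1)
          else if m = x then lam x (y+1) * lam (x+1) (y+1)
          else if m < y then lam x (y+1)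
          else if m = y then lam x (y+1) * lam x y
          else lam x y := by
      simp only [Sgen]; rw [if_pos h]
    rcases Nat.lt_trichotomy m x with h1 | h1 | h1
    · rw [e1, if_pos h1, zP_ne lam (by omega) (by omega), sh_ge (by omega), sh_ge (by omega)]
    · subst h1
      rw [e1, if_neg (by omega), if_pos rfl, zP_fst, sh_ge (by omega)]
    · rcases Nat.lt_trichotomy m y with h2 | h2 | h2
      · rw [e1, if_neg (by omega), if_neg (by omega), if_pos h2,
          zP_ne lam (by omega) (by omega), sh_lt (by omega), sh_ge (by omega)]
      · subst h2
        rw [e1, if_neg (by omega), if_neg (by omega), if_neg (by omega), if_pos rfl,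
          zP_snd lam (by omega), sh_lt (by omega)]
      · rw [e1, if_neg (by omega), if_neg (by omega), if_neg (by omega), if_neg (by omega),
          zP_ne lam (by omega) (by omega), sh_lt (by omega), sh_lt (by omega)]
  · exact absurd h hxy
  · have e1 : Sgen m (x, y)
        = if m < y then lam (x+1) (y+1)
          else if m = y then lam (x+1) (y+1) * lam (x+1) y
          else if m < x then lam (x+1) y
          else if m = x then lam x y * lam (x+1) y
          else lam x y := by
      simp only [Sgen]; rw [if_neg (by omega), if_pos h]
    rcases Nat.lt_trichotomy m y with h1 | h1 | h1
    · rw [e1, if_pos h1, zP_ne lam (by omega) (by omega), sh_ge (by omega), sh_ge (by omega)]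
    · subst h1
      rw [e1, if_neg (by omega), if_pos rfl, zP_snd lam (by omega), sh_ge (by omega)]
    · rcases Nat.lt_trichotomy m x with h2 | h2 | h2
      · rw [e1, if_neg (by omega), if_neg (by omega), if_pos h2,
          zP_ne lam (by omega) (by omega), sh_ge (by omega), sh_lt (by omega)]
      · subst h2
        rw [e1, if_neg (by omega), if_neg (by omega), if_neg (by omega), if_pos rfl,
          zP_fst, sh_lt (by omega)]
      · rw [e1, if_neg (by omega), if_neg (by omega), if_neg (by omega), if_neg (by omega),
          zP_ne lam (by omega) (by omega), sh_lt (by omega), sh_lt (by omega)]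

/-- Image of a generator under the splitting map, pushed through any homomorphism. -/
lemma phi_Smap {G : Type*} [Group G] (φ : FG →* G) (t x y : ℕ) (hxy : x ≠ y) :
    φ (Smap t (lam x y)) = zP (fun a b => φ (lam a b)) (t+1) x y := by
  have h0 : Smap t (lam x y) = Sgen (t+1) (x, y) := FreeGroup.lift_apply_of
  rw [h0, Sgen_eq _ _ _ hxy]
  unfold zP
  split_ifs <;> simp [map_mul]

end Lifting

namespace Lifting

section Derivation

variable {G : Type*} [Group G]

/-- Bundle of the hypotheses available in the quotient of `F_{n+1}` by the normal closure
of `R^V(n) ∪ ⋃ S_i(R^V(n))`, where `n = k+4`.  `z x y` is the image of `λ_{x,y}`. -/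
structure VD (G : Type*) [Group G] (k : ℕ) where
  z : ℕ → ℕ → G
  hcom : ∀ a b c d : ℕ,
    (1 ≤ a ∧ a ≤ k+4 ∧ 1 ≤ b ∧ b ≤ k+4 ∧ 1 ≤ c ∧ c ≤ k+4 ∧ 1 ≤ d ∧ d ≤ k+4 ∧
      a ≠ b ∧ a ≠ c ∧ a ≠ d ∧ b ≠ c ∧ b ≠ d ∧ c ≠ d) →
    ∀ t, z a b * (z c d * t) = z c d * (z a b * t)
  hlng : ∀ i j l : ℕ,
    (1 ≤ i ∧ i ≤ k+4 ∧ 1 ≤ j ∧ j ≤ k+4 ∧ 1 ≤ l ∧ l ≤ k+4 ∧ i ≠ j ∧ i ≠ l ∧ j ≠ l) →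
    ∀ t, z l i * (z l j * (z i j * t)) = z i j * (z l j * (z l i * t))
  hSC : ∀ m a b c d : ℕ,
    (1 ≤ m ∧ m ≤ k+4 ∧ 1 ≤ a ∧ a ≤ k+4 ∧ 1 ≤ b ∧ b ≤ k+4 ∧ 1 ≤ c ∧ c ≤ k+4 ∧
      1 ≤ d ∧ d ≤ k+4 ∧ a ≠ b ∧ a ≠ c ∧ a ≠ d ∧ b ≠ c ∧ b ≠ d ∧ c ≠ d) →
    ∀ t, zP z m a b * (zP z m c d * t) = zP z m c d * (zP z m a b * t)
  hSL : ∀ m i j l : ℕ,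
    (1 ≤ m ∧ m ≤ k+4 ∧ 1 ≤ i ∧ i ≤ k+4 ∧ 1 ≤ j ∧ j ≤ k+4 ∧ 1 ≤ l ∧ l ≤ k+4 ∧
      i ≠ j ∧ i ≠ l ∧ j ≠ l) →
    ∀ t, zP z m l i * (zP z m l j * (zP z m i j * t))
        = zP z m i j * (zP z m l j * (zP z m l i * t))

namespace VD

variable {k : ℕ} (V : VD G k)

/-- L0a : `λ_{a,N}` commutes with `λ_{b,c}` for `a,b,c ≤ n-1`. -/
lemma L0a (a b c : ℕ)
    (h : 1 ≤ a ∧ a ≤ k+3 ∧ 1 ≤ b ∧ b ≤ k+3 ∧ 1 ≤ c ∧ c ≤ k+3 ∧ a ≠ b ∧ a ≠ c ∧ b ≠ c) :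
    ∀ t, V.z a (k+5) * (V.z b c * t) = V.z b c * (V.z a (k+5) * t) := by
  have E := V.hSC (k+4) a (k+4) b c (by omega)
  rw [zP_snd V.z (show a ≠ k+4 by omega), zP_ne V.z (show b ≠ k+4 by omega) (show c ≠ k+4 by omega),
    sh_lt (show a < k+4 by omega), sh_lt (show b < k+4 by omega), sh_lt (show c < k+4 by omega)] at E
  simp only [show k+4+1 = k+5 from rfl, mul_assoc] at E
  -- E : ∀ t, z a (k+5) * (z a (k+4) * (z b c * t)) = z b c * (z a (k+5) * (z a (k+4) * t))
  have E' : ∀ t, V.z b c * (V.z a (k+5) * (V.z a (k+4) * t))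
      = V.z a (k+5) * (V.z a (k+4) * (V.z b c * t)) := fun t => (E t).symm
  have h2 : ∀ t, V.z b c * (V.z a (k+4) * t) = V.z a (k+4) * (V.z b c * t) :=
    V.hcom b c a (k+4) (by omega)
  exact fun t => (peel_right E' h2 t).symm

/-- L0b : `λ_{N,a}` commutes with `λ_{b,c}` for `a,b,c ≤ n-1`. -/
lemma L0b (a b c : ℕ)
    (h : 1 ≤ a ∧ a ≤ k+3 ∧ 1 ≤ b ∧ b ≤ k+3 ∧ 1 ≤ c ∧ c ≤ k+3 ∧ a ≠ b ∧ a ≠ c ∧ b ≠ c) :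
    ∀ t, V.z (k+5) a * (V.z b c * t) = V.z b c * (V.z (k+5) a * t) := by
  have E := V.hSC (k+4) (k+4) a b c (by omega)
  rw [zP_fst V.z, zP_ne V.z (show b ≠ k+4 by omega) (show c ≠ k+4 by omega),
    sh_lt (show a < k+4 by omega), sh_lt (show b < k+4 by omega), sh_lt (show c < k+4 by omega)] at E
  simp only [show k+4+1 = k+5 from rfl, mul_assoc] at E
  -- E : ∀ t, z (k+4) a * (z (k+5) a * (z b c * t)) = z b c * (z (k+4) a * (z (k+5) a * t))
  have E' : ∀ t, V.z b c * (V.z (k+4) a * (V.z (k+5) a * t))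
      = V.z (k+4) a * (V.z (k+5) a * (V.z b c * t)) := fun t => (E t).symm
  have h2 : ∀ t, V.z b c * (V.z (k+4) a * t) = V.z (k+4) a * (V.z b c * t) :=
    V.hcom b c (k+4) a (by omega)
  exact fun t => (peel_left E' h2 t).symm

end VD

end Derivation

end Lifting

namespace Lifting
namespace VD

variable {G : Type*} [Group G] {k : ℕ} (V : VD G k)

/-- L1a : `λ_{a,N}` commutes with `λ_{b,n}` for `a,b ≤ n-2`. -/
lemma L1a (a b : ℕ) (h : 1 ≤ a ∧ a ≤ k+2 ∧ 1 ≤ b ∧ b ≤ k+2 ∧ a ≠ b) :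
    ∀ t, V.z a (k+5) * (V.z b (k+4) * t) = V.z b (k+4) * (V.z a (k+5) * t) := by
  have E := V.hSC (k+3) a (k+4) b (k+3) (by omega)
  rw [zP_ne V.z (show a ≠ k+3 by omega) (show (k+4:ℕ) ≠ k+3 by omega),
    zP_snd V.z (show b ≠ k+3 by omega),
    sh_lt (show a < k+3 by omega), sh_lt (show b < k+3 by omega),
    sh_ge (show k+3 ≤ k+4 by omega)] at E
  simp only [show k+4+1 = k+5 from rfl, show k+3+1 = k+4 from rfl, mul_assoc] at E
  exact peel_right E (V.L0a a b (k+3) (by omega))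

/-- L1b : `λ_{a,N}` commutes with `λ_{n,b}` for `a,b ≤ n-2`. -/
lemma L1b (a b : ℕ) (h : 1 ≤ a ∧ a ≤ k+2 ∧ 1 ≤ b ∧ b ≤ k+2 ∧ a ≠ b) :
    ∀ t, V.z a (k+5) * (V.z (k+4) b * t) = V.z (k+4) b * (V.z a (k+5) * t) := by
  have E := V.hSC (k+3) a (k+4) (k+3) b (by omega)
  rw [zP_ne V.z (show a ≠ k+3 by omega) (show (k+4:ℕ) ≠ k+3 by omega),
    zP_fst V.z,
    sh_lt (show a < k+3 by omega), sh_lt (show b < k+3 by omega),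
    sh_ge (show k+3 ≤ k+4 by omega)] at E
  simp only [show k+4+1 = k+5 from rfl, show k+3+1 = k+4 from rfl, mul_assoc] at E
  exact peel_left E (V.L0a a (k+3) b (by omega))

/-- L1c : `λ_{N,a}` commutes with `λ_{b,n}` for `a,b ≤ n-2`. -/
lemma L1c (a b : ℕ) (h : 1 ≤ a ∧ a ≤ k+2 ∧ 1 ≤ b ∧ b ≤ k+2 ∧ a ≠ b) :
    ∀ t, V.z (k+5) a * (V.z b (k+4) * t) = V.z b (k+4) * (V.z (k+5) a * t) := by
  have E := V.hSC (k+3) (k+4) a b (k+3) (by omega)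
  rw [zP_ne V.z (show (k+4:ℕ) ≠ k+3 by omega) (show a ≠ k+3 by omega),
    zP_snd V.z (show b ≠ k+3 by omega),
    sh_lt (show a < k+3 by omega), sh_lt (show b < k+3 by omega),
    sh_ge (show k+3 ≤ k+4 by omega)] at E
  simp only [show k+4+1 = k+5 from rfl, show k+3+1 = k+4 from rfl, mul_assoc] at E
  exact peel_right E (V.L0b a b (k+3) (by omega))

/-- L1d : `λ_{N,a}` commutes with `λ_{n,b}` for `a,b ≤ n-2`. -/
lemma L1d (a b : ℕ) (h : 1 ≤ a ∧ a ≤ k+2 ∧ 1 ≤ b ∧ b ≤ k+2 ∧ a ≠ b) :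
    ∀ t, V.z (k+5) a * (V.z (k+4) b * t) = V.z (k+4) b * (V.z (k+5) a * t) := by
  have E := V.hSC (k+3) (k+4) a (k+3) b (by omega)
  rw [zP_ne V.z (show (k+4:ℕ) ≠ k+3 by omega) (show a ≠ k+3 by omega),
    zP_fst V.z,
    sh_lt (show a < k+3 by omega), sh_lt (show b < k+3 by omega),
    sh_ge (show k+3 ≤ k+4 by omega)] at E
  simp only [show k+4+1 = k+5 from rfl, show k+3+1 = k+4 from rfl, mul_assoc] at E
  exact peel_left E (V.L0b a (k+3) b (by omega))

/-- L2a : `λ_{n,N}` commutes with `λ_{c,d}` for `c,d ≤ n-2`. -/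
lemma L2a (c d : ℕ) (h : 1 ≤ c ∧ c ≤ k+2 ∧ 1 ≤ d ∧ d ≤ k+2 ∧ c ≠ d) :
    ∀ t, V.z (k+4) (k+5) * (V.z c d * t) = V.z c d * (V.z (k+4) (k+5) * t) := by
  have E := V.hSC (k+3) (k+3) (k+4) c d (by omega)
  rw [zP_fst V.z, zP_ne V.z (show c ≠ k+3 by omega) (show d ≠ k+3 by omega),
    sh_lt (show c < k+3 by omega), sh_lt (show d < k+3 by omega),
    sh_ge (show k+3 ≤ k+4 by omega)] at E
  simp only [show k+4+1 = k+5 from rfl, show k+3+1 = k+4 from rfl, mul_assoc] at E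
  -- E : (z (k+3) (k+5) * z (k+4) (k+5)) comm (z c d)
  have E' : ∀ t, V.z c d * (V.z (k+3) (k+5) * (V.z (k+4) (k+5) * t))
      = V.z (k+3) (k+5) * (V.z (k+4) (k+5) * (V.z c d * t)) := fun t => (E t).symm
  have h2 : ∀ t, V.z c d * (V.z (k+3) (k+5) * t) = V.z (k+3) (k+5) * (V.z c d * t) :=
    fun t => (V.L0a (k+3) c d (by omega) t).symm
  exact fun t => (peel_left E' h2 t).symm

/-- L2b : `λ_{N,n}` commutes with `λ_{c,d}` for `c,d ≤ n-2`. -/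
lemma L2b (c d : ℕ) (h : 1 ≤ c ∧ c ≤ k+2 ∧ 1 ≤ d ∧ d ≤ k+2 ∧ c ≠ d) :
    ∀ t, V.z (k+5) (k+4) * (V.z c d * t) = V.z c d * (V.z (k+5) (k+4) * t) := by
  have E := V.hSC (k+3) (k+4) (k+3) c d (by omega)
  rw [zP_snd V.z (show (k+4:ℕ) ≠ k+3 by omega),
    zP_ne V.z (show c ≠ k+3 by omega) (show d ≠ k+3 by omega),
    sh_lt (show c < k+3 by omega), sh_lt (show d < k+3 by omega),
    sh_ge (show k+3 ≤ k+4 by omega)] at E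
  simp only [show k+4+1 = k+5 from rfl, show k+3+1 = k+4 from rfl, mul_assoc] at E
  -- E : (z (k+5) (k+4) * z (k+5) (k+3)) comm (z c d)
  have E' : ∀ t, V.z c d * (V.z (k+5) (k+4) * (V.z (k+5) (k+3) * t))
      = V.z (k+5) (k+4) * (V.z (k+5) (k+3) * (V.z c d * t)) := fun t => (E t).symm
  have h2 : ∀ t, V.z c d * (V.z (k+5) (k+3) * t) = V.z (k+5) (k+3) * (V.z c d * t) :=
    fun t => (V.L0b (k+3) c d (by omega) t).symm
  exact fun t => (peel_right E' h2 t).symm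

end VD
end Lifting

namespace Lifting
namespace VD

variable {G : Type*} [Group G] {k : ℕ} (V : VD G k)

/-- Generic: splitting at a strand not involved in a commutation relator
gives the index-shifted commutation relation. -/
lemma shiftC (m a b c d : ℕ)
    (h : 1 ≤ m ∧ m ≤ k+4 ∧ 1 ≤ a ∧ a ≤ k+4 ∧ 1 ≤ b ∧ b ≤ k+4 ∧ 1 ≤ c ∧ c ≤ k+4 ∧
      1 ≤ d ∧ d ≤ k+4 ∧ a ≠ b ∧ a ≠ c ∧ a ≠ d ∧ b ≠ c ∧ b ≠ d ∧ c ≠ d ∧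
      a ≠ m ∧ b ≠ m ∧ c ≠ m ∧ d ≠ m) :
    ∀ t, V.z (sh m a) (sh m b) * (V.z (sh m c) (sh m d) * t)
        = V.z (sh m c) (sh m d) * (V.z (sh m a) (sh m b) * t) := by
  have E := V.hSC m a b c d (by omega)
  rwa [zP_ne V.z (show a ≠ m by omega) (show b ≠ m by omega),
    zP_ne V.z (show c ≠ m by omega) (show d ≠ m by omega)] at E

/-- Generic: splitting at a strand not involved in a long relator
gives the index-shifted long relation. -/
lemma shiftL (m i j l : ℕ)
    (h : 1 ≤ m ∧ m ≤ k+4 ∧ 1 ≤ i ∧ i ≤ k+4 ∧ 1 ≤ j ∧ j ≤ k+4 ∧ 1 ≤ l ∧ l ≤ k+4 ∧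
      i ≠ j ∧ i ≠ l ∧ j ≠ l ∧ i ≠ m ∧ j ≠ m ∧ l ≠ m) :
    ∀ t, V.z (sh m l) (sh m i) * (V.z (sh m l) (sh m j) * (V.z (sh m i) (sh m j) * t))
        = V.z (sh m i) (sh m j) * (V.z (sh m l) (sh m j) * (V.z (sh m l) (sh m i) * t)) := by
  have E := V.hSL m i j l (by omega)
  rwa [zP_ne V.z (show l ≠ m by omega) (show i ≠ m by omega),
    zP_ne V.z (show l ≠ m by omega) (show j ≠ m by omega),
    zP_ne V.z (show i ≠ m by omega) (show j ≠ m by omega)] at E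

/-- L3a : long relation `l(N; a, b)` for `a, b ≤ n-2`. -/
lemma L3a (a b : ℕ) (h : 1 ≤ a ∧ a ≤ k+2 ∧ 1 ≤ b ∧ b ≤ k+2 ∧ a ≠ b) :
    ∀ t, V.z (k+5) a * (V.z (k+5) b * (V.z a b * t))
        = V.z a b * (V.z (k+5) b * (V.z (k+5) a * t)) := by
  have E := V.shiftL (k+3) a b (k+4) (by omega)
  rwa [sh_lt (show a < k+3 by omega), sh_lt (show b < k+3 by omega),
    sh_ge (show k+3 ≤ k+4 by omega), show k+4+1 = k+5 from rfl] at E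

/-- L3b : long relation `l(b; a, N)` for `a, b ≤ n-2`. -/
lemma L3b (a b : ℕ) (h : 1 ≤ a ∧ a ≤ k+2 ∧ 1 ≤ b ∧ b ≤ k+2 ∧ a ≠ b) :
    ∀ t, V.z b a * (V.z b (k+5) * (V.z a (k+5) * t))
        = V.z a (k+5) * (V.z b (k+5) * (V.z b a * t)) := by
  have E := V.shiftL (k+3) a (k+4) b (by omega)
  rwa [sh_lt (show a < k+3 by omega), sh_lt (show b < k+3 by omega),
    sh_ge (show k+3 ≤ k+4 by omega), show k+4+1 = k+5 from rfl] at E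

/-- L3c : long relation `l(b; N, a)` for `a, b ≤ n-2`. -/
lemma L3c (a b : ℕ) (h : 1 ≤ a ∧ a ≤ k+2 ∧ 1 ≤ b ∧ b ≤ k+2 ∧ a ≠ b) :
    ∀ t, V.z b (k+5) * (V.z b a * (V.z (k+5) a * t))
        = V.z (k+5) a * (V.z b a * (V.z b (k+5) * t)) := by
  have E := V.shiftL (k+3) (k+4) a b (by omega)
  rwa [sh_lt (show a < k+3 by omega), sh_lt (show b < k+3 by omega),
    sh_ge (show k+3 ≤ k+4 by omega), show k+4+1 = k+5 from rfl] at E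

/-- mq1' : long relation `l(a; q, N)` for `a ≤ n-3` (via splitting strand `n-2`). -/
lemma mq1' (a : ℕ) (h : 1 ≤ a ∧ a ≤ k+1) :
    ∀ t, V.z a (k+4) * (V.z a (k+5) * (V.z (k+4) (k+5) * t))
        = V.z (k+4) (k+5) * (V.z a (k+5) * (V.z a (k+4) * t)) := by
  have E := V.shiftL (k+2) (k+3) (k+4) a (by omega)
  rwa [sh_lt (show a < k+2 by omega), sh_ge (show k+2 ≤ k+3 by omega),
    sh_ge (show k+2 ≤ k+4 by omega), show k+3+1 = k+4 from rfl, show k+4+1 = k+5 from rfl] at E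

lemma mq2' (a : ℕ) (h : 1 ≤ a ∧ a ≤ k+1) :
    ∀ t, V.z a (k+5) * (V.z a (k+4) * (V.z (k+5) (k+4) * t))
        = V.z (k+5) (k+4) * (V.z a (k+4) * (V.z a (k+5) * t)) := by
  have E := V.shiftL (k+2) (k+4) (k+3) a (by omega)
  rwa [sh_lt (show a < k+2 by omega), sh_ge (show k+2 ≤ k+3 by omega),
    sh_ge (show k+2 ≤ k+4 by omega), show k+3+1 = k+4 from rfl, show k+4+1 = k+5 from rfl] at E

lemma mq3' (a : ℕ) (h : 1 ≤ a ∧ a ≤ k+1) :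
    ∀ t, V.z (k+4) a * (V.z (k+4) (k+5) * (V.z a (k+5) * t))
        = V.z a (k+5) * (V.z (k+4) (k+5) * (V.z (k+4) a * t)) := by
  have E := V.shiftL (k+2) a (k+4) (k+3) (by omega)
  rwa [sh_lt (show a < k+2 by omega), sh_ge (show k+2 ≤ k+3 by omega),
    sh_ge (show k+2 ≤ k+4 by omega), show k+3+1 = k+4 from rfl, show k+4+1 = k+5 from rfl] at E

lemma mq4' (a : ℕ) (h : 1 ≤ a ∧ a ≤ k+1) :
    ∀ t, V.z (k+4) (k+5) * (V.z (k+4) a * (V.z (k+5) a * t))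
        = V.z (k+5) a * (V.z (k+4) a * (V.z (k+4) (k+5) * t)) := by
  have E := V.shiftL (k+2) (k+4) a (k+3) (by omega)
  rwa [sh_lt (show a < k+2 by omega), sh_ge (show k+2 ≤ k+3 by omega),
    sh_ge (show k+2 ≤ k+4 by omega), show k+3+1 = k+4 from rfl, show k+4+1 = k+5 from rfl] at E

lemma mq5' (a : ℕ) (h : 1 ≤ a ∧ a ≤ k+1) :
    ∀ t, V.z (k+5) a * (V.z (k+5) (k+4) * (V.z a (k+4) * t))
        = V.z a (k+4) * (V.z (k+5) (k+4) * (V.z (k+5) a * t)) := by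
  have E := V.shiftL (k+2) a (k+3) (k+4) (by omega)
  rwa [sh_lt (show a < k+2 by omega), sh_ge (show k+2 ≤ k+3 by omega),
    sh_ge (show k+2 ≤ k+4 by omega), show k+3+1 = k+4 from rfl, show k+4+1 = k+5 from rfl] at E

lemma mq6' (a : ℕ) (h : 1 ≤ a ∧ a ≤ k+1) :
    ∀ t, V.z (k+5) (k+4) * (V.z (k+5) a * (V.z (k+4) a * t))
        = V.z (k+4) a * (V.z (k+5) a * (V.z (k+5) (k+4) * t)) := by
  have E := V.shiftL (k+2) (k+3) a (k+4) (by omega)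
  rwa [sh_lt (show a < k+2 by omega), sh_ge (show k+2 ≤ k+3 by omega),
    sh_ge (show k+2 ≤ k+4 by omega), show k+3+1 = k+4 from rfl, show k+4+1 = k+5 from rfl] at E

/-- qn1 : long relation `l(p; q, N)` (via splitting strand 1). -/
lemma qn1 : ∀ t, V.z (k+3) (k+4) * (V.z (k+3) (k+5) * (V.z (k+4) (k+5) * t))
    = V.z (k+4) (k+5) * (V.z (k+3) (k+5) * (V.z (k+3) (k+4) * t)) := by
  have E := V.shiftL 1 (k+3) (k+4) (k+2) (by omega)
  rwa [sh_ge (show 1 ≤ k+2 by omega), sh_ge (show 1 ≤ k+3 by omega),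
    sh_ge (show 1 ≤ k+4 by omega), show k+2+1 = k+3 from rfl,
    show k+3+1 = k+4 from rfl, show k+4+1 = k+5 from rfl] at E

lemma qn2 : ∀ t, V.z (k+3) (k+5) * (V.z (k+3) (k+4) * (V.z (k+5) (k+4) * t))
    = V.z (k+5) (k+4) * (V.z (k+3) (k+4) * (V.z (k+3) (k+5) * t)) := by
  have E := V.shiftL 1 (k+4) (k+3) (k+2) (by omega)
  rwa [sh_ge (show 1 ≤ k+2 by omega), sh_ge (show 1 ≤ k+3 by omega),
    sh_ge (show 1 ≤ k+4 by omega), show k+2+1 = k+3 from rfl,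
    show k+3+1 = k+4 from rfl, show k+4+1 = k+5 from rfl] at E

lemma qn3 : ∀ t, V.z (k+4) (k+3) * (V.z (k+4) (k+5) * (V.z (k+3) (k+5) * t))
    = V.z (k+3) (k+5) * (V.z (k+4) (k+5) * (V.z (k+4) (k+3) * t)) := by
  have E := V.shiftL 1 (k+2) (k+4) (k+3) (by omega)
  rwa [sh_ge (show 1 ≤ k+2 by omega), sh_ge (show 1 ≤ k+3 by omega),
    sh_ge (show 1 ≤ k+4 by omega), show k+2+1 = k+3 from rfl,
    show k+3+1 = k+4 from rfl, show k+4+1 = k+5 from rfl] at E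

lemma qn4 : ∀ t, V.z (k+4) (k+5) * (V.z (k+4) (k+3) * (V.z (k+5) (k+3) * t))
    = V.z (k+5) (k+3) * (V.z (k+4) (k+3) * (V.z (k+4) (k+5) * t)) := by
  have E := V.shiftL 1 (k+4) (k+2) (k+3) (by omega)
  rwa [sh_ge (show 1 ≤ k+2 by omega), sh_ge (show 1 ≤ k+3 by omega),
    sh_ge (show 1 ≤ k+4 by omega), show k+2+1 = k+3 from rfl,
    show k+3+1 = k+4 from rfl, show k+4+1 = k+5 from rfl] at E

lemma qn5 : ∀ t, V.z (k+5) (k+3) * (V.z (k+5) (k+4) * (V.z (k+3) (k+4) * t))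
    = V.z (k+3) (k+4) * (V.z (k+5) (k+4) * (V.z (k+5) (k+3) * t)) := by
  have E := V.shiftL 1 (k+2) (k+3) (k+4) (by omega)
  rwa [sh_ge (show 1 ≤ k+2 by omega), sh_ge (show 1 ≤ k+3 by omega),
    sh_ge (show 1 ≤ k+4 by omega), show k+2+1 = k+3 from rfl,
    show k+3+1 = k+4 from rfl, show k+4+1 = k+5 from rfl] at E

lemma qn6 : ∀ t, V.z (k+5) (k+4) * (V.z (k+5) (k+3) * (V.z (k+4) (k+3) * t))
    = V.z (k+4) (k+3) * (V.z (k+5) (k+3) * (V.z (k+5) (k+4) * t)) := by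
  have E := V.shiftL 1 (k+3) (k+2) (k+4) (by omega)
  rwa [sh_ge (show 1 ≤ k+2 by omega), sh_ge (show 1 ≤ k+3 by omega),
    sh_ge (show 1 ≤ k+4 by omega), show k+2+1 = k+3 from rfl,
    show k+3+1 = k+4 from rfl, show k+4+1 = k+5 from rfl] at E

end VD
end Lifting

namespace Lifting
namespace VD

variable {G : Type*} [Group G] {k : ℕ} (V : VD G k)

lemma L5a (c : ℕ) (h : 1 ≤ c ∧ c ≤ k+1) :
    ∀ t, V.z (k+4) (k+5) * (V.z (k+3) c * t) = V.z (k+3) c * (V.z (k+4) (k+5) * t) := by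
  have E := V.hSC (k+2) (k+3) (k+4) (k+2) c (by omega)
  rw [zP_ne V.z (show (k+3:ℕ) ≠ k+2 by omega) (show (k+4:ℕ) ≠ k+2 by omega),
    zP_fst V.z, sh_lt (show c < k+2 by omega),
    sh_ge (show k+2 ≤ k+3 by omega), sh_ge (show k+2 ≤ k+4 by omega)] at E
  simp only [show k+4+1 = k+5 from rfl, show k+3+1 = k+4 from rfl,
    show k+2+1 = k+3 from rfl, mul_assoc] at E
  exact peel_left E (V.L2a (k+2) c (by omega))

lemma L5b (c : ℕ) (h : 1 ≤ c ∧ c ≤ k+1) :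
    ∀ t, V.z (k+4) (k+5) * (V.z c (k+3) * t) = V.z c (k+3) * (V.z (k+4) (k+5) * t) := by
  have E := V.hSC (k+2) (k+3) (k+4) c (k+2) (by omega)
  rw [zP_ne V.z (show (k+3:ℕ) ≠ k+2 by omega) (show (k+4:ℕ) ≠ k+2 by omega),
    zP_snd V.z (show c ≠ k+2 by omega), sh_lt (show c < k+2 by omega),
    sh_ge (show k+2 ≤ k+3 by omega), sh_ge (show k+2 ≤ k+4 by omega)] at E
  simp only [show k+4+1 = k+5 from rfl, show k+3+1 = k+4 from rfl,
    show k+2+1 = k+3 from rfl, mul_assoc] at E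
  exact peel_right E (V.L2a c (k+2) (by omega))

lemma L5c (c : ℕ) (h : 1 ≤ c ∧ c ≤ k+1) :
    ∀ t, V.z (k+5) (k+4) * (V.z (k+3) c * t) = V.z (k+3) c * (V.z (k+5) (k+4) * t) := by
  have E := V.hSC (k+2) (k+4) (k+3) (k+2) c (by omega)
  rw [zP_ne V.z (show (k+4:ℕ) ≠ k+2 by omega) (show (k+3:ℕ) ≠ k+2 by omega),
    zP_fst V.z, sh_lt (show c < k+2 by omega),
    sh_ge (show k+2 ≤ k+3 by omega), sh_ge (show k+2 ≤ k+4 by omega)] at E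
  simp only [show k+4+1 = k+5 from rfl, show k+3+1 = k+4 from rfl,
    show k+2+1 = k+3 from rfl, mul_assoc] at E
  exact peel_left E (V.L2b (k+2) c (by omega))

lemma L5d (c : ℕ) (h : 1 ≤ c ∧ c ≤ k+1) :
    ∀ t, V.z (k+5) (k+4) * (V.z c (k+3) * t) = V.z c (k+3) * (V.z (k+5) (k+4) * t) := by
  have E := V.hSC (k+2) (k+4) (k+3) c (k+2) (by omega)
  rw [zP_ne V.z (show (k+4:ℕ) ≠ k+2 by omega) (show (k+3:ℕ) ≠ k+2 by omega),
    zP_snd V.z (show c ≠ k+2 by omega), sh_lt (show c < k+2 by omega),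
    sh_ge (show k+2 ≤ k+3 by omega), sh_ge (show k+2 ≤ k+4 by omega)] at E
  simp only [show k+4+1 = k+5 from rfl, show k+3+1 = k+4 from rfl,
    show k+2+1 = k+3 from rfl, mul_assoc] at E
  exact peel_right E (V.L2b c (k+2) (by omega))

lemma L6a : ∀ t, V.z (k+4) (k+5) * (V.z (k+3) (k+2) * t)
    = V.z (k+3) (k+2) * (V.z (k+4) (k+5) * t) := by
  have E := V.hSC (k+1) (k+3) (k+4) (k+2) (k+1) (by omega)
  rw [zP_ne V.z (show (k+3:ℕ) ≠ k+1 by omega) (show (k+4:ℕ) ≠ k+1 by omega),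
    zP_snd V.z (show (k+2:ℕ) ≠ k+1 by omega),
    sh_ge (show k+1 ≤ k+2 by omega), sh_ge (show k+1 ≤ k+3 by omega),
    sh_ge (show k+1 ≤ k+4 by omega)] at E
  simp only [show k+4+1 = k+5 from rfl, show k+3+1 = k+4 from rfl,
    show k+2+1 = k+3 from rfl, show k+1+1 = k+2 from rfl, mul_assoc] at E
  exact peel_right E (V.L5a (k+1) (by omega))

lemma L6b : ∀ t, V.z (k+4) (k+5) * (V.z (k+2) (k+3) * t)
    = V.z (k+2) (k+3) * (V.z (k+4) (k+5) * t) := by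
  have E := V.hSC (k+1) (k+3) (k+4) (k+1) (k+2) (by omega)
  rw [zP_ne V.z (show (k+3:ℕ) ≠ k+1 by omega) (show (k+4:ℕ) ≠ k+1 by omega),
    zP_fst V.z,
    sh_ge (show k+1 ≤ k+2 by omega), sh_ge (show k+1 ≤ k+3 by omega),
    sh_ge (show k+1 ≤ k+4 by omega)] at E
  simp only [show k+4+1 = k+5 from rfl, show k+3+1 = k+4 from rfl,
    show k+2+1 = k+3 from rfl, show k+1+1 = k+2 from rfl, mul_assoc] at E
  exact peel_left E (V.L5b (k+1) (by omega))

lemma L6c : ∀ t, V.z (k+5) (k+4) * (V.z (k+3) (k+2) * t)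
    = V.z (k+3) (k+2) * (V.z (k+5) (k+4) * t) := by
  have E := V.hSC (k+1) (k+4) (k+3) (k+2) (k+1) (by omega)
  rw [zP_ne V.z (show (k+4:ℕ) ≠ k+1 by omega) (show (k+3:ℕ) ≠ k+1 by omega),
    zP_snd V.z (show (k+2:ℕ) ≠ k+1 by omega),
    sh_ge (show k+1 ≤ k+2 by omega), sh_ge (show k+1 ≤ k+3 by omega),
    sh_ge (show k+1 ≤ k+4 by omega)] at E
  simp only [show k+4+1 = k+5 from rfl, show k+3+1 = k+4 from rfl,
    show k+2+1 = k+3 from rfl, show k+1+1 = k+2 from rfl, mul_assoc] at E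
  exact peel_right E (V.L5c (k+1) (by omega))

lemma L6d : ∀ t, V.z (k+5) (k+4) * (V.z (k+2) (k+3) * t)
    = V.z (k+2) (k+3) * (V.z (k+5) (k+4) * t) := by
  have E := V.hSC (k+1) (k+4) (k+3) (k+1) (k+2) (by omega)
  rw [zP_ne V.z (show (k+4:ℕ) ≠ k+1 by omega) (show (k+3:ℕ) ≠ k+1 by omega),
    zP_fst V.z,
    sh_ge (show k+1 ≤ k+2 by omega), sh_ge (show k+1 ≤ k+3 by omega),
    sh_ge (show k+1 ≤ k+4 by omega)] at E
  simp only [show k+4+1 = k+5 from rfl, show k+3+1 = k+4 from rfl,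
    show k+2+1 = k+3 from rfl, show k+1+1 = k+2 from rfl, mul_assoc] at E
  exact peel_left E (V.L5d (k+1) (by omega))

/-- M1 : `λ_{n,N}` commutes with every generator on strands `≤ n-1`. -/
lemma M1 (x y : ℕ) (h : 1 ≤ x ∧ x ≤ k+3 ∧ 1 ≤ y ∧ y ≤ k+3 ∧ x ≠ y) :
    ∀ t, V.z (k+4) (k+5) * (V.z x y * t) = V.z x y * (V.z (k+4) (k+5) * t) := by
  by_cases hx : x = k+3
  · subst hx
    by_cases hy : y = k+2
    · subst hy; exact V.L6a
    · exact V.L5a y (by omega)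
  · by_cases hy : y = k+3
    · subst hy
      by_cases hx2 : x = k+2
      · subst hx2; exact V.L6b
      · exact V.L5b x (by omega)
    · exact V.L2a x y (by omega)

/-- M2 : `λ_{N,n}` commutes with every generator on strands `≤ n-1`. -/
lemma M2 (x y : ℕ) (h : 1 ≤ x ∧ x ≤ k+3 ∧ 1 ≤ y ∧ y ≤ k+3 ∧ x ≠ y) :
    ∀ t, V.z (k+5) (k+4) * (V.z x y * t) = V.z x y * (V.z (k+5) (k+4) * t) := by
  by_cases hx : x = k+3
  · subst hx
    by_cases hy : y = k+2
    · subst hy; exact V.L6c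
    · exact V.L5c y (by omega)
  · by_cases hy : y = k+3
    · subst hy
      by_cases hx2 : x = k+2
      · subst hx2; exact V.L6d
      · exact V.L5d x (by omega)
    · exact V.L2b x y (by omega)

end VD
end Lifting

namespace Lifting
namespace VD

variable {G : Type*} [Group G] {k : ℕ} (V : VD G k)

/-- mq1 : long relation `l(a; q, N)` for all `a ≤ n-2`. -/
lemma mq1 (a : ℕ) (h : 1 ≤ a ∧ a ≤ k+2) :
    ∀ t, V.z a (k+4) * (V.z a (k+5) * (V.z (k+4) (k+5) * t))
        = V.z (k+4) (k+5) * (V.z a (k+5) * (V.z a (k+4) * t)) := by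
  by_cases ha : a = k+2
  · subst ha
    have E := V.hSL (k+1) (k+3) (k+4) (k+1) (by omega)
    rw [zP_fst V.z, zP_fst V.z, zP_ne V.z (show (k+3:ℕ) ≠ k+1 by omega) (show (k+4:ℕ) ≠ k+1 by omega),
      sh_ge (show k+1 ≤ k+3 by omega), sh_ge (show k+1 ≤ k+4 by omega)] at E
    simp only [show k+4+1 = k+5 from rfl, show k+3+1 = k+4 from rfl,
      show k+1+1 = k+2 from rfl, mul_assoc] at E
    intro t
    have E1 := E t
    rw [← V.L1a (k+1) (k+2) (by omega)] at E1
    rw [V.L1a (k+2) (k+1) (by omega)] at E1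
    rw [← V.mq1' (k+1) (by omega)] at E1
    exact mul_left_cancel (mul_left_cancel E1)
  · exact V.mq1' a (by omega)

/-- mq2 : long relation `l(a; N, q)` for all `a ≤ n-2`. -/
lemma mq2 (a : ℕ) (h : 1 ≤ a ∧ a ≤ k+2) :
    ∀ t, V.z a (k+5) * (V.z a (k+4) * (V.z (k+5) (k+4) * t))
        = V.z (k+5) (k+4) * (V.z a (k+4) * (V.z a (k+5) * t)) := by
  by_cases ha : a = k+2
  · subst ha
    have E := V.hSL (k+1) (k+4) (k+3) (k+1) (by omega)
    rw [zP_fst V.z, zP_fst V.z, zP_ne V.z (show (k+4:ℕ) ≠ k+1 by omega) (show (k+3:ℕ) ≠ k+1 by omega),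
      sh_ge (show k+1 ≤ k+3 by omega), sh_ge (show k+1 ≤ k+4 by omega)] at E
    simp only [show k+4+1 = k+5 from rfl, show k+3+1 = k+4 from rfl,
      show k+1+1 = k+2 from rfl, mul_assoc] at E
    intro t
    have E1 := E t
    rw [V.L1a (k+2) (k+1) (by omega)] at E1
    rw [← V.L1a (k+1) (k+2) (by omega)] at E1
    rw [← V.mq2' (k+1) (by omega)] at E1
    exact mul_left_cancel (mul_left_cancel E1)
  · exact V.mq2' a (by omega)

/-- mq3 : long relation `l(q; a, N)` for all `a ≤ n-2`. -/
lemma mq3 (a : ℕ) (h : 1 ≤ a ∧ a ≤ k+2) :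
    ∀ t, V.z (k+4) a * (V.z (k+4) (k+5) * (V.z a (k+5) * t))
        = V.z a (k+5) * (V.z (k+4) (k+5) * (V.z (k+4) a * t)) := by
  by_cases ha : a = k+2
  · subst ha
    intro s
    have E := V.hSL (k+1) (k+1) (k+4) (k+3) (by omega)
    rw [zP_snd V.z (show (k+3:ℕ) ≠ k+1 by omega),
      zP_ne V.z (show (k+3:ℕ) ≠ k+1 by omega) (show (k+4:ℕ) ≠ k+1 by omega),
      zP_fst V.z,
      sh_ge (show k+1 ≤ k+3 by omega), sh_ge (show k+1 ≤ k+4 by omega)] at E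
    simp only [show k+4+1 = k+5 from rfl, show k+3+1 = k+4 from rfl,
      show k+1+1 = k+2 from rfl, mul_assoc] at E
    have E1 := E ((V.z (k+4) (k+1))⁻¹ * s)
    rw [V.mq3' (k+1) (by omega)] at E1
    rw [← V.L1b (k+1) (k+2) (by omega)] at E1
    rw [← V.L1b (k+2) (k+1) (by omega)] at E1
    rw [mul_inv_cancel_left] at E1
    exact mul_left_cancel E1
  · exact V.mq3' a (by omega)

/-- mq4 : long relation `l(q; N, a)` for all `a ≤ n-2`. -/
lemma mq4 (a : ℕ) (h : 1 ≤ a ∧ a ≤ k+2) :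
    ∀ t, V.z (k+4) (k+5) * (V.z (k+4) a * (V.z (k+5) a * t))
        = V.z (k+5) a * (V.z (k+4) a * (V.z (k+4) (k+5) * t)) := by
  by_cases ha : a = k+2
  · subst ha
    intro s
    have E := V.hSL (k+1) (k+4) (k+1) (k+3) (by omega)
    rw [zP_ne V.z (show (k+3:ℕ) ≠ k+1 by omega) (show (k+4:ℕ) ≠ k+1 by omega),
      zP_snd V.z (show (k+3:ℕ) ≠ k+1 by omega),
      zP_snd V.z (show (k+4:ℕ) ≠ k+1 by omega),
      sh_ge (show k+1 ≤ k+3 by omega), sh_ge (show k+1 ≤ k+4 by omega)] at E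
    simp only [show k+4+1 = k+5 from rfl, show k+3+1 = k+4 from rfl,
      show k+1+1 = k+2 from rfl, mul_assoc] at E
    have E1 := E ((V.z (k+5) (k+1))⁻¹ * ((V.z (k+4) (k+1))⁻¹ * s))
    rw [← V.L1d (k+2) (k+1) (by omega)] at E1
    rw [V.L1d (k+1) (k+2) (by omega)] at E1
    rw [← V.mq4' (k+1) (by omega)] at E1
    rw [mul_inv_cancel_left, mul_inv_cancel_left] at E1
    exact E1
  · exact V.mq4' a (by omega)

/-- mq5 : long relation `l(N; a, q)` for all `a ≤ n-2`. -/
lemma mq5 (a : ℕ) (h : 1 ≤ a ∧ a ≤ k+2) :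
    ∀ t, V.z (k+5) a * (V.z (k+5) (k+4) * (V.z a (k+4) * t))
        = V.z a (k+4) * (V.z (k+5) (k+4) * (V.z (k+5) a * t)) := by
  by_cases ha : a = k+2
  · subst ha
    intro s
    have E := V.hSL (k+1) (k+1) (k+3) (k+4) (by omega)
    rw [zP_snd V.z (show (k+4:ℕ) ≠ k+1 by omega),
      zP_ne V.z (show (k+4:ℕ) ≠ k+1 by omega) (show (k+3:ℕ) ≠ k+1 by omega),
      zP_fst V.z,
      sh_ge (show k+1 ≤ k+3 by omega), sh_ge (show k+1 ≤ k+4 by omega)] at E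
    simp only [show k+4+1 = k+5 from rfl, show k+3+1 = k+4 from rfl,
      show k+1+1 = k+2 from rfl, mul_assoc] at E
    have E1 := E ((V.z (k+5) (k+1))⁻¹ * s)
    rw [V.mq5' (k+1) (by omega)] at E1
    rw [V.L1c (k+2) (k+1) (by omega)] at E1
    rw [V.L1c (k+1) (k+2) (by omega)] at E1
    rw [mul_inv_cancel_left] at E1
    exact mul_left_cancel E1
  · exact V.mq5' a (by omega)

/-- mq6 : long relation `l(N; q, a)` for all `a ≤ n-2`. -/
lemma mq6 (a : ℕ) (h : 1 ≤ a ∧ a ≤ k+2) :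
    ∀ t, V.z (k+5) (k+4) * (V.z (k+5) a * (V.z (k+4) a * t))
        = V.z (k+4) a * (V.z (k+5) a * (V.z (k+5) (k+4) * t)) := by
  by_cases ha : a = k+2
  · subst ha
    intro s
    have E := V.hSL (k+1) (k+3) (k+1) (k+4) (by omega)
    rw [zP_ne V.z (show (k+4:ℕ) ≠ k+1 by omega) (show (k+3:ℕ) ≠ k+1 by omega),
      zP_snd V.z (show (k+4:ℕ) ≠ k+1 by omega),
      zP_snd V.z (show (k+3:ℕ) ≠ k+1 by omega),
      sh_ge (show k+1 ≤ k+3 by omega), sh_ge (show k+1 ≤ k+4 by omega)] at E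
    simp only [show k+4+1 = k+5 from rfl, show k+3+1 = k+4 from rfl,
      show k+1+1 = k+2 from rfl, mul_assoc] at E
    have E1 := E ((V.z (k+4) (k+1))⁻¹ * ((V.z (k+5) (k+1))⁻¹ * s))
    rw [V.L1d (k+1) (k+2) (by omega)] at E1
    rw [← V.L1d (k+2) (k+1) (by omega)] at E1
    rw [← V.mq6' (k+1) (by omega)] at E1
    rw [mul_inv_cancel_left, mul_inv_cancel_left] at E1
    exact E1
  · exact V.mq6' a (by omega)

end VD
end Lifting

namespace Lifting
namespace VD

variable {G : Type*} [Group G] {k : ℕ} (V : VD G k)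

/-- lp1' : long relation `l(a; p, N)` for `a ≤ n-3`. -/
lemma lp1' (a : ℕ) (h : 1 ≤ a ∧ a ≤ k+1) :
    ∀ t, V.z a (k+3) * (V.z a (k+5) * (V.z (k+3) (k+5) * t))
        = V.z (k+3) (k+5) * (V.z a (k+5) * (V.z a (k+3) * t)) := by
  intro s
  have E := V.hSL (k+2) (k+2) (k+4) a (by omega)
  rw [zP_snd V.z (show a ≠ k+2 by omega), zP_ne V.z (show a ≠ k+2 by omega) (show (k+4:ℕ) ≠ k+2 by omega),
    zP_fst V.z, sh_lt (show a < k+2 by omega), sh_ge (show k+2 ≤ k+4 by omega)] at E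
  simp only [show k+4+1 = k+5 from rfl, show k+2+1 = k+3 from rfl, mul_assoc] at E
  have E1 := E ((V.z a (k+2))⁻¹ * s)
  rw [V.L3b (k+2) a (by omega)] at E1
  rw [← V.L0a (k+2) a (k+3) (by omega)] at E1
  rw [← V.L0a (k+3) a (k+2) (by omega)] at E1
  rw [mul_inv_cancel_left] at E1
  exact mul_left_cancel E1

/-- lp2' : long relation `l(a; N, p)` for `a ≤ n-3`. -/
lemma lp2' (a : ℕ) (h : 1 ≤ a ∧ a ≤ k+1) :
    ∀ t, V.z a (k+5) * (V.z a (k+3) * (V.z (k+5) (k+3) * t))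
        = V.z (k+5) (k+3) * (V.z a (k+3) * (V.z a (k+5) * t)) := by
  intro s
  have E := V.hSL (k+2) (k+4) (k+2) a (by omega)
  rw [zP_ne V.z (show a ≠ k+2 by omega) (show (k+4:ℕ) ≠ k+2 by omega),
    zP_snd V.z (show a ≠ k+2 by omega), zP_snd V.z (show (k+4:ℕ) ≠ k+2 by omega),
    sh_lt (show a < k+2 by omega), sh_ge (show k+2 ≤ k+4 by omega)] at E
  simp only [show k+4+1 = k+5 from rfl, show k+2+1 = k+3 from rfl, mul_assoc] at E
  have E1 := E ((V.z (k+5) (k+2))⁻¹ * ((V.z a (k+2))⁻¹ * s))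
  rw [← V.L0b (k+3) a (k+2) (by omega)] at E1
  rw [V.L0b (k+2) a (k+3) (by omega)] at E1
  rw [← V.L3c (k+2) a (by omega)] at E1
  rw [mul_inv_cancel_left, mul_inv_cancel_left] at E1
  exact E1

/-- lp3' : long relation `l(p; a, N)` for `a ≤ n-3`. -/
lemma lp3' (a : ℕ) (h : 1 ≤ a ∧ a ≤ k+1) :
    ∀ t, V.z (k+3) a * (V.z (k+3) (k+5) * (V.z a (k+5) * t))
        = V.z a (k+5) * (V.z (k+3) (k+5) * (V.z (k+3) a * t)) := by
  intro s
  have E := V.hSL (k+2) a (k+4) (k+2) (by omega)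
  rw [zP_fst V.z, zP_fst V.z, zP_ne V.z (show a ≠ k+2 by omega) (show (k+4:ℕ) ≠ k+2 by omega),
    sh_lt (show a < k+2 by omega), sh_ge (show k+2 ≤ k+4 by omega)] at E
  simp only [show k+4+1 = k+5 from rfl, show k+2+1 = k+3 from rfl, mul_assoc] at E
  have E1 := E s
  rw [← V.L0a (k+2) (k+3) a (by omega)] at E1
  rw [V.L0a (k+3) (k+2) a (by omega)] at E1
  rw [← V.L3b a (k+2) (by omega)] at E1
  exact mul_left_cancel (mul_left_cancel E1)

/-- lp4' : long relation `l(p; N, a)` for `a ≤ n-3`. -/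
lemma lp4' (a : ℕ) (h : 1 ≤ a ∧ a ≤ k+1) :
    ∀ t, V.z (k+3) (k+5) * (V.z (k+3) a * (V.z (k+5) a * t))
        = V.z (k+5) a * (V.z (k+3) a * (V.z (k+3) (k+5) * t)) := by
  intro s
  have E := V.hSL (k+2) (k+4) a (k+2) (by omega)
  rw [zP_fst V.z, zP_fst V.z, zP_ne V.z (show (k+4:ℕ) ≠ k+2 by omega) (show a ≠ k+2 by omega),
    sh_lt (show a < k+2 by omega), sh_ge (show k+2 ≤ k+4 by omega)] at E
  simp only [show k+4+1 = k+5 from rfl, show k+2+1 = k+3 from rfl, mul_assoc] at E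
  have E1 := E s
  rw [V.L0a (k+3) (k+2) a (by omega)] at E1
  rw [← V.L0a (k+2) (k+3) a (by omega)] at E1
  rw [← V.L3c a (k+2) (by omega)] at E1
  exact mul_left_cancel (mul_left_cancel E1)

/-- lp5' : long relation `l(N; a, p)` for `a ≤ n-3`. -/
lemma lp5' (a : ℕ) (h : 1 ≤ a ∧ a ≤ k+1) :
    ∀ t, V.z (k+5) a * (V.z (k+5) (k+3) * (V.z a (k+3) * t))
        = V.z a (k+3) * (V.z (k+5) (k+3) * (V.z (k+5) a * t)) := by
  intro s
  have E := V.hSL (k+2) a (k+2) (k+4) (by omega)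
  rw [zP_ne V.z (show (k+4:ℕ) ≠ k+2 by omega) (show a ≠ k+2 by omega),
    zP_snd V.z (show (k+4:ℕ) ≠ k+2 by omega), zP_snd V.z (show a ≠ k+2 by omega),
    sh_lt (show a < k+2 by omega), sh_ge (show k+2 ≤ k+4 by omega)] at E
  simp only [show k+4+1 = k+5 from rfl, show k+2+1 = k+3 from rfl, mul_assoc] at E
  have E1 := E ((V.z a (k+2))⁻¹ * ((V.z (k+5) (k+2))⁻¹ * s))
  rw [V.L0b (k+2) a (k+3) (by omega)] at E1
  rw [← V.L0b (k+3) a (k+2) (by omega)] at E1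
  rw [← V.L3a a (k+2) (by omega)] at E1
  rw [mul_inv_cancel_left, mul_inv_cancel_left] at E1
  exact E1

/-- lp6' : long relation `l(N; p, a)` for `a ≤ n-3`. -/
lemma lp6' (a : ℕ) (h : 1 ≤ a ∧ a ≤ k+1) :
    ∀ t, V.z (k+5) (k+3) * (V.z (k+5) a * (V.z (k+3) a * t))
        = V.z (k+3) a * (V.z (k+5) a * (V.z (k+5) (k+3) * t)) := by
  intro s
  have E := V.hSL (k+2) (k+2) a (k+4) (by omega)
  rw [zP_ne V.z (show (k+4:ℕ) ≠ k+2 by omega) (show a ≠ k+2 by omega),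
    zP_snd V.z (show (k+4:ℕ) ≠ k+2 by omega), zP_fst V.z,
    sh_lt (show a < k+2 by omega), sh_ge (show k+2 ≤ k+4 by omega)] at E
  simp only [show k+4+1 = k+5 from rfl, show k+2+1 = k+3 from rfl, mul_assoc] at E
  have E1 := E ((V.z (k+5) (k+2))⁻¹ * s)
  rw [V.L3a (k+2) a (by omega)] at E1
  rw [V.L0b (k+3) (k+2) a (by omega)] at E1
  rw [V.L0b (k+2) (k+3) a (by omega)] at E1
  rw [mul_inv_cancel_left] at E1
  exact mul_left_cancel E1

end VD
end Lifting

namespace Lifting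
namespace VD

variable {G : Type*} [Group G] {k : ℕ} (V : VD G k)

/-- lp1 : long relation `l(a; p, N)` for all `a ≤ n-2`. -/
lemma lp1 (a : ℕ) (h : 1 ≤ a ∧ a ≤ k+2) :
    ∀ t, V.z a (k+3) * (V.z a (k+5) * (V.z (k+3) (k+5) * t))
        = V.z (k+3) (k+5) * (V.z a (k+5) * (V.z a (k+3) * t)) := by
  by_cases ha : a = k+2
  · subst ha
    intro s
    have E := V.hSL (k+1) (k+2) (k+4) (k+1) (by omega)
    rw [zP_fst V.z, zP_fst V.z,
      zP_ne V.z (show (k+2:ℕ) ≠ k+1 by omega) (show (k+4:ℕ) ≠ k+1 by omega),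
      sh_ge (show k+1 ≤ k+2 by omega), sh_ge (show k+1 ≤ k+4 by omega)] at E
    simp only [show k+4+1 = k+5 from rfl, show k+2+1 = k+3 from rfl,
      show k+1+1 = k+2 from rfl, mul_assoc] at E
    have E1 := E s
    rw [← V.L0a (k+1) (k+2) (k+3) (by omega)] at E1
    rw [V.L0a (k+2) (k+1) (k+3) (by omega)] at E1
    rw [← V.lp1' (k+1) (by omega)] at E1
    exact mul_left_cancel (mul_left_cancel E1)
  · exact V.lp1' a (by omega)

/-- lp2 : long relation `l(a; N, p)` for all `a ≤ n-2`. -/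
lemma lp2 (a : ℕ) (h : 1 ≤ a ∧ a ≤ k+2) :
    ∀ t, V.z a (k+5) * (V.z a (k+3) * (V.z (k+5) (k+3) * t))
        = V.z (k+5) (k+3) * (V.z a (k+3) * (V.z a (k+5) * t)) := by
  by_cases ha : a = k+2
  · subst ha
    intro s
    have E := V.hSL (k+1) (k+4) (k+2) (k+1) (by omega)
    rw [zP_fst V.z, zP_fst V.z,
      zP_ne V.z (show (k+4:ℕ) ≠ k+1 by omega) (show (k+2:ℕ) ≠ k+1 by omega),
      sh_ge (show k+1 ≤ k+2 by omega), sh_ge (show k+1 ≤ k+4 by omega)] at E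
    simp only [show k+4+1 = k+5 from rfl, show k+2+1 = k+3 from rfl,
      show k+1+1 = k+2 from rfl, mul_assoc] at E
    have E1 := E s
    rw [V.L0a (k+2) (k+1) (k+3) (by omega)] at E1
    rw [← V.L0a (k+1) (k+2) (k+3) (by omega)] at E1
    rw [← V.lp2' (k+1) (by omega)] at E1
    exact mul_left_cancel (mul_left_cancel E1)
  · exact V.lp2' a (by omega)

/-- lp3 : long relation `l(p; a, N)` for all `a ≤ n-2`. -/
lemma lp3 (a : ℕ) (h : 1 ≤ a ∧ a ≤ k+2) :
    ∀ t, V.z (k+3) a * (V.z (k+3) (k+5) * (V.z a (k+5) * t))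
        = V.z a (k+5) * (V.z (k+3) (k+5) * (V.z (k+3) a * t)) := by
  by_cases ha : a = k+2
  · subst ha
    intro s
    have E := V.hSL (k+1) (k+1) (k+4) (k+2) (by omega)
    rw [zP_snd V.z (show (k+2:ℕ) ≠ k+1 by omega),
      zP_ne V.z (show (k+2:ℕ) ≠ k+1 by omega) (show (k+4:ℕ) ≠ k+1 by omega),
      zP_fst V.z,
      sh_ge (show k+1 ≤ k+2 by omega), sh_ge (show k+1 ≤ k+4 by omega)] at E
    simp only [show k+4+1 = k+5 from rfl, show k+2+1 = k+3 from rfl,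
      show k+1+1 = k+2 from rfl, mul_assoc] at E
    have E1 := E ((V.z (k+3) (k+1))⁻¹ * s)
    rw [V.lp3' (k+1) (by omega)] at E1
    rw [← V.L0a (k+1) (k+3) (k+2) (by omega)] at E1
    rw [← V.L0a (k+2) (k+3) (k+1) (by omega)] at E1
    rw [mul_inv_cancel_left] at E1
    exact mul_left_cancel E1
  · exact V.lp3' a (by omega)

/-- lp4 : long relation `l(p; N, a)` for all `a ≤ n-2`. -/
lemma lp4 (a : ℕ) (h : 1 ≤ a ∧ a ≤ k+2) :
    ∀ t, V.z (k+3) (k+5) * (V.z (k+3) a * (V.z (k+5) a * t))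
        = V.z (k+5) a * (V.z (k+3) a * (V.z (k+3) (k+5) * t)) := by
  by_cases ha : a = k+2
  · subst ha
    intro s
    have E := V.hSL (k+1) (k+4) (k+1) (k+2) (by omega)
    rw [zP_ne V.z (show (k+2:ℕ) ≠ k+1 by omega) (show (k+4:ℕ) ≠ k+1 by omega),
      zP_snd V.z (show (k+2:ℕ) ≠ k+1 by omega),
      zP_snd V.z (show (k+4:ℕ) ≠ k+1 by omega),
      sh_ge (show k+1 ≤ k+2 by omega), sh_ge (show k+1 ≤ k+4 by omega)] at E
    simp only [show k+4+1 = k+5 from rfl, show k+2+1 = k+3 from rfl,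
      show k+1+1 = k+2 from rfl, mul_assoc] at E
    have E1 := E ((V.z (k+5) (k+1))⁻¹ * ((V.z (k+3) (k+1))⁻¹ * s))
    rw [← V.L0b (k+2) (k+3) (k+1) (by omega)] at E1
    rw [V.L0b (k+1) (k+3) (k+2) (by omega)] at E1
    rw [← V.lp4' (k+1) (by omega)] at E1
    rw [mul_inv_cancel_left, mul_inv_cancel_left] at E1
    exact E1
  · exact V.lp4' a (by omega)

/-- lp5 : long relation `l(N; a, p)` for all `a ≤ n-2`. -/
lemma lp5 (a : ℕ) (h : 1 ≤ a ∧ a ≤ k+2) :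
    ∀ t, V.z (k+5) a * (V.z (k+5) (k+3) * (V.z a (k+3) * t))
        = V.z a (k+3) * (V.z (k+5) (k+3) * (V.z (k+5) a * t)) := by
  by_cases ha : a = k+2
  · subst ha
    intro s
    have E := V.hSL (k+1) (k+1) (k+2) (k+4) (by omega)
    rw [zP_snd V.z (show (k+4:ℕ) ≠ k+1 by omega),
      zP_ne V.z (show (k+4:ℕ) ≠ k+1 by omega) (show (k+2:ℕ) ≠ k+1 by omega),
      zP_fst V.z,
      sh_ge (show k+1 ≤ k+2 by omega), sh_ge (show k+1 ≤ k+4 by omega)] at E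
    simp only [show k+4+1 = k+5 from rfl, show k+2+1 = k+3 from rfl,
      show k+1+1 = k+2 from rfl, mul_assoc] at E
    have E1 := E ((V.z (k+5) (k+1))⁻¹ * s)
    rw [V.lp5' (k+1) (by omega)] at E1
    rw [V.L0b (k+2) (k+1) (k+3) (by omega)] at E1
    rw [V.L0b (k+1) (k+2) (k+3) (by omega)] at E1
    rw [mul_inv_cancel_left] at E1
    exact mul_left_cancel E1
  · exact V.lp5' a (by omega)

/-- lp6 : long relation `l(N; p, a)` for all `a ≤ n-2`. -/
lemma lp6 (a : ℕ) (h : 1 ≤ a ∧ a ≤ k+2) :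
    ∀ t, V.z (k+5) (k+3) * (V.z (k+5) a * (V.z (k+3) a * t))
        = V.z (k+3) a * (V.z (k+5) a * (V.z (k+5) (k+3) * t)) := by
  by_cases ha : a = k+2
  · subst ha
    intro s
    have E := V.hSL (k+1) (k+2) (k+1) (k+4) (by omega)
    rw [zP_ne V.z (show (k+4:ℕ) ≠ k+1 by omega) (show (k+2:ℕ) ≠ k+1 by omega),
      zP_snd V.z (show (k+4:ℕ) ≠ k+1 by omega),
      zP_snd V.z (show (k+2:ℕ) ≠ k+1 by omega),
      sh_ge (show k+1 ≤ k+2 by omega), sh_ge (show k+1 ≤ k+4 by omega)] at E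
    simp only [show k+4+1 = k+5 from rfl, show k+2+1 = k+3 from rfl,
      show k+1+1 = k+2 from rfl, mul_assoc] at E
    have E1 := E ((V.z (k+3) (k+1))⁻¹ * ((V.z (k+5) (k+1))⁻¹ * s))
    rw [V.L0b (k+1) (k+3) (k+2) (by omega)] at E1
    rw [← V.L0b (k+2) (k+3) (k+1) (by omega)] at E1
    rw [← V.lp6' (k+1) (by omega)] at E1
    rw [mul_inv_cancel_left, mul_inv_cancel_left] at E1
    exact E1
  · exact V.lp6' a (by omega)

end VD
end Lifting

namespace Lifting
namespace VD

variable {G : Type*} [Group G] {k : ℕ} (V : VD G k)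

/-- c5 : `λ_{p,N}` commutes with `λ_{a,q}`. -/
lemma c5 (a : ℕ) (h : 1 ≤ a ∧ a ≤ k+2) :
    ∀ t, V.z (k+3) (k+5) * (V.z a (k+4) * t) = V.z a (k+4) * (V.z (k+3) (k+5) * t) := by
  intro s
  have E := V.hSL (k+3) (k+3) (k+4) a (by omega)
  rw [zP_snd V.z (show a ≠ k+3 by omega),
    zP_ne V.z (show a ≠ k+3 by omega) (show (k+4:ℕ) ≠ k+3 by omega),
    zP_fst V.z, sh_lt (show a < k+3 by omega), sh_ge (show k+3 ≤ k+4 by omega)] at E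
  simp only [show k+4+1 = k+5 from rfl, show k+3+1 = k+4 from rfl, mul_assoc] at E
  have E1 := E ((V.z a (k+3))⁻¹ * ((V.z (k+4) (k+5))⁻¹ * ((V.z a (k+5))⁻¹ * s)))
  rw [V.lp1 a (by omega)] at E1
  rw [← V.M1 a (k+3) (by omega)] at E1
  rw [← V.mq1 a (by omega)] at E1
  rw [mul_inv_cancel_left, mul_inv_cancel_left, mul_inv_cancel_left] at E1
  exact E1.symm

/-- c6 : `λ_{p,N}` commutes with `λ_{q,a}`. -/
lemma c6 (a : ℕ) (h : 1 ≤ a ∧ a ≤ k+2) :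
    ∀ t, V.z (k+3) (k+5) * (V.z (k+4) a * t) = V.z (k+4) a * (V.z (k+3) (k+5) * t) := by
  intro s
  have E := V.hSL (k+3) a (k+4) (k+3) (by omega)
  rw [zP_fst V.z, zP_fst V.z,
    zP_ne V.z (show a ≠ k+3 by omega) (show (k+4:ℕ) ≠ k+3 by omega),
    sh_lt (show a < k+3 by omega), sh_ge (show k+3 ≤ k+4 by omega)] at E
  simp only [show k+4+1 = k+5 from rfl, show k+3+1 = k+4 from rfl, mul_assoc] at E
  have E1 := E ((V.z a (k+5))⁻¹ * ((V.z (k+4) (k+5))⁻¹ * s))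
  rw [V.M1 (k+3) a (by omega)] at E1
  rw [← V.lp3 a (by omega)] at E1
  rw [← V.mq3 a (by omega)] at E1
  rw [mul_inv_cancel_left, mul_inv_cancel_left] at E1
  exact (mul_left_cancel E1).symm

/-- c7 : `λ_{N,p}` commutes with `λ_{a,q}`. -/
lemma c7 (a : ℕ) (h : 1 ≤ a ∧ a ≤ k+2) :
    ∀ t, V.z (k+5) (k+3) * (V.z a (k+4) * t) = V.z a (k+4) * (V.z (k+5) (k+3) * t) := by
  intro s
  have E := V.hSL (k+3) a (k+3) (k+4) (by omega)
  rw [zP_ne V.z (show (k+4:ℕ) ≠ k+3 by omega) (show a ≠ k+3 by omega),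
    zP_snd V.z (show (k+4:ℕ) ≠ k+3 by omega),
    zP_snd V.z (show a ≠ k+3 by omega),
    sh_lt (show a < k+3 by omega), sh_ge (show k+3 ≤ k+4 by omega)] at E
  simp only [show k+4+1 = k+5 from rfl, show k+3+1 = k+4 from rfl, mul_assoc] at E
  have E1 := E ((V.z a (k+3))⁻¹ * s)
  rw [← V.M2 a (k+3) (by omega)] at E1
  rw [← V.lp5 a (by omega)] at E1
  rw [← V.mq5 a (by omega)] at E1
  rw [mul_inv_cancel_left] at E1
  exact mul_left_cancel (mul_left_cancel E1)

/-- c8 : `λ_{N,p}` commutes with `λ_{q,a}`. -/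
lemma c8 (a : ℕ) (h : 1 ≤ a ∧ a ≤ k+2) :
    ∀ t, V.z (k+5) (k+3) * (V.z (k+4) a * t) = V.z (k+4) a * (V.z (k+5) (k+3) * t) := by
  intro s
  have E := V.hSL (k+3) (k+3) a (k+4) (by omega)
  rw [zP_ne V.z (show (k+4:ℕ) ≠ k+3 by omega) (show a ≠ k+3 by omega),
    zP_snd V.z (show (k+4:ℕ) ≠ k+3 by omega),
    zP_fst V.z,
    sh_lt (show a < k+3 by omega), sh_ge (show k+3 ≤ k+4 by omega)] at E
  simp only [show k+4+1 = k+5 from rfl, show k+3+1 = k+4 from rfl, mul_assoc] at E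
  have E1 := E s
  rw [V.lp6 a (by omega)] at E1
  rw [V.M2 (k+3) a (by omega)] at E1
  rw [← V.mq6 a (by omega)] at E1
  exact mul_left_cancel (mul_left_cancel (mul_left_cancel E1))

/-- c1 : `λ_{a,N}` commutes with `λ_{p,q}`. -/
lemma c1 (a : ℕ) (h : 1 ≤ a ∧ a ≤ k+2) :
    ∀ t, V.z a (k+5) * (V.z (k+3) (k+4) * t) = V.z (k+3) (k+4) * (V.z a (k+5) * t) := by
  intro s
  have E := V.hSL (k+4) (k+3) (k+4) a (by omega)
  rw [zP_ne V.z (show a ≠ k+4 by omega) (show (k+3:ℕ) ≠ k+4 by omega),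
    zP_snd V.z (show a ≠ k+4 by omega),
    zP_snd V.z (show (k+3:ℕ) ≠ k+4 by omega),
    sh_lt (show a < k+4 by omega), sh_lt (show k+3 < k+4 by omega)] at E
  simp only [show k+4+1 = k+5 from rfl, mul_assoc] at E
  have E1 := E ((V.z a (k+3))⁻¹ * ((V.z a (k+4))⁻¹ * s))
  rw [← V.c5 a (by omega)] at E1
  rw [V.lp1 a (by omega)] at E1
  rw [V.hlng (k+3) (k+4) a (by omega)] at E1
  rw [mul_inv_cancel_left, mul_inv_cancel_left] at E1
  exact mul_left_cancel E1
/-- c2 : `λ_{a,N}` commutes with `λ_{q,p}`. -/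
lemma c2 (a : ℕ) (h : 1 ≤ a ∧ a ≤ k+2) :
    ∀ t, V.z a (k+5) * (V.z (k+4) (k+3) * t) = V.z (k+4) (k+3) * (V.z a (k+5) * t) := by
  intro s
  have E := V.hSL (k+4) (k+4) (k+3) a (by omega)
  rw [zP_snd V.z (show a ≠ k+4 by omega),
    zP_ne V.z (show a ≠ k+4 by omega) (show (k+3:ℕ) ≠ k+4 by omega),
    zP_fst V.z,
    sh_lt (show a < k+4 by omega), sh_lt (show k+3 < k+4 by omega)] at E
  simp only [show k+4+1 = k+5 from rfl, mul_assoc] at E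
  have E1 := E ((V.z a (k+4))⁻¹ * ((V.z (k+5) (k+3))⁻¹ * ((V.z a (k+3))⁻¹ * s)))
  rw [V.hlng (k+4) (k+3) a (by omega)] at E1
  rw [← V.c7 a (by omega)] at E1
  rw [← V.lp2 a (by omega)] at E1
  rw [mul_inv_cancel_left, mul_inv_cancel_left, mul_inv_cancel_left] at E1
  exact E1

/-- c3 : `λ_{N,a}` commutes with `λ_{p,q}`. -/
lemma c3 (a : ℕ) (h : 1 ≤ a ∧ a ≤ k+2) :
    ∀ t, V.z (k+5) a * (V.z (k+3) (k+4) * t) = V.z (k+3) (k+4) * (V.z (k+5) a * t) := by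
  intro s
  have E := V.hSL (k+4) (k+4) a (k+3) (by omega)
  rw [zP_snd V.z (show (k+3:ℕ) ≠ k+4 by omega),
    zP_ne V.z (show (k+3:ℕ) ≠ k+4 by omega) (show a ≠ k+4 by omega),
    zP_fst V.z,
    sh_lt (show a < k+4 by omega), sh_lt (show k+3 < k+4 by omega)] at E
  simp only [show k+4+1 = k+5 from rfl, mul_assoc] at E
  have E1 := E s
  rw [V.hlng (k+4) a (k+3) (by omega)] at E1
  rw [V.c6 a (by omega)] at E1
  rw [← V.lp4 a (by omega)] at E1
  exact (mul_left_cancel (mul_left_cancel (mul_left_cancel E1))).symm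

/-- c4 : `λ_{N,a}` commutes with `λ_{q,p}`. -/
lemma c4 (a : ℕ) (h : 1 ≤ a ∧ a ≤ k+2) :
    ∀ t, V.z (k+5) a * (V.z (k+4) (k+3) * t) = V.z (k+4) (k+3) * (V.z (k+5) a * t) := by
  intro s
  have E := V.hSL (k+4) (k+3) a (k+4) (by omega)
  rw [zP_fst V.z, zP_fst V.z,
    zP_ne V.z (show (k+3:ℕ) ≠ k+4 by omega) (show a ≠ k+4 by omega),
    sh_lt (show a < k+4 by omega), sh_lt (show k+3 < k+4 by omega)] at E
  simp only [show k+4+1 = k+5 from rfl, mul_assoc] at E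
  have E1 := E ((V.z (k+5) (k+3))⁻¹ * s)
  rw [V.c8 a (by omega)] at E1
  rw [V.lp6 a (by omega)] at E1
  rw [V.hlng (k+3) a (k+4) (by omega)] at E1
  rw [mul_inv_cancel_left] at E1
  exact (mul_left_cancel (mul_left_cancel E1)).symm

end VD
end Lifting

namespace Lifting
namespace VD

variable {G : Type*} [Group G] {k : ℕ} (V : VD G k)

/-- `λ_{x,N}` commutes with `λ_{u,v}` for any admissible `x,u,v ≤ n`. -/
lemma NC1 (x u v : ℕ)
    (h : 1 ≤ x ∧ x ≤ k+4 ∧ 1 ≤ u ∧ u ≤ k+4 ∧ 1 ≤ v ∧ v ≤ k+4 ∧ x ≠ u ∧ x ≠ v ∧ u ≠ v) :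
    ∀ t, V.z x (k+5) * (V.z u v * t) = V.z u v * (V.z x (k+5) * t) := by
  by_cases hx4 : x = k+4
  · subst hx4; exact V.M1 u v (by omega)
  · by_cases hu : u = k+4
    · subst hu
      by_cases hv3 : v = k+3
      · subst hv3; exact V.c2 x (by omega)
      · by_cases hx3 : x = k+3
        · subst hx3; exact V.c6 v (by omega)
        · exact V.L1b x v (by omega)
    · by_cases hv : v = k+4
      · subst hv
        by_cases hu3 : u = k+3
        · subst hu3; exact V.c1 x (by omega)
        · by_cases hx3 : x = k+3
          · subst hx3; exact V.c5 u (by omega)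
          · exact V.L1a x u (by omega)
      · exact V.L0a x u v (by omega)

/-- `λ_{N,x}` commutes with `λ_{u,v}` for any admissible `x,u,v ≤ n`. -/
lemma NC2 (x u v : ℕ)
    (h : 1 ≤ x ∧ x ≤ k+4 ∧ 1 ≤ u ∧ u ≤ k+4 ∧ 1 ≤ v ∧ v ≤ k+4 ∧ x ≠ u ∧ x ≠ v ∧ u ≠ v) :
    ∀ t, V.z (k+5) x * (V.z u v * t) = V.z u v * (V.z (k+5) x * t) := by
  by_cases hx4 : x = k+4
  · subst hx4; exact V.M2 u v (by omega)
  · by_cases hu : u = k+4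
    · subst hu
      by_cases hv3 : v = k+3
      · subst hv3; exact V.c4 x (by omega)
      · by_cases hx3 : x = k+3
        · subst hx3; exact V.c8 v (by omega)
        · exact V.L1d x v (by omega)
    · by_cases hv : v = k+4
      · subst hv
        by_cases hu3 : u = k+3
        · subst hu3; exact V.c3 x (by omega)
        · by_cases hx3 : x = k+3
          · subst hx3; exact V.c7 u (by omega)
          · exact V.L1c x u (by omega)
      · exact V.L0b x u v (by omega)

/-- Master commutation lemma: all commutation relations of `VP_{n+1}` hold. -/
lemma masterC (a b c d : ℕ)
    (h : 1 ≤ a ∧ a ≤ k+5 ∧ 1 ≤ b ∧ b ≤ k+5 ∧ 1 ≤ c ∧ c ≤ k+5 ∧ 1 ≤ d ∧ d ≤ k+5 ∧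
      a ≠ b ∧ a ≠ c ∧ a ≠ d ∧ b ≠ c ∧ b ≠ d ∧ c ≠ d) :
    ∀ t, V.z a b * (V.z c d * t) = V.z c d * (V.z a b * t) := by
  by_cases hb : b = k+5
  · subst hb; exact V.NC1 a c d (by omega)
  · by_cases ha : a = k+5
    · subst ha; exact V.NC2 b c d (by omega)
    · by_cases hd : d = k+5
      · subst hd; exact fun t => (V.NC1 c a b (by omega) t).symm
      · by_cases hc : c = k+5
        · subst hc; exact fun t => (V.NC2 d a b (by omega) t).symm
        · exact V.hcom a b c d (by omega)

/-- Master long-relation lemma: all long relations of `VP_{n+1}` hold. -/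
lemma masterL (i j l : ℕ)
    (h : 1 ≤ i ∧ i ≤ k+5 ∧ 1 ≤ j ∧ j ≤ k+5 ∧ 1 ≤ l ∧ l ≤ k+5 ∧ i ≠ j ∧ i ≠ l ∧ j ≠ l) :
    ∀ t, V.z l i * (V.z l j * (V.z i j * t)) = V.z i j * (V.z l j * (V.z l i * t)) := by
  by_cases hl : l = k+5
  · subst hl
    by_cases hi4 : i = k+4
    · subst hi4
      by_cases hj3 : j = k+3
      · subst hj3; exact V.qn6
      · exact V.mq6 j (by omega)
    · by_cases hj4 : j = k+4
      · subst hj4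
        by_cases hi3 : i = k+3
        · subst hi3; exact V.qn5
        · exact V.mq5 i (by omega)
      · by_cases hi3 : i = k+3
        · subst hi3; exact V.lp6 j (by omega)
        · by_cases hj3 : j = k+3
          · subst hj3; exact V.lp5 i (by omega)
          · exact V.L3a i j (by omega)
  · by_cases hi : i = k+5
    · subst hi
      by_cases hl4 : l = k+4
      · subst hl4
        by_cases hj3 : j = k+3
        · subst hj3; exact V.qn4
        · exact V.mq4 j (by omega)
      · by_cases hj4 : j = k+4
        · subst hj4
          by_cases hl3 : l = k+3
          · subst hl3; exact V.qn2
          · exact V.mq2 l (by omega)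
        · by_cases hl3 : l = k+3
          · subst hl3; exact V.lp4 j (by omega)
          · by_cases hj3 : j = k+3
            · subst hj3; exact V.lp2 l (by omega)
            · exact V.L3c j l (by omega)
    · by_cases hj : j = k+5
      · subst hj
        by_cases hl4 : l = k+4
        · subst hl4
          by_cases hi3 : i = k+3
          · subst hi3; exact V.qn3
          · exact V.mq3 i (by omega)
        · by_cases hi4 : i = k+4
          · subst hi4
            by_cases hl3 : l = k+3
            · subst hl3; exact V.qn1
            · exact V.mq1 l (by omega)
          · by_cases hl3 : l = k+3
            · subst hl3; exact V.lp3 i (by omega)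
            · by_cases hi3 : i = k+3
              · subst hi3; exact V.lp1 l (by omega)
              · exact V.L3b i l (by omega)
      · exact V.hlng i j l (by omega)

end VD
end Lifting

namespace Lifting

lemma sh_one_le {m x : ℕ} (h : 1 ≤ x) : 1 ≤ sh m x := by unfold sh; split_ifs <;> omega
lemma sh_le5 {k m x : ℕ} (h : x ≤ k+4) : sh m x ≤ k+5 := by unfold sh; split_ifs <;> omega
lemma sh_ne {m x y : ℕ} (h : x ≠ y) : sh m x ≠ sh m y := by unfold sh; split_ifs <;> omega
lemma sh_ne_m {m x : ℕ} (h : x ≠ m) : sh m x ≠ m := by unfold sh; split_ifs <;> omega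
lemma sh_ne_m1 {m x : ℕ} (h : x ≠ m) : sh m x ≠ m+1 := by unfold sh; split_ifs <;> omega

section WDsec

variable {G : Type*} [Group G]

/-- Hypotheses available in the quotient of `F_{n+1}` by `R^V(n+1)`, `n = k+4`. -/
structure WD (G : Type*) [Group G] (k : ℕ) where
  z : ℕ → ℕ → G
  hcom : ∀ a b c d : ℕ,
    (1 ≤ a ∧ a ≤ k+5 ∧ 1 ≤ b ∧ b ≤ k+5 ∧ 1 ≤ c ∧ c ≤ k+5 ∧ 1 ≤ d ∧ d ≤ k+5 ∧
      a ≠ b ∧ a ≠ c ∧ a ≠ d ∧ b ≠ c ∧ b ≠ d ∧ c ≠ d) →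
    ∀ t, z a b * (z c d * t) = z c d * (z a b * t)
  hlng : ∀ i j l : ℕ,
    (1 ≤ i ∧ i ≤ k+5 ∧ 1 ≤ j ∧ j ≤ k+5 ∧ 1 ≤ l ∧ l ≤ k+5 ∧ i ≠ j ∧ i ≠ l ∧ j ≠ l) →
    ∀ t, z l i * (z l j * (z i j * t)) = z i j * (z l j * (z l i * t))

namespace WD

variable {k : ℕ} (W : WD G k)

/-- `λ_{m,b'}λ_{m+1,b'}` commutes with `λ_{c',d'}` in `VP_{n+1}`. -/
lemma fstC (m b c d : ℕ)
    (h : 1 ≤ m ∧ m ≤ k+4 ∧ 1 ≤ b ∧ b ≤ k+4 ∧ 1 ≤ c ∧ c ≤ k+4 ∧ 1 ≤ d ∧ d ≤ k+4 ∧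
      b ≠ m ∧ c ≠ m ∧ d ≠ m ∧ b ≠ c ∧ b ≠ d ∧ c ≠ d) :
    ∀ t, (W.z m (sh m b) * W.z (m+1) (sh m b)) * (W.z (sh m c) (sh m d) * t)
        = W.z (sh m c) (sh m d) * ((W.z m (sh m b) * W.z (m+1) (sh m b)) * t) := by
  intro t
  simp only [mul_assoc]
  rw [W.hcom (m+1) (sh m b) (sh m c) (sh m d)
      ⟨by omega, by omega, sh_one_le (by omega), sh_le5 (by omega), sh_one_le (by omega),
        sh_le5 (by omega), sh_one_le (by omega), sh_le5 (by omega),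
        (sh_ne_m1 (show b ≠ m by omega)).symm, (sh_ne_m1 (show c ≠ m by omega)).symm,
        (sh_ne_m1 (show d ≠ m by omega)).symm,
        sh_ne (by omega), sh_ne (by omega), sh_ne (by omega)⟩]
  rw [W.hcom m (sh m b) (sh m c) (sh m d)
      ⟨by omega, by omega, sh_one_le (by omega), sh_le5 (by omega), sh_one_le (by omega),
        sh_le5 (by omega), sh_one_le (by omega), sh_le5 (by omega),
        (sh_ne_m (show b ≠ m by omega)).symm, (sh_ne_m (show c ≠ m by omega)).symm,
        (sh_ne_m (show d ≠ m by omega)).symm,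
        sh_ne (by omega), sh_ne (by omega), sh_ne (by omega)⟩]

/-- `λ_{a',m+1}λ_{a',m}` commutes with `λ_{c',d'}` in `VP_{n+1}`. -/
lemma sndC (m a c d : ℕ)
    (h : 1 ≤ m ∧ m ≤ k+4 ∧ 1 ≤ a ∧ a ≤ k+4 ∧ 1 ≤ c ∧ c ≤ k+4 ∧ 1 ≤ d ∧ d ≤ k+4 ∧
      a ≠ m ∧ c ≠ m ∧ d ≠ m ∧ a ≠ c ∧ a ≠ d ∧ c ≠ d) :
    ∀ t, (W.z (sh m a) (m+1) * W.z (sh m a) m) * (W.z (sh m c) (sh m d) * t)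
        = W.z (sh m c) (sh m d) * ((W.z (sh m a) (m+1) * W.z (sh m a) m) * t) := by
  intro t
  simp only [mul_assoc]
  rw [W.hcom (sh m a) m (sh m c) (sh m d)
      ⟨sh_one_le (by omega), sh_le5 (by omega), by omega, by omega, sh_one_le (by omega),
        sh_le5 (by omega), sh_one_le (by omega), sh_le5 (by omega),
        sh_ne_m (by omega), sh_ne (by omega), sh_ne (by omega),
        (sh_ne_m (show c ≠ m by omega)).symm, (sh_ne_m (show d ≠ m by omega)).symm,
        sh_ne (by omega)⟩]
  rw [W.hcom (sh m a) (m+1) (sh m c) (sh m d)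
      ⟨sh_one_le (by omega), sh_le5 (by omega), by omega, by omega, sh_one_le (by omega),
        sh_le5 (by omega), sh_one_le (by omega), sh_le5 (by omega),
        sh_ne_m1 (by omega), sh_ne (by omega), sh_ne (by omega),
        (sh_ne_m1 (show c ≠ m by omega)).symm, (sh_ne_m1 (show d ≠ m by omega)).symm,
        sh_ne (by omega)⟩]

/-- Direction 1 for commutation relators: the split image of a commutation relator
holds in `VP_{n+1}`. -/
lemma d1C (m a b c d : ℕ)
    (h : 1 ≤ m ∧ m ≤ k+4 ∧ 1 ≤ a ∧ a ≤ k+4 ∧ 1 ≤ b ∧ b ≤ k+4 ∧ 1 ≤ c ∧ c ≤ k+4 ∧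
      1 ≤ d ∧ d ≤ k+4 ∧ a ≠ b ∧ a ≠ c ∧ a ≠ d ∧ b ≠ c ∧ b ≠ d ∧ c ≠ d) :
    ∀ t, zP W.z m a b * (zP W.z m c d * t) = zP W.z m c d * (zP W.z m a b * t) := by
  by_cases ham : a = m
  · subst ham
    rw [zP_fst W.z, zP_ne W.z (show c ≠ a by omega) (show d ≠ a by omega)]
    exact W.fstC a b c d (by omega)
  · by_cases hbm : b = m
    · subst hbm
      rw [zP_snd W.z (show a ≠ b by omega), zP_ne W.z (show c ≠ b by omega) (show d ≠ b by omega)]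
      exact W.sndC b a c d (by omega)
    · by_cases hcm : c = m
      · subst hcm
        rw [zP_fst W.z, zP_ne W.z (show a ≠ c by omega) (show b ≠ c by omega)]
        exact fun t => (W.fstC c d a b (by omega) t).symm
      · by_cases hdm : d = m
        · subst hdm
          rw [zP_snd W.z (show c ≠ d by omega),
            zP_ne W.z (show a ≠ d by omega) (show b ≠ d by omega)]
          exact fun t => (W.sndC d c a b (by omega) t).symm
        · rw [zP_ne W.z (show a ≠ m by omega) (show b ≠ m by omega),
            zP_ne W.z (show c ≠ m by omega) (show d ≠ m by omega)]
          exact W.hcom (sh m a) (sh m b) (sh m c) (sh m d)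
            ⟨sh_one_le (by omega), sh_le5 (by omega), sh_one_le (by omega), sh_le5 (by omega),
              sh_one_le (by omega), sh_le5 (by omega), sh_one_le (by omega), sh_le5 (by omega),
              sh_ne (by omega), sh_ne (by omega), sh_ne (by omega), sh_ne (by omega),
              sh_ne (by omega), sh_ne (by omega)⟩

end WD
end WDsec
end Lifting

namespace Lifting
namespace WD

variable {G : Type*} [Group G] {k : ℕ} (W : WD G k)

/-- Direction 1 for long relators: the split image of a long relator holds in `VP_{n+1}`. -/
lemma d1L (m i j l : ℕ)
    (h : 1 ≤ m ∧ m ≤ k+4 ∧ 1 ≤ i ∧ i ≤ k+4 ∧ 1 ≤ j ∧ j ≤ k+4 ∧ 1 ≤ l ∧ l ≤ k+4 ∧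
      i ≠ j ∧ i ≠ l ∧ j ≠ l) :
    ∀ t, zP W.z m l i * (zP W.z m l j * (zP W.z m i j * t))
        = zP W.z m i j * (zP W.z m l j * (zP W.z m l i * t)) := by
  have hb1 : ∀ x : ℕ, 1 ≤ x → 1 ≤ sh m x := fun x hx => sh_one_le hx
  by_cases hlm : l = m
  · -- splitting the strand `l` (the `k` of the long relation)
    subst hlm
    rw [zP_fst W.z, zP_fst W.z, zP_ne W.z (show i ≠ l by omega) (show j ≠ l by omega)]
    intro t
    simp only [mul_assoc]
    rw [W.hcom (l+1) (sh l i) (l) (sh l j)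
      ⟨by omega, by omega, sh_one_le (by omega), sh_le5 (by omega), by omega, by omega,
        sh_one_le (by omega), sh_le5 (by omega),
        (sh_ne_m1 (show i ≠ l by omega)).symm, by omega, (sh_ne_m1 (show j ≠ l by omega)).symm,
        sh_ne_m (by omega), sh_ne (by omega), (sh_ne_m (show j ≠ l by omega)).symm⟩]
    rw [W.hlng (sh l i) (sh l j) (l+1)
      ⟨sh_one_le (by omega), sh_le5 (by omega), sh_one_le (by omega), sh_le5 (by omega),
        by omega, by omega, sh_ne (by omega), sh_ne_m1 (by omega), sh_ne_m1 (by omega)⟩]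
    rw [W.hlng (sh l i) (sh l j) l
      ⟨sh_one_le (by omega), sh_le5 (by omega), sh_one_le (by omega), sh_le5 (by omega),
        by omega, by omega, sh_ne (by omega), sh_ne_m (by omega), sh_ne_m (by omega)⟩]
    rw [W.hcom l (sh l i) (l+1) (sh l j)
      ⟨by omega, by omega, sh_one_le (by omega), sh_le5 (by omega), by omega, by omega,
        sh_one_le (by omega), sh_le5 (by omega),
        (sh_ne_m (show i ≠ l by omega)).symm, by omega, (sh_ne_m (show j ≠ l by omega)).symm,
        sh_ne_m1 (by omega), sh_ne (by omega), (sh_ne_m1 (show j ≠ l by omega)).symm⟩]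
  · by_cases him : i = m
    · -- splitting the strand `i`
      subst him
      rw [zP_snd W.z (show l ≠ i by omega), zP_fst W.z,
        zP_ne W.z (show l ≠ i by omega) (show j ≠ i by omega)]
      intro t
      simp only [mul_assoc]
      rw [W.hlng i (sh i j) (sh i l)
        ⟨by omega, by omega, sh_one_le (by omega), sh_le5 (by omega), sh_one_le (by omega),
          sh_le5 (by omega), (sh_ne_m (show j ≠ i by omega)).symm, (sh_ne_m (show l ≠ i by omega)).symm,
          sh_ne (by omega)⟩]
      rw [W.hcom (sh i l) (i+1) i (sh i j)
        ⟨sh_one_le (by omega), sh_le5 (by omega), by omega, by omega, by omega, by omega,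
          sh_one_le (by omega), sh_le5 (by omega),
          sh_ne_m1 (by omega), sh_ne_m (by omega), sh_ne (by omega), by omega,
          (sh_ne_m1 (show j ≠ i by omega)).symm, (sh_ne_m (show j ≠ i by omega)).symm⟩]
      rw [W.hcom (sh i l) i (i+1) (sh i j)
        ⟨sh_one_le (by omega), sh_le5 (by omega), by omega, by omega, by omega, by omega,
          sh_one_le (by omega), sh_le5 (by omega),
          sh_ne_m (by omega), sh_ne_m1 (by omega), sh_ne (by omega), by omega,
          (sh_ne_m (show j ≠ i by omega)).symm, (sh_ne_m1 (show j ≠ i by omega)).symm⟩]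
      rw [W.hlng (i+1) (sh i j) (sh i l)
        ⟨by omega, by omega, sh_one_le (by omega), sh_le5 (by omega), sh_one_le (by omega),
          sh_le5 (by omega), (sh_ne_m1 (show j ≠ i by omega)).symm,
          (sh_ne_m1 (show l ≠ i by omega)).symm, sh_ne (by omega)⟩]
    · by_cases hjm : j = m
      · -- splitting the strand `j`
        subst hjm
        rw [zP_ne W.z (show l ≠ j by omega) (show i ≠ j by omega),
          zP_snd W.z (show l ≠ j by omega), zP_snd W.z (show i ≠ j by omega)]
        intro t
        simp only [mul_assoc]
        rw [W.hcom (sh j l) j (sh j i) (j+1)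
          ⟨sh_one_le (by omega), sh_le5 (by omega), by omega, by omega, sh_one_le (by omega),
            sh_le5 (by omega), by omega, by omega,
            sh_ne_m (by omega), sh_ne (by omega), sh_ne_m1 (by omega),
            (sh_ne_m (show i ≠ j by omega)).symm, by omega,
            sh_ne_m1 (show i ≠ j by omega)⟩]
        rw [W.hlng (sh j i) (j+1) (sh j l)
          ⟨sh_one_le (by omega), sh_le5 (by omega), by omega, by omega, sh_one_le (by omega),
            sh_le5 (by omega), sh_ne_m1 (by omega), sh_ne (by omega), (sh_ne_m1 (show l ≠ j by omega)).symm⟩]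
        rw [W.hlng (sh j i) j (sh j l)
          ⟨sh_one_le (by omega), sh_le5 (by omega), by omega, by omega, sh_one_le (by omega),
            sh_le5 (by omega), sh_ne_m (by omega), sh_ne (by omega), (sh_ne_m (show l ≠ j by omega)).symm⟩]
        rw [W.hcom (sh j l) (j+1) (sh j i) j
          ⟨sh_one_le (by omega), sh_le5 (by omega), by omega, by omega, sh_one_le (by omega),
            sh_le5 (by omega), by omega, by omega,
            sh_ne_m1 (by omega), sh_ne (by omega), sh_ne_m (by omega),
            (sh_ne_m1 (show i ≠ j by omega)).symm, by omega,
            sh_ne_m (show i ≠ j by omega)⟩]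
      · -- `m` not involved
        rw [zP_ne W.z (show l ≠ m by omega) (show i ≠ m by omega),
          zP_ne W.z (show l ≠ m by omega) (show j ≠ m by omega),
          zP_ne W.z (show i ≠ m by omega) (show j ≠ m by omega)]
        exact W.hlng (sh m i) (sh m j) (sh m l)
          ⟨sh_one_le (by omega), sh_le5 (by omega), sh_one_le (by omega), sh_le5 (by omega),
            sh_one_le (by omega), sh_le5 (by omega), sh_ne (by omega), sh_ne (by omega),
            sh_ne (by omega)⟩

end WD
end Lifting

namespace Lifting

lemma RV_mono {m : ℕ} : RV m ⊆ RV (m+1) := by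
  rintro r (⟨a, b, c, d, h1, h2, h3, h4, h5, h6, h7, h8, h9, h10, h11, h12, h13, h14, rfl⟩ |
    ⟨i, j, l, h1, h2, h3, h4, h5, h6, h7, h8, h9, rfl⟩)
  · exact Or.inl ⟨a, b, c, d, by omega, by omega, by omega, by omega, by omega, by omega,
      by omega, by omega, h9, h10, h11, h12, h13, h14, rfl⟩
  · exact Or.inr ⟨i, j, l, by omega, by omega, by omega, by omega, by omega, by omega,
      h7, h8, h9, rfl⟩

/-- the image of the generator `λ_{a,b}` in the quotient by a normal subgroup -/
def qz (K : Subgroup FG) [K.Normal] (a b : ℕ) : FG ⧸ K :=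
  QuotientGroup.mk' K (lam a b)

end Lifting


/-- Lifting theorem: for every `n ≥ 4`, the set
`R^V(n) ∪ ⋃_{i=0}^{n-1} S_i(R^V(n))` has the same normal closure in `F_{n+1}`
as `R^V(n+1)`; i.e. it is a full set of defining relations for `VP_{n+1}`. -/
theorem lifting_theorem (n : ℕ) (hn : 4 ≤ n) :
    Subgroup.normalClosure (RV n ∪ ⋃ i ∈ Finset.range n, (Smap i) '' (RV n))
      = Subgroup.normalClosure (RV (n + 1)) := by
  open Lifting in
  obtain ⟨k, rfl⟩ : ∃ k, n = k + 4 := ⟨n - 4, by omega⟩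
  apply le_antisymm
  · -- `ncl(A) ≤ ncl(R^V(n+1))`
    apply Subgroup.normalClosure_le_normal
    set K := Subgroup.normalClosure (RV (k + 4 + 1)) with hK
    have hφ : ∀ w ∈ RV (k + 4 + 1), (QuotientGroup.mk' K) w = 1 := fun w hw =>
      (QuotientGroup.eq_one_iff w).mpr (Subgroup.subset_normalClosure hw)
    have hcomW : ∀ a b c d : ℕ,
        (1 ≤ a ∧ a ≤ k+5 ∧ 1 ≤ b ∧ b ≤ k+5 ∧ 1 ≤ c ∧ c ≤ k+5 ∧ 1 ≤ d ∧ d ≤ k+5 ∧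
          a ≠ b ∧ a ≠ c ∧ a ≠ d ∧ b ≠ c ∧ b ≠ d ∧ c ≠ d) →
        ∀ t, qz K a b * (qz K c d * t) = qz K c d * (qz K a b * t) := by
      intro a b c d hcond
      refine comm_cont ?_
      have h1 := hφ _ (Or.inl (⟨a, b, c, d, by omega, by omega, by omega, by omega,
        by omega, by omega, by omega, by omega, by omega, by omega, by omega, by omega,
        by omega, by omega, rfl⟩ : _ ∈ CR (k+4+1)))
      simpa only [map_mul, map_inv, qz] using h1
    have hlngW : ∀ i j l : ℕ,
        (1 ≤ i ∧ i ≤ k+5 ∧ 1 ≤ j ∧ j ≤ k+5 ∧ 1 ≤ l ∧ l ≤ k+5 ∧ i ≠ j ∧ i ≠ l ∧ j ≠ l) →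
        ∀ t, qz K l i * (qz K l j * (qz K i j * t))
            = qz K i j * (qz K l j * (qz K l i * t)) := by
      intro i j l hcond
      refine long_cont ?_
      have h1 := hφ _ (Or.inr (⟨i, j, l, by omega, by omega, by omega, by omega,
        by omega, by omega, by omega, by omega, by omega, rfl⟩ : _ ∈ LongR (k+4+1)))
      simpa only [map_mul, map_inv, qz] using h1
    rintro r (hr | hr)
    · exact Subgroup.subset_normalClosure (RV_mono hr)
    · simp only [Set.mem_iUnion, Finset.mem_range] at hr
      obtain ⟨i, hi, r0, hr0, rfl⟩ := hr
      have key : (QuotientGroup.mk' K) (Smap i r0) = 1 := by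
        rcases hr0 with ⟨a, b, c, d, h1, h2, h3, h4, h5, h6, h7, h8, h9, h10, h11, h12,
            h13, h14, rfl⟩ |
          ⟨a, b, l, h1, h2, h3, h4, h5, h6, h7, h8, h9, rfl⟩
        · simp only [map_mul, map_inv]
          rw [phi_Smap _ i a b (by omega), phi_Smap _ i c d (by omega)]
          exact eq_one_of_comm
            ((⟨qz K, hcomW, hlngW⟩ : WD (FG ⧸ K) k).d1C (i+1) a b c d (by omega))
        · simp only [map_mul, map_inv]
          rw [phi_Smap _ i l a (by omega), phi_Smap _ i l b (by omega),
            phi_Smap _ i a b (by omega)]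
          exact eq_one_of_long
            ((⟨qz K, hcomW, hlngW⟩ : WD (FG ⧸ K) k).d1L (i+1) a b l (by omega))
      exact (QuotientGroup.eq_one_iff _).mp key
  · -- `ncl(R^V(n+1)) ≤ ncl(A)`
    apply Subgroup.normalClosure_le_normal
    set K := Subgroup.normalClosure (RV (k+4) ∪ ⋃ i ∈ Finset.range (k+4), (Smap i) '' (RV (k+4)))
      with hK
    have hφ : ∀ w ∈ RV (k+4) ∪ ⋃ i ∈ Finset.range (k+4), (Smap i) '' (RV (k+4)),
        (QuotientGroup.mk' K) w = 1 := fun w hw =>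
      (QuotientGroup.eq_one_iff w).mpr (Subgroup.subset_normalClosure hw)
    have hcomV : ∀ a b c d : ℕ,
        (1 ≤ a ∧ a ≤ k+4 ∧ 1 ≤ b ∧ b ≤ k+4 ∧ 1 ≤ c ∧ c ≤ k+4 ∧ 1 ≤ d ∧ d ≤ k+4 ∧
          a ≠ b ∧ a ≠ c ∧ a ≠ d ∧ b ≠ c ∧ b ≠ d ∧ c ≠ d) →
        ∀ t, qz K a b * (qz K c d * t) = qz K c d * (qz K a b * t) := by
      intro a b c d hcond
      refine comm_cont ?_
      have h1 := hφ _ (Or.inl (Or.inl (⟨a, b, c, d, by omega, by omega, by omega, by omega,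
        by omega, by omega, by omega, by omega, by omega, by omega, by omega, by omega,
        by omega, by omega, rfl⟩ : _ ∈ CR (k+4))))
      simpa only [map_mul, map_inv, qz] using h1
    have hlngV : ∀ i j l : ℕ,
        (1 ≤ i ∧ i ≤ k+4 ∧ 1 ≤ j ∧ j ≤ k+4 ∧ 1 ≤ l ∧ l ≤ k+4 ∧ i ≠ j ∧ i ≠ l ∧ j ≠ l) →
        ∀ t, qz K l i * (qz K l j * (qz K i j * t))
            = qz K i j * (qz K l j * (qz K l i * t)) := by
      intro i j l hcond
      refine long_cont ?_
      have h1 := hφ _ (Or.inl (Or.inr (⟨i, j, l, by omega, by omega, by omega, by omega,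
        by omega, by omega, by omega, by omega, by omega, rfl⟩ : _ ∈ LongR (k+4))))
      simpa only [map_mul, map_inv, qz] using h1
    have hSCV : ∀ m a b c d : ℕ,
        (1 ≤ m ∧ m ≤ k+4 ∧ 1 ≤ a ∧ a ≤ k+4 ∧ 1 ≤ b ∧ b ≤ k+4 ∧ 1 ≤ c ∧ c ≤ k+4 ∧
          1 ≤ d ∧ d ≤ k+4 ∧ a ≠ b ∧ a ≠ c ∧ a ≠ d ∧ b ≠ c ∧ b ≠ d ∧ c ≠ d) →
        ∀ t, zP (qz K) m a b * (zP (qz K) m c d * t)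
            = zP (qz K) m c d * (zP (qz K) m a b * t) := by
      intro m a b c d hcond
      have hmem : lam a b * lam c d * (lam a b)⁻¹ * (lam c d)⁻¹ ∈ RV (k+4) :=
        Or.inl ⟨a, b, c, d, by omega, by omega, by omega, by omega, by omega, by omega,
          by omega, by omega, by omega, by omega, by omega, by omega, by omega, by omega, rfl⟩
      have hu : Smap (m-1) (lam a b * lam c d * (lam a b)⁻¹ * (lam c d)⁻¹) ∈
          ⋃ i ∈ Finset.range (k+4), (Smap i) '' (RV (k+4)) := by
        refine Set.mem_iUnion₂.mpr ⟨m-1, ?_, ⟨_, hmem, rfl⟩⟩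
        simp only [Finset.mem_range]; omega
      have h1 := hφ _ (Or.inr hu)
      simp only [map_mul, map_inv] at h1
      rw [phi_Smap _ (m-1) a b (by omega), phi_Smap _ (m-1) c d (by omega),
        show m-1+1 = m by omega] at h1
      exact comm_cont h1
    have hSLV : ∀ m i j l : ℕ,
        (1 ≤ m ∧ m ≤ k+4 ∧ 1 ≤ i ∧ i ≤ k+4 ∧ 1 ≤ j ∧ j ≤ k+4 ∧ 1 ≤ l ∧ l ≤ k+4 ∧
          i ≠ j ∧ i ≠ l ∧ j ≠ l) →
        ∀ t, zP (qz K) m l i * (zP (qz K) m l j * (zP (qz K) m i j * t))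
            = zP (qz K) m i j * (zP (qz K) m l j * (zP (qz K) m l i * t)) := by
      intro m i j l hcond
      have hmem : lam l i * lam l j * lam i j * (lam l i)⁻¹ * (lam l j)⁻¹ * (lam i j)⁻¹
          ∈ RV (k+4) :=
        Or.inr ⟨i, j, l, by omega, by omega, by omega, by omega, by omega, by omega,
          by omega, by omega, by omega, rfl⟩
      have hu : Smap (m-1) (lam l i * lam l j * lam i j * (lam l i)⁻¹ * (lam l j)⁻¹ *
          (lam i j)⁻¹) ∈ ⋃ i ∈ Finset.range (k+4), (Smap i) '' (RV (k+4)) := by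
        refine Set.mem_iUnion₂.mpr ⟨m-1, ?_, ⟨_, hmem, rfl⟩⟩
        simp only [Finset.mem_range]; omega
      have h1 := hφ _ (Or.inr hu)
      simp only [map_mul, map_inv] at h1
      rw [phi_Smap _ (m-1) l i (by omega), phi_Smap _ (m-1) l j (by omega),
        phi_Smap _ (m-1) i j (by omega), show m-1+1 = m by omega] at h1
      exact long_cont h1
    intro r hr
    have key : (QuotientGroup.mk' K) r = 1 := by
      rcases hr with ⟨a, b, c, d, h1, h2, h3, h4, h5, h6, h7, h8, h9, h10, h11, h12,
          h13, h14, rfl⟩ |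
        ⟨a, b, l, h1, h2, h3, h4, h5, h6, h7, h8, h9, rfl⟩
      · simp only [map_mul, map_inv]
        exact eq_one_of_comm
          ((⟨qz K, hcomV, hlngV, hSCV, hSLV⟩ : VD (FG ⧸ K) k).masterC a b c d (by omega))
      · simp only [map_mul, map_inv]
        exact eq_one_of_long
          ((⟨qz K, hcomV, hlngV, hSCV, hSLV⟩ : VD (FG ⧸ K) k).masterL a b l (by omega))
    exact (QuotientGroup.eq_one_iff _).mp key
end

section
/- In the free group F_4, each of the six long relators with indices in {1,2,4}, i.e. the set R_{1,2,4} corresponding to the relations λ_{1,2}λ_{1,4}λ_{2,4}=λ_{2,4}λ_{1,4}λ_{1,2}, λ_{2,1}λ_{2,4}λ_{1,4}=λ_{1,4}λ_{2,4}λ_{2,1}, λ_{1,4}λ_{1,2}λ_{4,2}=λ_{4,2}λ_{1,2}λ_{1,4}, λ_{4,1}λ_{4,2}λ_{1,2}=λ_{1,2}λ_{4,2}λ_{4,1}, λ_{2,4}λ_{2,1}λ_{4,1}=λ_{4,1}λ_{2,1}λ_{2,4}, λ_{4,2}λ_{4,1}λ_{2,1}=λ_{2,1}λ_{4,1}λ_{4,2},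 lies in the normal closure of R^V(3) ∪ S_2(R^V(3)) ∪ CR(4), where R^V(3) ⊆ F_4 via the canonical inclusion F_3 → F_4. -/
namespace R124aux

/-- The relator set. -/
abbrev RelS : Set FG := RV 3 ∪ (Smap 2) '' (RV 3) ∪ CR 4

/-- Its normal closure. -/
abbrev NN : Subgroup FG := Subgroup.normalClosure RelS

/-- Projection onto the quotient. -/
def pp : FG →* (FG ⧸ NN) := QuotientGroup.mk' NN

lemma mem_NN {w : FG} (h : pp w = 1) : w ∈ NN := (QuotientGroup.eq_one_iff w).mp h

lemma pp_rel {r : FG} (h : r ∈ RelS) : pp r = 1 :=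
  (QuotientGroup.eq_one_iff r).mpr (Subgroup.subset_normalClosure h)

section Generic
variable {G : Type*} [Group G]

lemma tripleRel {a b c : G} (h : a * b * c * a⁻¹ * b⁻¹ * c⁻¹ = 1) :
    a * (b * c) = c * (b * a) := by
  calc a * (b * c) = (a * b * c * a⁻¹ * b⁻¹ * c⁻¹) * (c * (b * a)) := by group
  _ = c * (b * a) := by rw [h, one_mul]

lemma commRel {a b : G} (h : a * b * a⁻¹ * b⁻¹ = 1) : a * b = b * a := by
  calc a * b = (a * b * a⁻¹ * b⁻¹) * (b * a) := by group
  _ = b * a := by rw [h, one_mul]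

lemma swap_param {a b : G} (h : a * b = b * a) (t : G) : a * (b * t) = b * (a * t) := by
  rw [← mul_assoc, h, mul_assoc]

lemma swap3 {a b c : G} (h : a * (b * c) = c * (b * a)) (t : G) :
    a * (b * (c * t)) = c * (b * (a * t)) := by
  rw [show a * (b * (c * t)) = (a * (b * c)) * t by group, h]; group

lemma P1 {x y1 y2 z1 z2 : G}
    (hS : x * (y1 * (y2 * (z1 * z2))) = z1 * (z2 * (y1 * (y2 * x))))
    (h3 : x * (y2 * z2) = z2 * (y2 * x))
    (c1 : y2 * z1 = z1 * y2) (c2 : y1 * z2 = z2 * y1) :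
    x * (y1 * z1) = z1 * (y1 * x) := by
  have key : x * (y1 * (z1 * (y2 * z2))) = z1 * (y1 * (x * (y2 * z2))) := by
    rw [← swap_param c1 z2, hS, ← swap_param c2 (y2 * x), ← h3]
  have h2 : (x * (y1 * z1)) * (y2 * z2) = (z1 * (y1 * x)) * (y2 * z2) := by
    simpa only [mul_assoc] using key
  exact mul_right_cancel h2

lemma P2 {x y1 y2 z1 z2 : G}
    (hS : y1 * (y2 * (x * (z1 * z2))) = z1 * (z2 * (x * (y1 * y2))))
    (h3 : y2 * (x * z1) = z1 * (x * y2))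
    (c1 : y2 * z2 = z2 * y2) (c2 : y1 * z1 = z1 * y1) :
    y1 * (x * z2) = z2 * (x * y1) := by
  have key : z1 * (y1 * (x * (z2 * y2))) = z1 * (z2 * (x * (y1 * y2))) := by
    rw [← swap_param c2 (x * (z2 * y2)), ← c1, ← swap3 h3 z2, hS]
  have h2 : y1 * (x * (z2 * y2)) = z2 * (x * (y1 * y2)) := mul_left_cancel key
  have h4 : (y1 * (x * z2)) * y2 = (z2 * (x * y1)) * y2 := by
    simpa only [mul_assoc] using h2
  exact mul_right_cancel h4

lemma P3 {x y1 y2 z1 z2 : G}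
    (hS : y1 * (y2 * (z1 * (z2 * x))) = x * (z1 * (z2 * (y1 * y2))))
    (h3 : y1 * (z1 * x) = x * (z1 * y1))
    (c1 : y2 * z1 = z1 * y2) (c2 : z2 * y1 = y1 * z2) :
    y2 * (z2 * x) = x * (z2 * y2) := by
  have key : y1 * (z1 * (y2 * (z2 * x))) = y1 * (z1 * (x * (z2 * y2))) := by
    rw [← swap_param c1 (z2 * x), hS, swap_param c2 y2, ← swap3 h3 (z2 * y2)]
  exact mul_left_cancel (mul_left_cancel key)

end Generic

lemma mem_long3 (i j k : ℕ)
    (h : 1 ≤ i ∧ i ≤ 3 ∧ 1 ≤ j ∧ j ≤ 3 ∧ 1 ≤ k ∧ k ≤ 3 ∧ i ≠ j ∧ i ≠ k ∧ j ≠ k) :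
    lam k i * lam k j * lam i j * (lam k i)⁻¹ * (lam k j)⁻¹ * (lam i j)⁻¹ ∈ RV 3 := by
  obtain ⟨a, b, c, d, e, f, g, h1, h2⟩ := h
  exact Set.mem_union_right _ ⟨i, j, k, a, b, c, d, e, f, g, h1, h2, rfl⟩

lemma rel_long3 (i j k : ℕ)
    (h : 1 ≤ i ∧ i ≤ 3 ∧ 1 ≤ j ∧ j ≤ 3 ∧ 1 ≤ k ∧ k ≤ 3 ∧ i ≠ j ∧ i ≠ k ∧ j ≠ k) :
    pp (lam k i) * (pp (lam k j) * pp (lam i j))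
      = pp (lam i j) * (pp (lam k j) * pp (lam k i)) := by
  have h1 := pp_rel (Set.mem_union_left _ (Set.mem_union_left _ (mem_long3 i j k h)))
  simp only [map_mul, map_inv] at h1
  exact tripleRel h1

lemma rel_S3 (i j k : ℕ)
    (h : 1 ≤ i ∧ i ≤ 3 ∧ 1 ≤ j ∧ j ≤ 3 ∧ 1 ≤ k ∧ k ≤ 3 ∧ i ≠ j ∧ i ≠ k ∧ j ≠ k) :
    pp (Smap 2 (lam k i)) * (pp (Smap 2 (lam k j)) * pp (Smap 2 (lam i j)))
      = pp (Smap 2 (lam i j)) * (pp (Smap 2 (lam k j)) * pp (Smap 2 (lam k i))) := by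
  have hmem : Smap 2 (lam k i * lam k j * lam i j
      * (lam k i)⁻¹ * (lam k j)⁻¹ * (lam i j)⁻¹) ∈ RelS :=
    Set.mem_union_left _ (Set.mem_union_right _ ⟨_, mem_long3 i j k h, rfl⟩)
  have h1 := pp_rel hmem
  simp only [map_mul, map_inv] at h1
  exact tripleRel h1

lemma rel_comm4 (i j k l : ℕ)
    (h : 1 ≤ i ∧ i ≤ 4 ∧ 1 ≤ j ∧ j ≤ 4 ∧ 1 ≤ k ∧ k ≤ 4 ∧ 1 ≤ l ∧ l ≤ 4 ∧
      i ≠ j ∧ i ≠ k ∧ i ≠ l ∧ j ≠ k ∧ j ≠ l ∧ k ≠ l) :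
    pp (lam i j) * pp (lam k l) = pp (lam k l) * pp (lam i j) := by
  obtain ⟨a, b, c, d, e, f, g, h1, h2, h3, h4, h5, h6, h7⟩ := h
  have hmem : lam i j * lam k l * (lam i j)⁻¹ * (lam k l)⁻¹ ∈ RelS :=
    Set.mem_union_right _ ⟨i, j, k, l, a, b, c, d, e, f, g, h1, h2, h3, h4, h5, h6, h7, rfl⟩
  have hh := pp_rel hmem
  simp only [map_mul, map_inv] at hh
  exact commRel hh

lemma S12 : Smap 2 (lam 1 2) = lam 1 2 := by
  rw [show lam 1 2 = FreeGroup.of (1, 2) from rfl, Smap, FreeGroup.lift_apply_of]; rfl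
lemma S21 : Smap 2 (lam 2 1) = lam 2 1 := by
  rw [show lam 2 1 = FreeGroup.of (2, 1) from rfl, Smap, FreeGroup.lift_apply_of]; rfl
lemma S13 : Smap 2 (lam 1 3) = lam 1 4 * lam 1 3 := by
  rw [show lam 1 3 = FreeGroup.of (1, 3) from rfl, Smap, FreeGroup.lift_apply_of]; rfl
lemma S31 : Smap 2 (lam 3 1) = lam 3 1 * lam 4 1 := by
  rw [show lam 3 1 = FreeGroup.of (3, 1) from rfl, Smap, FreeGroup.lift_apply_of]; rfl
lemma S23 : Smap 2 (lam 2 3) = lam 2 4 * lam 2 3 := by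
  rw [show lam 2 3 = FreeGroup.of (2, 3) from rfl, Smap, FreeGroup.lift_apply_of]; rfl
lemma S32 : Smap 2 (lam 3 2) = lam 3 2 * lam 4 2 := by
  rw [show lam 3 2 = FreeGroup.of (3, 2) from rfl, Smap, FreeGroup.lift_apply_of]; rfl

end R124aux

/-- each of the six long relators of `R_{1,2,4}` lies in the normal
closure in `F_4` of `R^V(3) ∪ S_2(R^V(3)) ∪ CR(4)`. -/
theorem R124_in_normalClosure :
    Rtriple 1 2 4 ⊆
      (Subgroup.normalClosure (RV 3 ∪ (Smap 2) '' (RV 3) ∪ CR 4) : Set FG) := by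
  intro w hw
  simp only [Rtriple, Set.mem_insert_iff, Set.mem_singleton_iff, relOf] at hw
  rcases hw with h | h | h | h | h | h <;> subst h <;>
    refine R124aux.mem_NN ?_ <;>
    rw [map_mul, map_inv, mul_inv_eq_one] <;>
    simp only [map_mul, mul_assoc]
  · have hS := R124aux.rel_S3 2 3 1 (by norm_num)
    rw [R124aux.S12, R124aux.S13, R124aux.S23] at hS
    simp only [map_mul, mul_assoc] at hS
    exact R124aux.P1 hS (R124aux.rel_long3 2 3 1 (by norm_num))
      (R124aux.rel_comm4 1 3 2 4 (by norm_num)) (R124aux.rel_comm4 1 4 2 3 (by norm_num))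
  · have hS := R124aux.rel_S3 1 3 2 (by norm_num)
    rw [R124aux.S21, R124aux.S23, R124aux.S13] at hS
    simp only [map_mul, mul_assoc] at hS
    exact R124aux.P1 hS (R124aux.rel_long3 1 3 2 (by norm_num))
      (R124aux.rel_comm4 2 3 1 4 (by norm_num)) (R124aux.rel_comm4 2 4 1 3 (by norm_num))
  · have hS := R124aux.rel_S3 3 2 1 (by norm_num)
    rw [R124aux.S13, R124aux.S12, R124aux.S32] at hS
    simp only [map_mul, mul_assoc] at hS
    exact R124aux.P2 hS (R124aux.rel_long3 3 2 1 (by norm_num))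
      (R124aux.rel_comm4 1 3 4 2 (by norm_num)) (R124aux.rel_comm4 1 4 3 2 (by norm_num))
  · have hS := R124aux.rel_S3 1 2 3 (by norm_num)
    rw [R124aux.S31, R124aux.S32, R124aux.S12] at hS
    simp only [map_mul, mul_assoc] at hS
    exact R124aux.P3 hS (R124aux.rel_long3 1 2 3 (by norm_num))
      (R124aux.rel_comm4 4 1 3 2 (by norm_num)) (R124aux.rel_comm4 4 2 3 1 (by norm_num))
  · have hS := R124aux.rel_S3 3 1 2 (by norm_num)
    rw [R124aux.S23, R124aux.S21, R124aux.S31] at hS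
    simp only [map_mul, mul_assoc] at hS
    exact R124aux.P2 hS (R124aux.rel_long3 3 1 2 (by norm_num))
      (R124aux.rel_comm4 2 3 4 1 (by norm_num)) (R124aux.rel_comm4 2 4 3 1 (by norm_num))
  · have hS := R124aux.rel_S3 2 1 3 (by norm_num)
    rw [R124aux.S32, R124aux.S31, R124aux.S21] at hS
    simp only [map_mul, mul_assoc] at hS
    exact R124aux.P3 hS (R124aux.rel_long3 2 1 3 (by norm_num))
      (R124aux.rel_comm4 4 2 3 1 (by norm_num)) (R124aux.rel_comm4 4 1 3 2 (by norm_num))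
end

section
/- In the free group F_4, each of the six long relators with indices in {1,3,4}, i.e. the set R_{1,3,4} corresponding to the relations λ_{1,3}λ_{1,4}λ_{3,4}=λ_{3,4}λ_{1,4}λ_{1,3}, λ_{3,1}λ_{3,4}λ_{1,4}=λ_{1,4}λ_{3,4}λ_{3,1}, λ_{1,4}λ_{1,3}λ_{4,3}=λ_{4,3}λ_{1,3}λ_{1,4}, λ_{4,1}λ_{4,3}λ_{1,3}=λ_{1,3}λ_{4,3}λ_{4,1}, λ_{3,4}λ_{3,1}λ_{4,1}=λ_{4,1}λ_{3,1}λ_{3,4}, λ_{4,3}λ_{4,1}λ_{3,1}=λ_{3,1}λ_{4,1}λ_{4,3}, lies in the normal closure of R^V(3) ∪ S_1(R^V(3)) ∪ S_2(R^V(3)) ∪ CR(4), where R^V(3) ⊆ F_4 via the canonical inclusion F_3 → F_4. -/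
namespace R134

/-- The relator set in question. -/
def Sset : Set FG := RV 3 ∪ (Smap 1) '' (RV 3) ∪ (Smap 2) '' (RV 3) ∪ CR 4

/-- Its normal closure. -/
def N : Subgroup FG := Subgroup.normalClosure Sset

instance : N.Normal := Subgroup.normalClosure_normal

/-- The quotient map. -/
def q : FG →* FG ⧸ N := QuotientGroup.mk' N

/-- Image of a generator in the quotient. -/
def a (i j : ℕ) : FG ⧸ N := q (lam i j)

lemma q_one {w : FG} (h : w ∈ Sset) : q w = 1 :=
  (QuotientGroup.eq_one_iff w).mpr (Subgroup.subset_normalClosure h)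

lemma hom_rel {G : Type*} [Group G] (g : FG →* G) {u v : FG} (h : g (u * v⁻¹) = 1) :
    g u = g v := by
  rw [map_mul, map_inv, mul_inv_eq_one] at h; exact h

lemma Smap_lam (t i j : ℕ) : Smap t (lam i j) = Sgen (t + 1) (i, j) := FreeGroup.lift_apply_of

/-- The long relator of the triple `(i,j,k)` as a `relOf`. -/
lemma long_mem (i j k : ℕ)
    (H : 1 ≤ i ∧ i ≤ 3 ∧ 1 ≤ j ∧ j ≤ 3 ∧ 1 ≤ k ∧ k ≤ 3 ∧ i ≠ j ∧ i ≠ k ∧ j ≠ k) :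
    (lam k i * lam k j * lam i j) * (lam i j * lam k j * lam k i)⁻¹ ∈ LongR 3 := by
  obtain ⟨h1, h2, h3, h4, h5, h6, h7, h8, h9⟩ := H
  exact ⟨i, j, k, h1, h2, h3, h4, h5, h6, h7, h8, h9, by group⟩

lemma relA (i j k : ℕ)
    (H : 1 ≤ i ∧ i ≤ 3 ∧ 1 ≤ j ∧ j ≤ 3 ∧ 1 ≤ k ∧ k ≤ 3 ∧ i ≠ j ∧ i ≠ k ∧ j ≠ k) :
    a k i * a k j * a i j = a i j * a k j * a k i := by
  have h := hom_rel q (q_one (Or.inl (Or.inl (Or.inl (Or.inr (long_mem i j k H))))))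
  simp only [map_mul] at h
  exact h

lemma relC (i j k : ℕ)
    (H : 1 ≤ i ∧ i ≤ 3 ∧ 1 ≤ j ∧ j ≤ 3 ∧ 1 ≤ k ∧ k ≤ 3 ∧ i ≠ j ∧ i ≠ k ∧ j ≠ k) :
    q (Smap 1 (lam k i)) * q (Smap 1 (lam k j)) * q (Smap 1 (lam i j))
      = q (Smap 1 (lam i j)) * q (Smap 1 (lam k j)) * q (Smap 1 (lam k i)) := by
  have hm : Smap 1 ((lam k i * lam k j * lam i j) * (lam i j * lam k j * lam k i)⁻¹) ∈ Sset :=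
    Or.inl (Or.inl (Or.inr ⟨_, Or.inr (long_mem i j k H), rfl⟩))
  have h := hom_rel (q.comp (Smap 1)) (q_one hm)
  simp only [MonoidHom.comp_apply, map_mul] at h
  exact h

lemma relD (i j k : ℕ)
    (H : 1 ≤ i ∧ i ≤ 3 ∧ 1 ≤ j ∧ j ≤ 3 ∧ 1 ≤ k ∧ k ≤ 3 ∧ i ≠ j ∧ i ≠ k ∧ j ≠ k) :
    q (Smap 2 (lam k i)) * q (Smap 2 (lam k j)) * q (Smap 2 (lam i j))
      = q (Smap 2 (lam i j)) * q (Smap 2 (lam k j)) * q (Smap 2 (lam k i)) := by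
  have hm : Smap 2 ((lam k i * lam k j * lam i j) * (lam i j * lam k j * lam k i)⁻¹) ∈ Sset :=
    Or.inl (Or.inr ⟨_, Or.inr (long_mem i j k H), rfl⟩)
  have h := hom_rel (q.comp (Smap 2)) (q_one hm)
  simp only [MonoidHom.comp_apply, map_mul] at h
  exact h

lemma cc (i j k l : ℕ)
    (H : 1 ≤ i ∧ i ≤ 4 ∧ 1 ≤ j ∧ j ≤ 4 ∧ 1 ≤ k ∧ k ≤ 4 ∧ 1 ≤ l ∧ l ≤ 4 ∧
      i ≠ j ∧ i ≠ k ∧ i ≠ l ∧ j ≠ k ∧ j ≠ l ∧ k ≠ l) :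
    a i j * a k l = a k l * a i j := by
  obtain ⟨h1, h2, h3, h4, h5, h6, h7, h8, h9, h10, h11, h12, h13, h14⟩ := H
  have hm : (lam i j * lam k l) * (lam k l * lam i j)⁻¹ ∈ Sset :=
    Or.inr ⟨i, j, k, l, h1, h2, h3, h4, h5, h6, h7, h8, h9, h10, h11, h12, h13, h14, by group⟩
  have h := hom_rel q (q_one hm)
  simp only [map_mul] at h
  exact h

lemma tail2 {G : Type*} [Group G] {x1 x2 y1 y2 : G} (h : x1 * x2 = y1 * y2) (z : G) :
    x1 * (x2 * z) = y1 * (y2 * z) := by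
  simp only [← mul_assoc]; rw [h]

lemma tail3 {G : Type*} [Group G] {x1 x2 x3 y1 y2 y3 : G}
    (h : x1 * x2 * x3 = y1 * y2 * y3) (z : G) :
    x1 * (x2 * (x3 * z)) = y1 * (y2 * (y3 * z)) := by
  simp only [← mul_assoc]; rw [h]

lemma end3 {G : Type*} [Group G] {x1 x2 x3 y1 y2 y3 : G}
    (h : x1 * x2 * x3 = y1 * y2 * y3) :
    x1 * (x2 * x3) = y1 * (y2 * y3) := by
  simp only [← mul_assoc]; rw [h]

end R134

namespace R134

@[simp] lemma v1_12 : q (Smap 1 (lam 1 2)) = a 1 3 * a 1 2 := by rw [Smap_lam]; norm_num [Sgen, map_mul, a]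
@[simp] lemma v1_21 : q (Smap 1 (lam 2 1)) = a 2 1 * a 3 1 := by rw [Smap_lam]; norm_num [Sgen, map_mul, a]
@[simp] lemma v1_13 : q (Smap 1 (lam 1 3)) = a 1 4 := by rw [Smap_lam]; norm_num [Sgen, map_mul, a]
@[simp] lemma v1_31 : q (Smap 1 (lam 3 1)) = a 4 1 := by rw [Smap_lam]; norm_num [Sgen, map_mul, a]
@[simp] lemma v1_23 : q (Smap 1 (lam 2 3)) = a 2 4 * a 3 4 := by rw [Smap_lam]; norm_num [Sgen, map_mul, a]
@[simp] lemma v1_32 : q (Smap 1 (lam 3 2)) = a 4 3 * a 4 2 := by rw [Smap_lam]; norm_num [Sgen, map_mul, a]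
@[simp] lemma v2_12 : q (Smap 2 (lam 1 2)) = a 1 2 := by rw [Smap_lam]; norm_num [Sgen, map_mul, a]
@[simp] lemma v2_21 : q (Smap 2 (lam 2 1)) = a 2 1 := by rw [Smap_lam]; norm_num [Sgen, map_mul, a]
@[simp] lemma v2_13 : q (Smap 2 (lam 1 3)) = a 1 4 * a 1 3 := by rw [Smap_lam]; norm_num [Sgen, map_mul, a]
@[simp] lemma v2_31 : q (Smap 2 (lam 3 1)) = a 3 1 * a 4 1 := by rw [Smap_lam]; norm_num [Sgen, map_mul, a]
@[simp] lemma v2_23 : q (Smap 2 (lam 2 3)) = a 2 4 * a 2 3 := by rw [Smap_lam]; norm_num [Sgen, map_mul, a]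
@[simp] lemma v2_32 : q (Smap 2 (lam 3 2)) = a 3 2 * a 4 2 := by rw [Smap_lam]; norm_num [Sgen, map_mul, a]

lemma E1 : a 1 3 * a 1 4 * a 3 4 = a 3 4 * a 1 4 * a 1 3 := by
  have c1324 := cc 1 3 2 4 (by norm_num)
  have c2314 := cc 2 3 1 4 (by norm_num)
  have c1234 := cc 1 2 3 4 (by norm_num)
  have A5 := relA 2 3 1 (by norm_num)
  have hD := relD 2 3 1 (by norm_num)
  simp only [v2_12, v2_13, v2_23, mul_assoc] at hD
  rw [tail2 c1324 (a 2 3)] at hD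
  rw [tail2 c2314 (a 1 3 * a 1 2)] at hD
  rw [end3 A5.symm] at hD
  simp only [← mul_assoc] at hD
  have star := mul_right_cancel (mul_right_cancel hD)
  have hC := relC 2 3 1 (by norm_num)
  simp only [v1_12, v1_13, v1_23, mul_assoc] at hC
  rw [tail3 star (a 3 4)] at hC
  rw [tail2 c1324 (a 1 4 * (a 1 2 * a 3 4))] at hC
  rw [c1234] at hC
  have h2 := mul_left_cancel hC
  simp only [← mul_assoc] at h2
  exact mul_right_cancel h2

lemma E2 : a 3 1 * a 3 4 * a 1 4 = a 1 4 * a 3 4 * a 3 1 := by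
  have c2314 := cc 2 3 1 4 (by norm_num)
  have c1324 := cc 1 3 2 4 (by norm_num)
  have c3124 := cc 3 1 2 4 (by norm_num)
  have c3421 := cc 3 4 2 1 (by norm_num)
  have A3 := relA 1 3 2 (by norm_num)
  have hD := relD 1 3 2 (by norm_num)
  simp only [v2_21, v2_23, v2_13, mul_assoc] at hD
  rw [tail2 c2314 (a 1 3)] at hD
  rw [tail2 c1324 (a 2 3 * a 2 1)] at hD
  rw [end3 A3.symm] at hD
  simp only [← mul_assoc] at hD
  have star := mul_right_cancel (mul_right_cancel hD)
  have hC := relC 1 3 2 (by norm_num)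
  simp only [v1_21, v1_23, v1_13, mul_assoc] at hC
  rw [tail2 c3124 (a 3 4 * a 1 4)] at hC
  rw [tail2 c3421 (a 3 1)] at hC
  rw [← tail3 star (a 3 4 * a 3 1)] at hC
  have h2 := mul_left_cancel (mul_left_cancel hC)
  simp only [← mul_assoc] at h2
  exact h2

lemma E3 : a 1 4 * a 1 3 * a 4 3 = a 4 3 * a 1 3 * a 1 4 := by
  have c1432 := cc 1 4 3 2 (by norm_num)
  have c1342 := cc 1 3 4 2 (by norm_num)
  have c1243 := cc 1 2 4 3 (by norm_num)
  have c4213 := cc 4 2 1 3 (by norm_num)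
  have A6 := relA 3 2 1 (by norm_num)
  have hD := relD 3 2 1 (by norm_num)
  simp only [v2_13, v2_12, v2_32, mul_assoc] at hD
  rw [tail3 A6 (a 4 2)] at hD
  rw [tail2 c1432 (a 1 2 * (a 1 3 * a 4 2))] at hD
  rw [c1342] at hD
  have h1 := mul_left_cancel hD
  simp only [← mul_assoc] at h1
  have star := mul_right_cancel h1
  have hC := relC 3 2 1 (by norm_num)
  simp only [v1_13, v1_12, v1_32, mul_assoc] at hC
  rw [tail2 c1243 (a 4 2)] at hC
  rw [tail2 c4213 (a 1 2 * a 1 4)] at hC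
  rw [← end3 star] at hC
  simp only [← mul_assoc] at hC
  exact mul_right_cancel (mul_right_cancel hC)

lemma E4 : a 4 1 * a 4 3 * a 1 3 = a 1 3 * a 4 3 * a 4 1 := by
  have c4132 := cc 4 1 3 2 (by norm_num)
  have c4231 := cc 4 2 3 1 (by norm_num)
  have c4213 := cc 4 2 1 3 (by norm_num)
  have c1243 := cc 1 2 4 3 (by norm_num)
  have A1 := relA 1 2 3 (by norm_num)
  have hD := relD 1 2 3 (by norm_num)
  simp only [v2_31, v2_32, v2_12, mul_assoc] at hD
  rw [tail2 c4132 (a 4 2 * a 1 2)] at hD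
  rw [tail2 c4231 (a 4 1)] at hD
  rw [tail3 A1.symm (a 4 2 * a 4 1)] at hD
  have h1 := mul_left_cancel (mul_left_cancel hD)
  simp only [← mul_assoc] at h1
  have hC := relC 1 2 3 (by norm_num)
  simp only [v1_31, v1_32, v1_12, mul_assoc] at hC
  rw [tail2 c4213 (a 1 2)] at hC
  rw [tail2 c1243 (a 4 2 * a 4 1)] at hC
  rw [← end3 h1] at hC
  simp only [← mul_assoc] at hC
  exact mul_right_cancel (mul_right_cancel hC)

lemma E5 : a 3 4 * a 3 1 * a 4 1 = a 4 1 * a 3 1 * a 3 4 := by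
  have c2341 := cc 2 3 4 1 (by norm_num)
  have c2431 := cc 2 4 3 1 (by norm_num)
  have c3421 := cc 3 4 2 1 (by norm_num)
  have c3124 := cc 3 1 2 4 (by norm_num)
  have A4 := relA 3 1 2 (by norm_num)
  have hD := relD 3 1 2 (by norm_num)
  simp only [v2_23, v2_21, v2_31, mul_assoc] at hD
  rw [tail3 A4 (a 4 1)] at hD
  rw [c2341] at hD
  rw [tail2 c2431 (a 2 1 * (a 4 1 * a 2 3))] at hD
  have h1 := mul_left_cancel hD
  simp only [← mul_assoc] at h1
  have star := mul_right_cancel h1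
  have hC := relC 3 1 2 (by norm_num)
  simp only [v1_23, v1_21, v1_31, mul_assoc] at hC
  rw [tail2 c3421 (a 3 1 * a 4 1)] at hC
  rw [tail2 c3124 (a 3 4)] at hC
  rw [← tail3 star (a 3 1 * a 3 4)] at hC
  have h2 := mul_left_cancel (mul_left_cancel hC)
  simp only [← mul_assoc] at h2
  exact h2

lemma E6 : a 4 3 * a 4 1 * a 3 1 = a 3 1 * a 4 1 * a 4 3 := by
  have c4231 := cc 4 2 3 1 (by norm_num)
  have c4132 := cc 4 1 3 2 (by norm_num)
  have c4321 := cc 4 3 2 1 (by norm_num)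
  have A2 := relA 2 1 3 (by norm_num)
  have hD := relD 2 1 3 (by norm_num)
  simp only [v2_32, v2_31, v2_21, mul_assoc] at hD
  rw [tail2 c4231 (a 4 1 * a 2 1)] at hD
  rw [tail2 c4132 (a 4 2)] at hD
  rw [tail3 A2.symm (a 4 1 * a 4 2)] at hD
  have h1 := mul_left_cancel (mul_left_cancel hD)
  simp only [← mul_assoc] at h1
  have hC := relC 2 1 3 (by norm_num)
  simp only [v1_32, v1_31, v1_21, mul_assoc] at hC
  rw [tail3 h1 (a 3 1)] at hC
  rw [c4231] at hC
  rw [tail2 c4321 (a 4 1 * (a 3 1 * a 4 2))] at hC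
  have h2 := mul_left_cancel hC
  simp only [← mul_assoc] at h2
  exact mul_right_cancel h2

lemma relOf_mem {u v : FG} (h : q u = q v) : relOf u v ∈ N := by
  have h1 : q (relOf u v) = 1 := by
    rw [relOf, map_mul, map_inv, h]
    exact mul_inv_cancel _
  rw [← QuotientGroup.ker_mk' N]
  exact h1

end R134

/-- each of the six long relators of `R_{1,3,4}` lies in the normal
closure in `F_4` of `R^V(3) ∪ S_1(R^V(3)) ∪ S_2(R^V(3)) ∪ CR(4)`. -/
theorem R134_in_normalClosure :
    Rtriple 1 3 4 ⊆
      (Subgroup.normalClosure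
        (RV 3 ∪ (Smap 1) '' (RV 3) ∪ (Smap 2) '' (RV 3) ∪ CR 4) : Set FG) := by
  intro w hw
  simp only [Rtriple, Set.mem_insert_iff, Set.mem_singleton_iff] at hw
  rcases hw with h | h | h | h | h | h <;> subst h
  · exact R134.relOf_mem (by simp only [map_mul]; exact R134.E1)
  · exact R134.relOf_mem (by simp only [map_mul]; exact R134.E2)
  · exact R134.relOf_mem (by simp only [map_mul]; exact R134.E3)
  · exact R134.relOf_mem (by simp only [map_mul]; exact R134.E4)
  · exact R134.relOf_mem (by simp only [map_mul]; exact R134.E5)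
  · exact R134.relOf_mem (by simp only [map_mul]; exact R134.E6)
end

section
/- In the free group F_4, each of the six long relators with indices in {2,3,4}, i.e. the set R_{2,3,4} corresponding to the relations λ_{2,3}λ_{2,4}λ_{3,4}=λ_{3,4}λ_{2,4}λ_{2,3}, λ_{3,2}λ_{3,4}λ_{2,4}=λ_{2,4}λ_{3,4}λ_{3,2}, λ_{2,4}λ_{2,3}λ_{4,3}=λ_{4,3}λ_{2,3}λ_{2,4}, λ_{4,2}λ_{4,3}λ_{2,3}=λ_{2,3}λ_{4,3}λ_{4,2}, λ_{3,4}λ_{3,2}λ_{4,2}=λ_{4,2}λ_{3,2}λ_{3,4}, λ_{4,3}λ_{4,2}λ_{3,2}=λ_{3,2}λ_{4,2}λ_{4,3}, lies in the normal closure of R^V(3) ∪ S_0(R^V(3)) ∪ S_1(R^V(3)) ∪ S_2(R^V(3)) ∪ CR(4), where R^V(3) ⊆ F_4 via the canonical inclusion F_3 → F_4. -/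
/- ===== auxiliary material (inserted above the theorem) ===== -/

section CtxHelpers

variable {G : Type*} [Group G]

private lemma ctx2 {a b : G} (h : a * b = b * a) (x : G) : a * (b * x) = b * (a * x) := by
  rw [← mul_assoc, h, mul_assoc]

private lemma ctx3 {a b c a' b' c' : G} (h : a * b * c = a' * b' * c') (x : G) :
    a * (b * (c * x)) = a' * (b' * (c' * x)) := by
  simpa only [mul_assoc] using congrArg (· * x) h

private lemma flat3 {a b c a' b' c' : G} (h : a * b * c = a' * b' * c') :
    a * (b * c) = a' * (b' * c') := by
  simpa only [mul_assoc] using h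

private lemma flat5 {a b c d e a' b' c' d' e' : G} (h : a*b*c*d*e = a'*b'*c'*d'*e') :
    a*(b*(c*(d*e))) = a'*(b'*(c'*(d'*e'))) := by
  simpa only [mul_assoc] using h

private lemma lemG1 (c d e f g h : G)
    (h1 : c*h*e*f*g = g*e*f*c*h)
    (h2 : c*d*e*f*g = f*g*e*c*d)
    (h3 : d*e*c*f*h = f*h*e*c*d)
    (h4 : d*c*h = h*c*d)
    (hcf : c*f = f*c) (hdg : d*g = g*d) (heh : e*h = h*e) :
    h*f*g = g*f*h := by
  have step1 : d*e*f = f*e*d := by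
    have H : d*(e*(f*(c*h))) = f*(e*(d*(c*h))) := by
      rw [ctx2 hcf.symm h, flat5 h3, ctx2 heh.symm (c*d), ← flat3 h4]
    have H2 : d*e*f*(c*h) = f*e*d*(c*h) := by simpa only [mul_assoc] using H
    exact mul_right_cancel H2
  have step2 : c*e*g = g*e*c := by
    have H : f*(c*(e*(g*d))) = f*(g*(e*(c*d))) := by
      rw [ctx2 hcf.symm (e*(g*d)), ← hdg, ← ctx3 step1 g, flat5 h2]
    have H2 := mul_left_cancel H
    have H3 : c*e*g*d = g*e*c*d := by simpa only [mul_assoc] using H2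
    exact mul_right_cancel H3
  have H : c*(e*(h*(f*g))) = c*(e*(g*(f*h))) := by
    rw [ctx2 heh (f*g), flat5 h1, ctx2 hcf.symm h, ← ctx3 step2 (f*h)]
  have H2 := mul_left_cancel (mul_left_cancel H)
  simpa only [mul_assoc] using H2

private lemma lemG2 (a b c e f g m n : G)
    (h1 : m*n*g*e*f = e*f*g*m*n)
    (h2 : a*n*f*g*e = e*f*g*a*n)
    (h3 : a*f*b*e*c = e*c*f*b*a)
    (h4 : a*b*c = c*b*a)
    (hbe : b*e = e*b) (hcf : c*f = f*c) (hnf : n*f = f*n)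
    (hag : a*g = g*a) (hme : m*e = e*m) :
    m*g*f = f*g*m := by
  have step1 : a*f*e = e*f*a := by
    have H : a*(f*(e*(b*c))) = e*(f*(a*(b*c))) := by
      rw [← ctx2 hbe c, flat5 h3, ctx2 hcf (b*a), ← flat3 h4]
    have H2 : a*f*e*(b*c) = e*f*a*(b*c) := by simpa only [mul_assoc] using H
    exact mul_right_cancel H2
  have step2 : n*g*e = e*g*n := by
    have H : a*(f*(n*(g*e))) = a*(f*(e*(g*n))) := by
      rw [← ctx2 hnf (g*e), flat5 h2, ctx2 hag.symm n, ← ctx3 step1 (g*n)]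
    have H2 := mul_left_cancel (mul_left_cancel H)
    simpa only [mul_assoc] using H2
  have H : e*(m*(g*(f*n))) = e*(f*(g*(m*n))) := by
    rw [← ctx2 hme (g*(f*n)), ← hnf, ← ctx3 step2 f, flat5 h1]
  have H2 := mul_left_cancel H
  have H3 : m*g*f*n = f*g*m*n := by simpa only [mul_assoc] using H2
  exact mul_right_cancel H3

private lemma lemG3 (c d e f h u s w : G)
    (h1 : e*f*c*h*u = u*c*h*e*f)
    (h2 : e*c*d*u*s = u*s*c*d*e)
    (h3 : e*c*d*w*s = w*s*d*e*c)
    (h4 : c*d*w = w*d*c)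
    (hew : e*w = w*e) (hcs : c*s = s*c) (hdu : d*u = u*d)
    (hcf : c*f = f*c) (heh : e*h = h*e) :
    f*h*u = u*h*f := by
  have step1 : e*d*s = s*d*e := by
    have H : w*(e*(d*(s*c))) = w*(s*(d*(e*c))) := by
      rw [← ctx2 hew (d*(s*c)), ← hcs, ← ctx3 h4 s, flat5 h3]
    have H2 := mul_left_cancel H
    have H3 : e*d*s*c = s*d*e*c := by simpa only [mul_assoc] using H2
    exact mul_right_cancel H3
  have step2 : e*c*u = u*c*e := by
    have H : e*(c*(u*(d*s))) = u*(c*(e*(d*s))) := by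
      rw [← ctx2 hdu s, flat5 h2, ctx2 hcs.symm (d*e), ← flat3 step1]
    have H2 : e*c*u*(d*s) = u*c*e*(d*s) := by simpa only [mul_assoc] using H
    exact mul_right_cancel H2
  have H : e*(c*(f*(h*u))) = e*(c*(u*(h*f))) := by
    rw [← ctx2 hcf.symm (h*u), flat5 h1, ctx2 heh.symm f, ← ctx3 step2 (h*f)]
  have H2 := mul_left_cancel (mul_left_cancel H)
  simpa only [mul_assoc] using H2

private lemma lemG4 (q w d s r u c h : G)
    (h1 : s*r*u*c*h = c*h*u*s*r)
    (h2 : r*u*s*c*d = c*d*u*s*r)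
    (h3 : q*r*w*s*d = d*w*s*q*r)
    (h4 : q*w*d = d*w*q)
    (hrw : r*w = w*r) (hqs : q*s = s*q) (hcs : c*s = s*c)
    (hdu : d*u = u*d) (hrh : r*h = h*r) :
    s*u*h = h*u*s := by
  have step1 : r*s*d = d*s*r := by
    have H : q*(w*(r*(s*d))) = q*(w*(d*(s*r))) := by
      rw [← ctx2 hrw (s*d), flat5 h3, ctx2 hqs.symm r, ← ctx3 h4 (s*r)]
    have H2 := mul_left_cancel (mul_left_cancel H)
    simpa only [mul_assoc] using H2
  have step2 : r*u*c = c*u*r := by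
    have H : r*(u*(c*(s*d))) = c*(u*(r*(s*d))) := by
      rw [← ctx2 hcs.symm d, flat5 h2, ctx2 hdu (s*r), ← flat3 step1]
    have H2 : r*u*c*(s*d) = c*u*r*(s*d) := by simpa only [mul_assoc] using H
    exact mul_right_cancel H2
  have H : c*(s*(u*(h*r))) = c*(h*(u*(s*r))) := by
    rw [← ctx2 hcs.symm (u*(h*r)), ← hrh, ← ctx3 step2 h, flat5 h1]
  have H2 := mul_left_cancel H
  have H3 : s*u*h*r = h*u*s*r := by simpa only [mul_assoc] using H2
  exact mul_right_cancel H3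

private lemma lemG5 (a b n g m s r f : G)
    (h1 : g*m*n*s*r = s*r*m*n*g)
    (h2 : f*g*a*n*r = r*a*n*f*g)
    (h3 : f*b*a*n*r = n*r*a*f*b)
    (h4 : b*a*n = n*a*b)
    (hbr : b*r = r*b) (hfn : f*n = n*f) (hag : a*g = g*a)
    (hns : n*s = s*n) (hmr : m*r = r*m) :
    g*m*s = s*m*g := by
  have step1 : f*a*r = r*a*f := by
    have H : n*(f*(a*(r*b))) = n*(r*(a*(f*b))) := by
      rw [← ctx2 hfn (a*(r*b)), ← hbr, ← ctx3 h4 r, flat5 h3]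
    have H2 := mul_left_cancel H
    have H3 : f*a*r*b = r*a*f*b := by simpa only [mul_assoc] using H2
    exact mul_right_cancel H3
  have step2 : g*n*r = r*n*g := by
    have H : f*(a*(g*(n*r))) = f*(a*(r*(n*g))) := by
      rw [← ctx2 hag.symm (n*r), flat5 h2, ctx2 hfn.symm g, ← ctx3 step1 (n*g)]
    have H2 := mul_left_cancel (mul_left_cancel H)
    simpa only [mul_assoc] using H2
  have H : g*(m*(s*(n*r))) = s*(m*(g*(n*r))) := by
    rw [← ctx2 hns r, flat5 h1, ctx2 hmr.symm (n*g), ← flat3 step2]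
  have H2 : g*m*s*(n*r) = s*m*g*(n*r) := by simpa only [mul_assoc] using H
  exact mul_right_cancel H2

private lemma lemG6 (p q r s u w : G)
    (h1 : u*s*r*w*q = w*q*s*r*u)
    (h2 : u*s*r*p*q = p*q*r*u*s)
    (h3 : w*s*q*r*p = p*q*r*w*s)
    (h4 : w*q*p = p*q*w)
    (hpu : p*u = u*p) (hqs : q*s = s*q) (hrw : r*w = w*r) :
    u*s*w = w*s*u := by
  have step1 : s*r*p = p*r*s := by
    have H : w*(q*(s*(r*p))) = w*(q*(p*(r*s))) := by
      rw [← ctx2 hqs.symm (r*p), flat5 h3, ctx2 hrw s, ← ctx3 h4 (r*s)]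
    have H2 := mul_left_cancel (mul_left_cancel H)
    simpa only [mul_assoc] using H2
  have step2 : u*r*q = q*r*u := by
    have H : p*(u*(r*(q*s))) = p*(q*(r*(u*s))) := by
      rw [← ctx2 hpu.symm (r*(q*s)), hqs, ← ctx3 step1 q, flat5 h2]
    have H2 := mul_left_cancel H
    have H3 : u*r*q*s = q*r*u*s := by simpa only [mul_assoc] using H2
    exact mul_right_cancel H3
  have H : u*(s*(w*(r*q))) = w*(s*(u*(r*q))) := by
    rw [← ctx2 hrw q, flat5 h1, ctx2 hqs (r*u), ← flat3 step2]
  have H2 : u*s*w*(r*q) = w*s*u*(r*q) := by simpa only [mul_assoc] using H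
  exact mul_right_cancel H2

end CtxHelpers

/- ===== quotient-group plumbing ===== -/

/-- The big relator set of the statement. -/
def BigS : Set FG :=
  RV 3 ∪ (Smap 0) '' (RV 3) ∪ (Smap 1) '' (RV 3) ∪ (Smap 2) '' (RV 3) ∪ CR 4

/-- Its normal closure. -/
def NN : Subgroup FG := Subgroup.normalClosure BigS

instance : NN.Normal := Subgroup.normalClosure_normal

/-- The quotient projection. -/
def qp : FG →* FG ⧸ NN := QuotientGroup.mk' NN

/-- The image of a generator in the quotient. -/
def y (i j : ℕ) : FG ⧸ NN := qp (lam i j)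

private lemma mem_of_eq {u v : FG} (h : qp u = qp v) : relOf u v ∈ NN := by
  have h1 : qp (relOf u v) = 1 := by
    rw [relOf, map_mul, map_inv, h, mul_inv_cancel]
  rwa [qp, QuotientGroup.mk'_apply, QuotientGroup.eq_one_iff] at h1

private lemma rel3_of_mem {a b c : FG} (h : a*b*c*a⁻¹*b⁻¹*c⁻¹ ∈ NN) :
    qp a * qp b * qp c = qp c * qp b * qp a := by
  have h1 : qp (a*b*c*a⁻¹*b⁻¹*c⁻¹) = 1 := by
    rw [qp, QuotientGroup.mk'_apply, QuotientGroup.eq_one_iff]; exact h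
  simp only [map_mul, map_inv] at h1
  have h2 : (qp a * qp b * qp c) * (qp c * qp b * qp a)⁻¹ = 1 := by
    simpa only [mul_inv_rev, mul_assoc] using h1
  exact mul_inv_eq_one.mp h2

private lemma rel2_of_mem {a b : FG} (h : a*b*a⁻¹*b⁻¹ ∈ NN) :
    qp a * qp b = qp b * qp a := by
  have h1 : qp (a*b*a⁻¹*b⁻¹) = 1 := by
    rw [qp, QuotientGroup.mk'_apply, QuotientGroup.eq_one_iff]; exact h
  simp only [map_mul, map_inv] at h1
  have h2 : (qp a * qp b) * (qp b * qp a)⁻¹ = 1 := by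
    simpa only [mul_inv_rev, mul_assoc] using h1
  exact mul_inv_eq_one.mp h2

/-- The long relator of `VP_3` for a triple `(i,j,k)`. -/
def baseRel (i j k : ℕ) : FG :=
  lam k i * lam k j * lam i j * (lam k i)⁻¹ * (lam k j)⁻¹ * (lam i j)⁻¹

private lemma longR3_mem {i j k : ℕ}
    (h : 1 ≤ i ∧ i ≤ 3 ∧ 1 ≤ j ∧ j ≤ 3 ∧ 1 ≤ k ∧ k ≤ 3 ∧ i ≠ j ∧ i ≠ k ∧ j ≠ k) :
    baseRel i j k ∈ RV 3 :=
  Or.inr ⟨i, j, k, h.1, h.2.1, h.2.2.1, h.2.2.2.1, h.2.2.2.2.1, h.2.2.2.2.2.1,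
    h.2.2.2.2.2.2.1, h.2.2.2.2.2.2.2.1, h.2.2.2.2.2.2.2.2, rfl⟩

private lemma base_eq {i j k : ℕ}
    (h : 1 ≤ i ∧ i ≤ 3 ∧ 1 ≤ j ∧ j ≤ 3 ∧ 1 ≤ k ∧ k ≤ 3 ∧ i ≠ j ∧ i ≠ k ∧ j ≠ k) :
    y k i * y k j * y i j = y i j * y k j * y k i :=
  rel3_of_mem (Subgroup.subset_normalClosure
    (Or.inl (Or.inl (Or.inl (Or.inl (longR3_mem h))))))

private lemma comm_eq {i j k l : ℕ}
    (h : 1 ≤ i ∧ i ≤ 4 ∧ 1 ≤ j ∧ j ≤ 4 ∧ 1 ≤ k ∧ k ≤ 4 ∧ 1 ≤ l ∧ l ≤ 4 ∧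
      i ≠ j ∧ i ≠ k ∧ i ≠ l ∧ j ≠ k ∧ j ≠ l ∧ k ≠ l) :
    y i j * y k l = y k l * y i j := by
  obtain ⟨h1, h2, h3, h4, h5, h6, h7, h8, h9, h10, h11, h12, h13, h14⟩ := h
  exact rel2_of_mem (Subgroup.subset_normalClosure
    (Or.inr ⟨i, j, k, l, h1, h2, h3, h4, h5, h6, h7, h8, h9, h10, h11, h12, h13, h14, rfl⟩))

private lemma image_eq {t i j k : ℕ} (hmem : Smap t (baseRel i j k) ∈ NN) :
    qp (Smap t (lam k i)) * qp (Smap t (lam k j)) * qp (Smap t (lam i j)) =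
      qp (Smap t (lam i j)) * qp (Smap t (lam k j)) * qp (Smap t (lam k i)) := by
  apply rel3_of_mem
  simpa only [baseRel, map_mul, map_inv] using hmem

private lemma image0_mem {i j k : ℕ}
    (h : 1 ≤ i ∧ i ≤ 3 ∧ 1 ≤ j ∧ j ≤ 3 ∧ 1 ≤ k ∧ k ≤ 3 ∧ i ≠ j ∧ i ≠ k ∧ j ≠ k) :
    Smap 0 (baseRel i j k) ∈ NN :=
  Subgroup.subset_normalClosure
    (Or.inl (Or.inl (Or.inl (Or.inr ⟨baseRel i j k, longR3_mem h, rfl⟩))))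

private lemma image1_mem {i j k : ℕ}
    (h : 1 ≤ i ∧ i ≤ 3 ∧ 1 ≤ j ∧ j ≤ 3 ∧ 1 ≤ k ∧ k ≤ 3 ∧ i ≠ j ∧ i ≠ k ∧ j ≠ k) :
    Smap 1 (baseRel i j k) ∈ NN :=
  Subgroup.subset_normalClosure
    (Or.inl (Or.inl (Or.inr ⟨baseRel i j k, longR3_mem h, rfl⟩)))

private lemma image2_mem {i j k : ℕ}
    (h : 1 ≤ i ∧ i ≤ 3 ∧ 1 ≤ j ∧ j ≤ 3 ∧ 1 ≤ k ∧ k ≤ 3 ∧ i ≠ j ∧ i ≠ k ∧ j ≠ k) :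
    Smap 2 (baseRel i j k) ∈ NN :=
  Subgroup.subset_normalClosure
    (Or.inl (Or.inr ⟨baseRel i j k, longR3_mem h, rfl⟩))

/- values of the maps `S_t` on the generators of `F_3` -/
private lemma s0_12 : Smap 0 (lam 1 2) = lam 1 3 * lam 2 3 := by simp [Smap, lam, Sgen]
private lemma s0_13 : Smap 0 (lam 1 3) = lam 1 4 * lam 2 4 := by simp [Smap, lam, Sgen]
private lemma s0_23 : Smap 0 (lam 2 3) = lam 3 4 := by simp [Smap, lam, Sgen]
private lemma s0_21 : Smap 0 (lam 2 1) = lam 3 2 * lam 3 1 := by simp [Smap, lam, Sgen]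
private lemma s0_31 : Smap 0 (lam 3 1) = lam 4 2 * lam 4 1 := by simp [Smap, lam, Sgen]
private lemma s0_32 : Smap 0 (lam 3 2) = lam 4 3 := by simp [Smap, lam, Sgen]
private lemma s1_12 : Smap 1 (lam 1 2) = lam 1 3 * lam 1 2 := by simp [Smap, lam, Sgen]
private lemma s1_13 : Smap 1 (lam 1 3) = lam 1 4 := by simp [Smap, lam, Sgen]
private lemma s1_23 : Smap 1 (lam 2 3) = lam 2 4 * lam 3 4 := by simp [Smap, lam, Sgen]
private lemma s1_21 : Smap 1 (lam 2 1) = lam 2 1 * lam 3 1 := by simp [Smap, lam, Sgen]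
private lemma s1_31 : Smap 1 (lam 3 1) = lam 4 1 := by simp [Smap, lam, Sgen]
private lemma s1_32 : Smap 1 (lam 3 2) = lam 4 3 * lam 4 2 := by simp [Smap, lam, Sgen]
private lemma s2_12 : Smap 2 (lam 1 2) = lam 1 2 := by simp [Smap, lam, Sgen]
private lemma s2_13 : Smap 2 (lam 1 3) = lam 1 4 * lam 1 3 := by simp [Smap, lam, Sgen]
private lemma s2_23 : Smap 2 (lam 2 3) = lam 2 4 * lam 2 3 := by simp [Smap, lam, Sgen]
private lemma s2_21 : Smap 2 (lam 2 1) = lam 2 1 := by simp [Smap, lam, Sgen]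
private lemma s2_31 : Smap 2 (lam 3 1) = lam 3 1 * lam 4 1 := by simp [Smap, lam, Sgen]
private lemma s2_32 : Smap 2 (lam 3 2) = lam 3 2 * lam 4 2 := by simp [Smap, lam, Sgen]

/-- each of the six long relators of `R_{2,3,4}` lies in the normal
closure in `F_4` of `R^V(3) ∪ S_0(R^V(3)) ∪ S_1(R^V(3)) ∪ S_2(R^V(3)) ∪ CR(4)`. -/
theorem R234_in_normalClosure :
    Rtriple 2 3 4 ⊆
      (Subgroup.normalClosure
        (RV 3 ∪ (Smap 0) '' (RV 3) ∪ (Smap 1) '' (RV 3) ∪ (Smap 2) '' (RV 3) ∪ CR 4)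
        : Set FG) := by
  intro w hw
  simp only [Rtriple, Set.mem_insert_iff, Set.mem_singleton_iff] at hw
  rcases hw with rfl | rfl | rfl | rfl | rfl | rfl
  · -- relator 1 : λ23 λ24 λ34 = λ34 λ24 λ23
    have E1 := image_eq (image0_mem (i:=2) (j:=3) (k:=1) (by norm_num))
    rw [s0_12, s0_13, s0_23] at E1
    have E2 := image_eq (image1_mem (i:=2) (j:=3) (k:=1) (by norm_num))
    rw [s1_12, s1_13, s1_23] at E2
    have E3 := image_eq (image2_mem (i:=2) (j:=3) (k:=1) (by norm_num))
    rw [s2_12, s2_13, s2_23] at E3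
    simp only [map_mul, mul_assoc] at E1 E2 E3
    have E4 := base_eq (i:=2) (j:=3) (k:=1) (by norm_num)
    refine SetLike.mem_coe.mpr (mem_of_eq ?_)
    show qp (lam 2 3 * lam 2 4 * lam 3 4) = qp (lam 3 4 * lam 2 4 * lam 2 3)
    simp only [map_mul]
    exact lemG1 (y 1 3) (y 1 2) (y 1 4) (y 2 4) (y 3 4) (y 2 3)
      (by simpa only [mul_assoc, y] using E1)
      (by simpa only [mul_assoc, y] using E2)
      (by simpa only [mul_assoc, y] using E3)
      (by simpa only [mul_assoc] using E4)
      (comm_eq (i:=1) (j:=3) (k:=2) (l:=4) (by norm_num))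
      (comm_eq (i:=1) (j:=2) (k:=3) (l:=4) (by norm_num))
      (comm_eq (i:=1) (j:=4) (k:=2) (l:=3) (by norm_num))
  · -- relator 2 : λ32 λ34 λ24 = λ24 λ34 λ32
    have E1 := image_eq (image0_mem (i:=1) (j:=3) (k:=2) (by norm_num))
    rw [s0_21, s0_23, s0_13] at E1
    have E2 := image_eq (image1_mem (i:=1) (j:=3) (k:=2) (by norm_num))
    rw [s1_21, s1_23, s1_13] at E2
    have E3 := image_eq (image2_mem (i:=1) (j:=3) (k:=2) (by norm_num))
    rw [s2_21, s2_23, s2_13] at E3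
    simp only [map_mul, mul_assoc] at E1 E2 E3
    have E4 := base_eq (i:=1) (j:=3) (k:=2) (by norm_num)
    refine SetLike.mem_coe.mpr (mem_of_eq ?_)
    show qp (lam 3 2 * lam 3 4 * lam 2 4) = qp (lam 2 4 * lam 3 4 * lam 3 2)
    simp only [map_mul]
    exact lemG2 (y 2 1) (y 2 3) (y 1 3) (y 1 4) (y 2 4) (y 3 4) (y 3 2) (y 3 1)
      (by simpa only [mul_assoc, y] using E1)
      (by simpa only [mul_assoc, y] using E2)
      (by simpa only [mul_assoc, y] using E3)
      (by simpa only [mul_assoc] using E4)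
      (comm_eq (i:=2) (j:=3) (k:=1) (l:=4) (by norm_num))
      (comm_eq (i:=1) (j:=3) (k:=2) (l:=4) (by norm_num))
      (comm_eq (i:=3) (j:=1) (k:=2) (l:=4) (by norm_num))
      (comm_eq (i:=2) (j:=1) (k:=3) (l:=4) (by norm_num))
      (comm_eq (i:=3) (j:=2) (k:=1) (l:=4) (by norm_num))
  · -- relator 3 : λ24 λ23 λ43 = λ43 λ23 λ24
    have E1 := image_eq (image0_mem (i:=3) (j:=2) (k:=1) (by norm_num))
    rw [s0_13, s0_12, s0_32] at E1
    have E2 := image_eq (image1_mem (i:=3) (j:=2) (k:=1) (by norm_num))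
    rw [s1_13, s1_12, s1_32] at E2
    have E3 := image_eq (image2_mem (i:=3) (j:=2) (k:=1) (by norm_num))
    rw [s2_13, s2_12, s2_32] at E3
    simp only [map_mul, mul_assoc] at E1 E2 E3
    have E4 := base_eq (i:=3) (j:=2) (k:=1) (by norm_num)
    refine SetLike.mem_coe.mpr (mem_of_eq ?_)
    show qp (lam 2 4 * lam 2 3 * lam 4 3) = qp (lam 4 3 * lam 2 3 * lam 2 4)
    simp only [map_mul]
    exact lemG3 (y 1 3) (y 1 2) (y 1 4) (y 2 4) (y 2 3) (y 4 3) (y 4 2) (y 3 2)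
      (by simpa only [mul_assoc, y] using E1)
      (by simpa only [mul_assoc, y] using E2)
      (by simpa only [mul_assoc, y] using E3)
      (by simpa only [mul_assoc] using E4)
      (comm_eq (i:=1) (j:=4) (k:=3) (l:=2) (by norm_num))
      (comm_eq (i:=1) (j:=3) (k:=4) (l:=2) (by norm_num))
      (comm_eq (i:=1) (j:=2) (k:=4) (l:=3) (by norm_num))
      (comm_eq (i:=1) (j:=3) (k:=2) (l:=4) (by norm_num))
      (comm_eq (i:=1) (j:=4) (k:=2) (l:=3) (by norm_num))
  · -- relator 4 : λ42 λ43 λ23 = λ23 λ43 λ42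
    have E1 := image_eq (image0_mem (i:=1) (j:=2) (k:=3) (by norm_num))
    rw [s0_31, s0_32, s0_12] at E1
    have E2 := image_eq (image1_mem (i:=1) (j:=2) (k:=3) (by norm_num))
    rw [s1_31, s1_32, s1_12] at E2
    have E3 := image_eq (image2_mem (i:=1) (j:=2) (k:=3) (by norm_num))
    rw [s2_31, s2_32, s2_12] at E3
    simp only [map_mul, mul_assoc] at E1 E2 E3
    have E4 := base_eq (i:=1) (j:=2) (k:=3) (by norm_num)
    refine SetLike.mem_coe.mpr (mem_of_eq ?_)
    show qp (lam 4 2 * lam 4 3 * lam 2 3) = qp (lam 2 3 * lam 4 3 * lam 4 2)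
    simp only [map_mul]
    exact lemG4 (y 3 1) (y 3 2) (y 1 2) (y 4 2) (y 4 1) (y 4 3) (y 1 3) (y 2 3)
      (by simpa only [mul_assoc, y] using E1)
      (by simpa only [mul_assoc, y] using E2)
      (by simpa only [mul_assoc, y] using E3)
      (by simpa only [mul_assoc] using E4)
      (comm_eq (i:=4) (j:=1) (k:=3) (l:=2) (by norm_num))
      (comm_eq (i:=3) (j:=1) (k:=4) (l:=2) (by norm_num))
      (comm_eq (i:=1) (j:=3) (k:=4) (l:=2) (by norm_num))
      (comm_eq (i:=1) (j:=2) (k:=4) (l:=3) (by norm_num))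
      (comm_eq (i:=4) (j:=1) (k:=2) (l:=3) (by norm_num))
  · -- relator 5 : λ34 λ32 λ42 = λ42 λ32 λ34
    have E1 := image_eq (image0_mem (i:=3) (j:=1) (k:=2) (by norm_num))
    rw [s0_23, s0_21, s0_31] at E1
    have E2 := image_eq (image1_mem (i:=3) (j:=1) (k:=2) (by norm_num))
    rw [s1_23, s1_21, s1_31] at E2
    have E3 := image_eq (image2_mem (i:=3) (j:=1) (k:=2) (by norm_num))
    rw [s2_23, s2_21, s2_31] at E3
    simp only [map_mul, mul_assoc] at E1 E2 E3
    have E4 := base_eq (i:=3) (j:=1) (k:=2) (by norm_num)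
    refine SetLike.mem_coe.mpr (mem_of_eq ?_)
    show qp (lam 3 4 * lam 3 2 * lam 4 2) = qp (lam 4 2 * lam 3 2 * lam 3 4)
    simp only [map_mul]
    exact lemG5 (y 2 1) (y 2 3) (y 3 1) (y 3 4) (y 3 2) (y 4 2) (y 4 1) (y 2 4)
      (by simpa only [mul_assoc, y] using E1)
      (by simpa only [mul_assoc, y] using E2)
      (by simpa only [mul_assoc, y] using E3)
      (by simpa only [mul_assoc] using E4)
      (comm_eq (i:=2) (j:=3) (k:=4) (l:=1) (by norm_num))
      (comm_eq (i:=2) (j:=4) (k:=3) (l:=1) (by norm_num))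
      (comm_eq (i:=2) (j:=1) (k:=3) (l:=4) (by norm_num))
      (comm_eq (i:=3) (j:=1) (k:=4) (l:=2) (by norm_num))
      (comm_eq (i:=3) (j:=2) (k:=4) (l:=1) (by norm_num))
  · -- relator 6 : λ43 λ42 λ32 = λ32 λ42 λ43
    have E1 := image_eq (image0_mem (i:=2) (j:=1) (k:=3) (by norm_num))
    rw [s0_32, s0_31, s0_21] at E1
    have E2 := image_eq (image1_mem (i:=2) (j:=1) (k:=3) (by norm_num))
    rw [s1_32, s1_31, s1_21] at E2
    have E3 := image_eq (image2_mem (i:=2) (j:=1) (k:=3) (by norm_num))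
    rw [s2_32, s2_31, s2_21] at E3
    simp only [map_mul, mul_assoc] at E1 E2 E3
    have E4 := base_eq (i:=2) (j:=1) (k:=3) (by norm_num)
    refine SetLike.mem_coe.mpr (mem_of_eq ?_)
    show qp (lam 4 3 * lam 4 2 * lam 3 2) = qp (lam 3 2 * lam 4 2 * lam 4 3)
    simp only [map_mul]
    exact lemG6 (y 2 1) (y 3 1) (y 4 1) (y 4 2) (y 4 3) (y 3 2)
      (by simpa only [mul_assoc, y] using E1)
      (by simpa only [mul_assoc, y] using E2)
      (by simpa only [mul_assoc, y] using E3)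
      (by simpa only [mul_assoc] using E4)
      (comm_eq (i:=2) (j:=1) (k:=4) (l:=3) (by norm_num))
      (comm_eq (i:=3) (j:=1) (k:=4) (l:=2) (by norm_num))
      (comm_eq (i:=4) (j:=1) (k:=3) (l:=2) (by norm_num))
end

section
/- In the free group F_5, the four commutators [λ_{1,5},λ_{2,3}], [λ_{1,5},λ_{2,4}], [λ_{1,5},λ_{3,4}], [λ_{2,5},λ_{3,4}] all lie in the normal closure of the set {S_i(λ_{1,4}λ_{2,3}λ_{1,4}^{-1}λ_{2,3}^{-1}) : i = 0,1,2,3} ∪ CR(4), where S_i : F_4 → F_5 and CR(4) ⊆ F_5 via the canonical inclusion F_4 → F_5. -/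
/-- The relator `λ_{1,4} λ_{2,3} λ_{1,4}⁻¹ λ_{2,3}⁻¹` of `F_4`. -/
def r6 : FG := lam 1 4 * lam 2 3 * (lam 1 4)⁻¹ * (lam 2 3)⁻¹

/-- The normal closure in `F_5` of `{S_i(λ_{1,4}λ_{2,3}λ_{1,4}⁻¹λ_{2,3}⁻¹) : i = 0,1,2,3} ∪ CR(4)`. -/
def N6 : Subgroup FG :=
  Subgroup.normalClosure ({Smap 0 r6, Smap 1 r6, Smap 2 r6, Smap 3 r6} ∪ CR 4)


instance N6_normal : N6.Normal := Subgroup.normalClosure_normal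

lemma memN6_conj {x : FG} (h : x ∈ N6) (g : FG) : g * x * g⁻¹ ∈ N6 :=
  N6_normal.conj_mem x h g

/-- Convert left commutator membership to `commE`. -/
lemma commE_of_left {a b : FG} (h : a * b * a⁻¹ * b⁻¹ ∈ N6) : commE a b ∈ N6 := by
  have h2 := memN6_conj h (a * b)⁻¹
  have e : commE a b = (a * b)⁻¹ * (a * b * a⁻¹ * b⁻¹) * ((a * b)⁻¹)⁻¹ := by
    unfold commE; group
  rw [e]; exact h2

theorem comms_from_lifting_14_23 :
    commE (lam 1 5) (lam 2 3) ∈ N6 ∧ commE (lam 1 5) (lam 2 4) ∈ N6 ∧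
    commE (lam 1 5) (lam 3 4) ∈ N6 ∧ commE (lam 2 5) (lam 3 4) ∈ N6 := by
  -- generators of the normal closure
  have hg : ∀ x ∈ ({Smap 0 r6, Smap 1 r6, Smap 2 r6, Smap 3 r6} ∪ CR 4 : Set FG), x ∈ N6 :=
    fun x hx => Subgroup.subset_normalClosure hx
  have h0 : (lam 1 5 * lam 2 5) * lam 3 4 * (lam 1 5 * lam 2 5)⁻¹ * (lam 3 4)⁻¹ ∈ N6 := by
    have := hg (Smap 0 r6) (Set.mem_union_left _ (by simp))
    have e : Smap 0 r6 = (lam 1 5 * lam 2 5) * lam 3 4 * (lam 1 5 * lam 2 5)⁻¹ * (lam 3 4)⁻¹ := by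
      simp only [Smap, r6, lam, map_mul, map_inv, FreeGroup.lift_apply_of, Sgen]; norm_num
    rwa [e] at this
  have h1 : lam 1 5 * (lam 2 4 * lam 3 4) * (lam 1 5)⁻¹ * (lam 2 4 * lam 3 4)⁻¹ ∈ N6 := by
    have := hg (Smap 1 r6) (Set.mem_union_left _ (by simp))
    have e : Smap 1 r6 = lam 1 5 * (lam 2 4 * lam 3 4) * (lam 1 5)⁻¹ * (lam 2 4 * lam 3 4)⁻¹ := by
      simp only [Smap, r6, lam, map_mul, map_inv, FreeGroup.lift_apply_of, Sgen]; norm_num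
    rwa [e] at this
  have h2 : lam 1 5 * (lam 2 4 * lam 2 3) * (lam 1 5)⁻¹ * (lam 2 4 * lam 2 3)⁻¹ ∈ N6 := by
    have := hg (Smap 2 r6) (Set.mem_union_left _ (by simp))
    have e : Smap 2 r6 = lam 1 5 * (lam 2 4 * lam 2 3) * (lam 1 5)⁻¹ * (lam 2 4 * lam 2 3)⁻¹ := by
      simp only [Smap, r6, lam, map_mul, map_inv, FreeGroup.lift_apply_of, Sgen]; norm_num
    rwa [e] at this
  have h3 : (lam 1 5 * lam 1 4) * lam 2 3 * (lam 1 5 * lam 1 4)⁻¹ * (lam 2 3)⁻¹ ∈ N6 := by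
    have := hg (Smap 3 r6) (Set.mem_union_left _ (by simp))
    have e : Smap 3 r6 = (lam 1 5 * lam 1 4) * lam 2 3 * (lam 1 5 * lam 1 4)⁻¹ * (lam 2 3)⁻¹ := by
      simp only [Smap, r6, lam, map_mul, map_inv, FreeGroup.lift_apply_of, Sgen]; norm_num
    rwa [e] at this
  have hc : lam 1 4 * lam 2 3 * (lam 1 4)⁻¹ * (lam 2 3)⁻¹ ∈ N6 := by
    refine hg _ (Set.mem_union_right _ ?_)
    refine ⟨1, 4, 2, 3, ?_, ?_, ?_, ?_, ?_, ?_, ?_, ?_, ?_, ?_, ?_, ?_, ?_, ?_, rfl⟩ <;> norm_num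
  -- [λ15, λ23] (left convention)
  have k23 : lam 1 5 * lam 2 3 * (lam 1 5)⁻¹ * (lam 2 3)⁻¹ ∈ N6 := by
    have hcc := memN6_conj hc (lam 1 5)
    have := mul_mem (inv_mem hcc) h3
    have e : lam 1 5 * lam 2 3 * (lam 1 5)⁻¹ * (lam 2 3)⁻¹ =
        (lam 1 5 * (lam 1 4 * lam 2 3 * (lam 1 4)⁻¹ * (lam 2 3)⁻¹) * (lam 1 5)⁻¹)⁻¹ *
        ((lam 1 5 * lam 1 4) * lam 2 3 * (lam 1 5 * lam 1 4)⁻¹ * (lam 2 3)⁻¹) := by group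
    rw [e]; exact this
  -- [λ15, λ24]
  have k24 : lam 1 5 * lam 2 4 * (lam 1 5)⁻¹ * (lam 2 4)⁻¹ ∈ N6 := by
    have hk := memN6_conj (inv_mem k23) (lam 2 4)
    have := mul_mem h2 hk
    have e : lam 1 5 * lam 2 4 * (lam 1 5)⁻¹ * (lam 2 4)⁻¹ =
        (lam 1 5 * (lam 2 4 * lam 2 3) * (lam 1 5)⁻¹ * (lam 2 4 * lam 2 3)⁻¹) *
        (lam 2 4 * (lam 1 5 * lam 2 3 * (lam 1 5)⁻¹ * (lam 2 3)⁻¹)⁻¹ * (lam 2 4)⁻¹) := by group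
    rw [e]; exact this
  -- [λ15, λ34]
  have k34 : lam 1 5 * lam 3 4 * (lam 1 5)⁻¹ * (lam 3 4)⁻¹ ∈ N6 := by
    have := memN6_conj (mul_mem (inv_mem k24) h1) (lam 2 4)⁻¹
    have e : lam 1 5 * lam 3 4 * (lam 1 5)⁻¹ * (lam 3 4)⁻¹ =
        (lam 2 4)⁻¹ * ((lam 1 5 * lam 2 4 * (lam 1 5)⁻¹ * (lam 2 4)⁻¹)⁻¹ *
          (lam 1 5 * (lam 2 4 * lam 3 4) * (lam 1 5)⁻¹ * (lam 2 4 * lam 3 4)⁻¹)) * ((lam 2 4)⁻¹)⁻¹ := by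
      group
    rw [e]; exact this
  -- [λ25, λ34]
  have k25 : lam 2 5 * lam 3 4 * (lam 2 5)⁻¹ * (lam 3 4)⁻¹ ∈ N6 := by
    have := memN6_conj (mul_mem h0 (inv_mem k34)) (lam 1 5)⁻¹
    have e : lam 2 5 * lam 3 4 * (lam 2 5)⁻¹ * (lam 3 4)⁻¹ =
        (lam 1 5)⁻¹ * (((lam 1 5 * lam 2 5) * lam 3 4 * (lam 1 5 * lam 2 5)⁻¹ * (lam 3 4)⁻¹) *
          (lam 1 5 * lam 3 4 * (lam 1 5)⁻¹ * (lam 3 4)⁻¹)⁻¹) * ((lam 1 5)⁻¹)⁻¹ := by group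
    rw [e]; exact this
  exact ⟨commE_of_left k23, commE_of_left k24, commE_of_left k34, commE_of_left k25⟩
end
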